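/- arXiv:2408.10881 — 8 statements merged into one kernel-verified Lean document; each statement's English description precedes it below -/
import Mathlib

section
/- There exists an absolute constant b₀ with the following property. Let a, b, c be positive integers with a < b ≤ c ≤ b^{1.01}, b ≥ b₀, gcd(b,c) = 1 and c ≠ a + b. Then there exists κ > 0 such that for every positive integer N there is a set A ⊆ [N] with |A| ≥ κ·N^{1/4.77} that contains no non-trivial solutions to the equation ax + by + cz = ax' + by' + cz'. -/
open Finset

set_option maxHeartbeats 1000000

namespace S1

lemma digit_split {D E₀ E₁ : ℤ} (h : E₀ + D * E₁ = 0) (hb : |E₀| < D) :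
    E₀ = 0 ∧ E₁ = 0 := by
  have hD : 0 < D := lt_of_le_of_lt (abs_nonneg E₀) hb
  have h0 : E₀ = -(D * E₁) := by linarith
  have hab := abs_lt.mp hb
  rcases lt_trichotomy E₁ 0 with h1 | h1 | h1
  · have : D * E₁ ≤ -D := by nlinarith
    omega
  · rw [h1, mul_zero] at h0; omega
  · have : D * E₁ ≥ D := by nlinarith
    omega

lemma no_carry (D : ℤ) : ∀ (K : ℕ) (e : ℕ → ℤ), (∀ i, i < K → |e i| < D) →
    (∑ i ∈ range K, e i * D ^ i) = 0 → ∀ i, i < K → e i = 0 := by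
  intro K
  induction K with
  | zero => intro e _ _ i hi; omega
  | succ K ih =>
    intro e hb hsum
    have h2 : (∑ i ∈ range K, e (i+1) * D ^ (i+1))
        = D * ∑ i ∈ range K, e (i+1) * D ^ i := by
      rw [Finset.mul_sum]
      exact Finset.sum_congr rfl fun i _ => by ring
    rw [Finset.sum_range_succ', h2, pow_zero, mul_one, add_comm] at hsum
    have h0 := digit_split hsum (hb 0 (Nat.succ_pos K))
    have htail := ih (fun i => e (i+1)) (fun i hi => hb (i+1) (by omega)) h0.2
    intro i hi
    cases i with
    | zero => exact h0.1
    | succ j => exact htail j (by omega)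

def DS (S : Finset ℕ) (D : ℕ) : ℕ → Finset ℕ
  | 0 => {0}
  | (K+1) => Finset.image (fun pr : ℕ × ℕ => pr.1 + D * pr.2) (S ×ˢ DS S D K)

lemma DS_lt {S : Finset ℕ} {D : ℕ} (hS : ∀ s ∈ S, s < D) :
    ∀ K, ∀ x ∈ DS S D K, x < D ^ K := by
  intro K
  induction K with
  | zero => intro x hx; simp [DS] at hx; simp [hx]
  | succ K ih =>
    intro x hx
    simp only [DS, Finset.mem_image, Finset.mem_product] at hx
    obtain ⟨⟨s, u⟩, ⟨hs, hu⟩, rfl⟩ := hx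
    have h1 := hS s hs
    have h2 := ih u hu
    calc s + D * u < D + D * u := by omega
    _ = D * (u + 1) := by ring
    _ ≤ D * D ^ K := Nat.mul_le_mul (le_refl D) (by omega)
    _ = D ^ (K+1) := by ring

lemma DS_card {S : Finset ℕ} {D : ℕ} (hS : ∀ s ∈ S, s < D) :
    ∀ K, (DS S D K).card = S.card ^ K := by
  intro K
  induction K with
  | zero => simp [DS]
  | succ K ih =>
    have hinj : Set.InjOn (fun pr : ℕ × ℕ => pr.1 + D * pr.2) ↑(S ×ˢ DS S D K) := by
      intro ⟨s, u⟩ h1 ⟨s', u'⟩ h2 heq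
      rw [Finset.mem_coe, Finset.mem_product] at h1 h2
      simp only at heq
      have hs := hS s h1.1
      have hs' := hS s' h2.1
      have hD : 0 < D := by omega
      have e1 : (s + D * u) % D = s := by
        rw [Nat.add_mul_mod_self_left, Nat.mod_eq_of_lt hs]
      have e2 : (s' + D * u') % D = s' := by
        rw [Nat.add_mul_mod_self_left, Nat.mod_eq_of_lt hs']
      have hss : s = s' := by rw [← e1, ← e2, heq]
      have huu : u = u' := by
        have h3 : D * u = D * u' := by omega
        exact Nat.eq_of_mul_eq_mul_left hD h3
      simp [hss, huu]
    simp only [DS]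
    rw [Finset.card_image_of_injOn hinj, Finset.card_product, ih, pow_succ]
    ring

lemma DS_diff {S : Finset ℕ} {D M : ℕ} (hM : 0 < M) (hSM : ∀ s ∈ S, s < M) :
    ∀ K, ∀ x ∈ DS S D K, ∀ x' ∈ DS S D K, ∃ δ : ℕ → ℤ,
      (∀ i, |δ i| < (M : ℤ)) ∧ ((x : ℤ) - (x' : ℤ) = ∑ i ∈ range K, δ i * (D : ℤ) ^ i) := by
  intro K
  induction K with
  | zero =>
    intro x hx x' hx'
    simp [DS] at hx hx'
    refine ⟨fun _ => 0, fun i => by simpa using hM, by simp [hx, hx']⟩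
  | succ K ih =>
    intro x hx x' hx'
    simp only [DS, Finset.mem_image, Finset.mem_product] at hx hx'
    obtain ⟨⟨s, u⟩, ⟨hs, hu⟩, rfl⟩ := hx
    obtain ⟨⟨s', u'⟩, ⟨hs', hu'⟩, rfl⟩ := hx'
    obtain ⟨δ, hδb, hδs⟩ := ih u hu u' hu'
    refine ⟨fun i => if i = 0 then (s : ℤ) - s' else δ (i - 1), ?_, ?_⟩
    · intro i
      show |if i = 0 then (s : ℤ) - s' else δ (i - 1)| < (M : ℤ)
      by_cases hi : i = 0
      · rw [if_pos hi]
        have h1 := hSM s hs; have h2 := hSM s' hs'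
        rw [abs_lt]
        omega
      · rw [if_neg hi]
        exact hδb (i - 1)
    · rw [Finset.sum_range_succ']
      have hL : (∑ i ∈ range K,
            (if i + 1 = 0 then ((s:ℤ) - s') else δ (i + 1 - 1)) * (D:ℤ) ^ (i+1))
          = (D:ℤ) * ∑ i ∈ range K, δ i * (D:ℤ) ^ i := by
        rw [Finset.mul_sum]
        refine Finset.sum_congr rfl fun i _ => ?_
        rw [if_neg (Nat.succ_ne_zero i)]
        simp only [Nat.add_sub_cancel]
        ring
      show (((s + D * u : ℕ) : ℤ) - ((s' + D * u' : ℕ) : ℤ)) =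
          (∑ i ∈ range K,
            (if i + 1 = 0 then ((s:ℤ) - s') else δ (i + 1 - 1)) * (D:ℤ) ^ (i+1))
          + (if (0:ℕ) = 0 then ((s:ℤ) - s') else δ (0 - 1)) * (D:ℤ) ^ (0:ℕ)
      rw [hL, if_pos rfl, pow_zero, mul_one, ← hδs]
      push_cast
      ring




lemma abs_mul_le {x y : ℤ} {m n : ℕ} (hx : x.natAbs ≤ m) (hy : y.natAbs ≤ n) :
    |x * y| ≤ ((m * n : ℕ) : ℤ) := by
  rw [abs_mul, Int.abs_eq_natAbs, Int.abs_eq_natAbs, Nat.cast_mul]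
  exact mul_le_mul (by exact_mod_cast hx) (by exact_mod_cast hy)
    (Int.natCast_nonneg _) (Int.natCast_nonneg _)

lemma dvd_of_rel {pj pi1 pi2 δ δ1 δ2 : ℤ}
    (h1 : pi1 * δ = pj * δ1) (h2 : pi2 * δ = pj * δ2)
    (hg : Nat.gcd pj.natAbs (Nat.gcd pi1.natAbs pi2.natAbs) = 1) : pj ∣ δ := by
  have d1 : pj ∣ pi1 * δ := ⟨δ1, h1⟩
  have d2 : pj ∣ pi2 * δ := ⟨δ2, h2⟩
  have dg : pj ∣ ((Int.gcd (pi1 * δ) (pi2 * δ) : ℕ) : ℤ) := Int.dvd_coe_gcd d1 d2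
  rw [Int.gcd_mul_right] at dg
  push_cast at dg
  have hcop : IsCoprime pj ((Int.gcd pi1 pi2 : ℕ) : ℤ) := by
    rw [Int.isCoprime_iff_gcd_eq_one]
    have h : Int.gcd pj ((Int.gcd pi1 pi2 : ℕ) : ℤ) = Nat.gcd pj.natAbs (Int.gcd pi1 pi2) := by
      unfold Int.gcd
      simp
    rw [h]
    exact hg
  have hd := hcop.dvd_of_dvd_mul_left dg
  exact (dvd_abs _ _).mp hd

lemma line_lemma {a b c : ℕ} (hbc : Nat.Coprime b c) (hc : 0 < c)
    {p₁ p₂ p₃ q₁ q₂ q₃ : ℤ}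
    (hp : (a:ℤ) * p₁ + (b:ℤ) * p₂ + (c:ℤ) * p₃ = 0)
    (hq : (a:ℤ) * q₁ + (b:ℤ) * q₂ + (c:ℤ) * q₃ = 0)
    (hprim : Nat.gcd p₁.natAbs (Nat.gcd p₂.natAbs p₃.natAbs) = 1)
    {lam Mm : ℕ}
    (hp1 : p₁.natAbs ≤ lam) (hp2 : p₂.natAbs ≤ lam) (hp3 : p₃.natAbs ≤ lam)
    (hq1 : q₁.natAbs ≤ Mm) (hq2 : q₂.natAbs ≤ Mm) (hq3 : q₃.natAbs ≤ Mm)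
    (hsz : 2 * lam * Mm < c) :
    ∃ k : ℤ, q₁ = k * p₁ ∧ q₂ = k * p₂ ∧ q₃ = k * p₃ := by
  have e₁ : (b:ℤ) * (p₁ * q₂ - p₂ * q₁) = (c:ℤ) * (p₃ * q₁ - p₁ * q₃) := by
    linear_combination p₁ * hq - q₁ * hp
  have e₂ : (c:ℤ) * (p₂ * q₃ - p₃ * q₂) = (a:ℤ) * (p₁ * q₂ - p₂ * q₁) := by
    linear_combination p₂ * hq - q₂ * hp
  have h3 : p₁ * q₂ - p₂ * q₁ = 0 := by
    by_contra hr
    have hdvd : (c:ℤ) ∣ (p₁ * q₂ - p₂ * q₁) := by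
      have hcop : IsCoprime (c:ℤ) (b:ℤ) := by
        rw [Int.isCoprime_iff_gcd_eq_one]
        simpa [Int.gcd_natCast_natCast, Nat.gcd_comm] using hbc
      exact hcop.dvd_of_dvd_mul_left ⟨_, e₁⟩
    have hle : (c:ℤ) ≤ |p₁ * q₂ - p₂ * q₁| := by
      apply Int.le_of_dvd (abs_pos.mpr hr)
      rwa [Int.abs_eq_natAbs, Int.dvd_natAbs]
    have hub : |p₁ * q₂ - p₂ * q₁| ≤ ((2 * lam * Mm : ℕ) : ℤ) := by
      calc |p₁ * q₂ - p₂ * q₁| ≤ |p₁ * q₂| + |p₂ * q₁| := by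
            rw [sub_eq_add_neg]
            refine (abs_add_le _ _).trans ?_
            rw [abs_neg]
      _ ≤ ((lam * Mm : ℕ) : ℤ) + ((lam * Mm : ℕ) : ℤ) :=
            add_le_add (abs_mul_le hp1 hq2) (abs_mul_le hp2 hq1)
      _ = ((2 * lam * Mm : ℕ) : ℤ) := by push_cast; ring
    have : (c:ℤ) ≤ ((2 * lam * Mm : ℕ) : ℤ) := le_trans hle hub
    have : c ≤ 2 * lam * Mm := by exact_mod_cast this
    omega
  have h2 : p₃ * q₁ - p₁ * q₃ = 0 := by
    have := e₁
    rw [h3, mul_zero] at this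
    have hc' : (c:ℤ) ≠ 0 := by exact_mod_cast hc.ne'
    exact (mul_eq_zero.mp this.symm).resolve_left hc'
  have h1 : p₂ * q₃ - p₃ * q₂ = 0 := by
    have := e₂
    rw [h3, mul_zero] at this
    have hc' : (c:ℤ) ≠ 0 := by exact_mod_cast hc.ne'
    exact (mul_eq_zero.mp this).resolve_left hc'
  -- Bezout
  obtain ⟨α, β, γ, hb⟩ : ∃ α β γ : ℤ, α * p₁ + β * p₂ + γ * p₃ = 1 := by
    have hg23 : ((Int.gcd p₂ p₃ : ℕ) : ℤ) = p₂ * Int.gcdA p₂ p₃ + p₃ * Int.gcdB p₂ p₃ :=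
      Int.gcd_eq_gcd_ab p₂ p₃
    have houter : Int.gcd p₁ ((Int.gcd p₂ p₃ : ℕ) : ℤ) = 1 := by
      have h : Int.gcd p₁ ((Int.gcd p₂ p₃ : ℕ) : ℤ)
          = Nat.gcd p₁.natAbs (Int.gcd p₂ p₃) := by
        unfold Int.gcd
        simp
      rw [h]
      exact hprim
    have hbez : ((Int.gcd p₁ ((Int.gcd p₂ p₃ : ℕ) : ℤ) : ℕ) : ℤ)
        = p₁ * Int.gcdA p₁ _ + ((Int.gcd p₂ p₃ : ℕ) : ℤ) * Int.gcdB p₁ _ :=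
      Int.gcd_eq_gcd_ab p₁ _
    rw [houter] at hbez
    refine ⟨Int.gcdA p₁ ((Int.gcd p₂ p₃ : ℕ) : ℤ),
      Int.gcdA p₂ p₃ * Int.gcdB p₁ ((Int.gcd p₂ p₃ : ℕ) : ℤ),
      Int.gcdB p₂ p₃ * Int.gcdB p₁ ((Int.gcd p₂ p₃ : ℕ) : ℤ), ?_⟩
    push_cast at hbez
    linear_combination -hbez - Int.gcdB p₁ ((Int.gcd p₂ p₃ : ℕ) : ℤ) * hg23
  refine ⟨α * q₁ + β * q₂ + γ * q₃, ?_, ?_, ?_⟩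
  · linear_combination q₁ * hb.symm - β * h3 + γ * h2
  · linear_combination q₂ * hb.symm + α * h3 - γ * h1
  · linear_combination q₃ * hb.symm - α * h2 + β * h1



/-- The core "kill" lemma: a multiple of the shortest vector cannot have all coordinates
representable with small digits in base `R`. -/
lemma core_kill {R lam n : ℕ} (hlam : 2 ≤ lam) (hR : 2 * lam * (lam - 1) < R)
    {pj pi1 pi2 k : ℤ}
    (hg : Nat.gcd pj.natAbs (Nat.gcd pi1.natAbs pi2.natAbs) = 1)
    (hj : pj.natAbs = lam) (h1 : pi1.natAbs ≤ lam) (h2 : pi2.natAbs ≤ lam)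
    {δ δ1 δ2 : ℕ → ℤ}
    (hδ : ∀ i, |δ i| ≤ (lam : ℤ) - 1) (hδ1 : ∀ i, |δ1 i| ≤ (lam : ℤ) - 1)
    (hδ2 : ∀ i, |δ2 i| ≤ (lam : ℤ) - 1)
    (hU : k * pj = ∑ i ∈ range n, δ i * (R : ℤ) ^ i)
    (hV1 : k * pi1 = ∑ i ∈ range n, δ1 i * (R : ℤ) ^ i)
    (hV2 : k * pi2 = ∑ i ∈ range n, δ2 i * (R : ℤ) ^ i) : k = 0 := by
  have hpj : pj ≠ 0 := by
    intro h; rw [h] at hj; simp at hj; omega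
  have habsj : |pj| = (lam : ℤ) := by rw [Int.abs_eq_natAbs, hj]
  -- digit bound for combinations
  have hbound : ∀ (x : ℤ), x.natAbs ≤ lam → ∀ (d d' : ℕ → ℤ),
      (∀ i, |d i| ≤ (lam:ℤ) - 1) → (∀ i, |d' i| ≤ (lam:ℤ) - 1) →
      ∀ i, |x * d i - pj * d' i| < (R : ℤ) := by
    intro x hx d d' hd hd' i
    have e1 : |x * d i| ≤ (lam : ℤ) * ((lam:ℤ) - 1) := by
      rw [abs_mul]
      apply mul_le_mul _ (hd i) (abs_nonneg _) (by positivity)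
      rw [Int.abs_eq_natAbs]; exact_mod_cast hx
    have e2 : |pj * d' i| ≤ (lam : ℤ) * ((lam:ℤ) - 1) := by
      rw [abs_mul, habsj]
      apply mul_le_mul_of_nonneg_left (hd' i) (by positivity)
    have e3 : |x * d i - pj * d' i| ≤ |x * d i| + |pj * d' i| := by
      rw [sub_eq_add_neg]
      refine (abs_add_le _ _).trans ?_
      rw [abs_neg]
    have hRz : 2 * (lam:ℤ) * ((lam:ℤ) - 1) < (R:ℤ) := by
      have : ((2 * lam * (lam - 1) : ℕ) : ℤ) < (R:ℤ) := by exact_mod_cast hR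
      push_cast [Nat.cast_sub (by omega : 1 ≤ lam)] at this
      linarith
    calc |x * d i - pj * d' i| ≤ (lam : ℤ) * ((lam:ℤ) - 1) + (lam : ℤ) * ((lam:ℤ) - 1) := by
          linarith
    _ = 2 * (lam:ℤ) * ((lam:ℤ) - 1) := by ring
    _ < (R:ℤ) := hRz
  -- relation sums vanish
  have hrel : ∀ (x : ℤ), x.natAbs ≤ lam → ∀ (d' : ℕ → ℤ),
      (∀ i, |d' i| ≤ (lam:ℤ) - 1) → (k * x = ∑ i ∈ range n, d' i * (R:ℤ)^i) →
      ∀ i, i < n → x * δ i = pj * d' i := by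
    intro x hx d' hd' hsum i hi
    have hzero : (∑ i ∈ range n, (x * δ i - pj * d' i) * (R:ℤ)^i) = 0 := by
      have : (∑ i ∈ range n, (x * δ i - pj * d' i) * (R:ℤ)^i)
          = x * (∑ i ∈ range n, δ i * (R:ℤ)^i) - pj * (∑ i ∈ range n, d' i * (R:ℤ)^i) := by
        rw [Finset.mul_sum, Finset.mul_sum, ← Finset.sum_sub_distrib]
        exact Finset.sum_congr rfl fun i _ => by ring
      rw [this, ← hU, ← hsum]
      ring
    have hz := no_carry (R:ℤ) n (fun i => x * δ i - pj * d' i)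
      (fun i _ => hbound x hx δ d' hδ hd' i) hzero i hi
    have hz' : x * δ i - pj * d' i = 0 := hz
    linarith [hz']
  have hr1 := hrel pi1 h1 δ1 hδ1 hV1
  have hr2 := hrel pi2 h2 δ2 hδ2 hV2
  -- each δ i = 0
  have hδ0 : ∀ i, i < n → δ i = 0 := by
    intro i hi
    have hdvd : pj ∣ δ i := dvd_of_rel (hr1 i hi) (hr2 i hi) hg
    by_contra h0
    have hdvd2 : |pj| ∣ |δ i| := (abs_dvd _ _).mpr ((dvd_abs _ _).mpr hdvd)
    have hle := Int.le_of_dvd (abs_pos.mpr h0) hdvd2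
    have h5 := hδ i
    rw [habsj] at hle
    linarith
  have hU0 : k * pj = 0 := by
    rw [hU]
    apply Finset.sum_eq_zero
    intro i hiR
    rw [hδ0 i (Finset.mem_range.mp hiR), zero_mul]
  rcases mul_eq_zero.mp hU0 with h | h
  · exact h
  · exact absurd h hpj

lemma exists_short (a b c : ℕ) (ha : 0 < a) (hab : a < b) (hbc : b < c) (hcab : c ≠ a + b) :
    ∃ (lam : ℕ) (p₁ p₂ p₃ : ℤ),
      2 ≤ lam ∧
      ((a:ℤ) * p₁ + (b:ℤ) * p₂ + (c:ℤ) * p₃ = 0) ∧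
      p₁.natAbs ≤ lam ∧ p₂.natAbs ≤ lam ∧ p₃.natAbs ≤ lam ∧
      (p₁.natAbs = lam ∨ p₂.natAbs = lam ∨ p₃.natAbs = lam) ∧
      Nat.gcd p₁.natAbs (Nat.gcd p₂.natAbs p₃.natAbs) = 1 ∧
      (∀ q₁ q₂ q₃ : ℤ, ((a:ℤ) * q₁ + (b:ℤ) * q₂ + (c:ℤ) * q₃ = 0) →
        ¬(q₁ = 0 ∧ q₂ = 0 ∧ q₃ = 0) →
        lam ≤ q₁.natAbs ∨ lam ≤ q₂.natAbs ∨ lam ≤ q₃.natAbs) := by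
  classical
  set Q : ℕ → Prop := fun m => ∃ q₁ q₂ q₃ : ℤ,
    ((a:ℤ) * q₁ + (b:ℤ) * q₂ + (c:ℤ) * q₃ = 0) ∧ ¬(q₁ = 0 ∧ q₂ = 0 ∧ q₃ = 0) ∧
    q₁.natAbs ≤ m ∧ q₂.natAbs ≤ m ∧ q₃.natAbs ≤ m with hQdef
  have hQb : Q b := by
    refine ⟨(b:ℤ), -(a:ℤ), 0, by ring, ?_, by simp, by simp; omega, by simp⟩
    intro ⟨h1, _, _⟩
    have : (b:ℤ) ≠ 0 := by exact_mod_cast (by omega : b ≠ 0)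
    exact this h1
  have hex : ∃ m, Q m := ⟨b, hQb⟩
  set lam := Nat.find hex with hlamdef
  have hQlam : Q lam := Nat.find_spec hex
  have hmin : ∀ m, m < lam → ¬ Q m := fun m hm => Nat.find_min hex hm
  have hlam2 : 2 ≤ lam := by
    have hQ1 : ¬ Q 1 := by
      rintro ⟨q₁, q₂, q₃, heq, hnz, h1, h2, h3⟩
      have e1 : q₁ = -1 ∨ q₁ = 0 ∨ q₁ = 1 := by omega
      have e2 : q₂ = -1 ∨ q₂ = 0 ∨ q₂ = 1 := by omega
      have e3 : q₃ = -1 ∨ q₃ = 0 ∨ q₃ = 1 := by omega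
      have haz : (0:ℤ) < (a:ℤ) := by exact_mod_cast ha
      have habz : (a:ℤ) < (b:ℤ) := by exact_mod_cast hab
      have hbcz : (b:ℤ) < (c:ℤ) := by exact_mod_cast hbc
      have hcabz : (c:ℤ) ≠ (a:ℤ) + (b:ℤ) := by exact_mod_cast hcab
      rcases e1 with rfl | rfl | rfl <;> rcases e2 with rfl | rfl | rfl <;>
        rcases e3 with rfl | rfl | rfl <;>
        simp only [mul_neg_one, mul_zero, mul_one, add_zero, zero_add] at heq <;>
        first
          | omega
          | (exact hnz ⟨rfl, rfl, rfl⟩)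
    have hQ0 : ¬ Q 0 := by
      rintro ⟨q₁, q₂, q₃, heq, hnz, h1, h2, h3⟩
      exact hnz ⟨by omega, by omega, by omega⟩
    by_contra hcon
    have h01 : lam = 0 ∨ lam = 1 := by omega
    rcases h01 with h | h
    · exact hQ0 (h ▸ hQlam)
    · exact hQ1 (h ▸ hQlam)
  obtain ⟨p₁, p₂, p₃, hpeq, hpnz, hb1, hb2, hb3⟩ := hQlam
  have hach : p₁.natAbs = lam ∨ p₂.natAbs = lam ∨ p₃.natAbs = lam := by
    by_contra hcon
    push_neg at hcon
    exact hmin (lam - 1) (by omega)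
      ⟨p₁, p₂, p₃, hpeq, hpnz, by omega, by omega, by omega⟩
  have hprim : Nat.gcd p₁.natAbs (Nat.gcd p₂.natAbs p₃.natAbs) = 1 := by
    set g := Nat.gcd p₁.natAbs (Nat.gcd p₂.natAbs p₃.natAbs) with hgdef
    have hg1 : g ∣ p₁.natAbs := Nat.gcd_dvd_left _ _
    have hg2 : g ∣ p₂.natAbs := dvd_trans (Nat.gcd_dvd_right _ _) (Nat.gcd_dvd_left _ _)
    have hg3 : g ∣ p₃.natAbs := dvd_trans (Nat.gcd_dvd_right _ _) (Nat.gcd_dvd_right _ _)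
    have hgz1 : ((g:ℤ)) ∣ p₁ := by rw [Int.natCast_dvd]; exact hg1
    have hgz2 : ((g:ℤ)) ∣ p₂ := by rw [Int.natCast_dvd]; exact hg2
    have hgz3 : ((g:ℤ)) ∣ p₃ := by rw [Int.natCast_dvd]; exact hg3
    by_contra hcon
    have hgpos : 0 < g := by
      rcases Nat.eq_zero_or_pos g with h0 | h; swap
      · exact h
      exfalso
      have h1 := Nat.eq_zero_of_gcd_eq_zero_left h0
      have h2 := Nat.eq_zero_of_gcd_eq_zero_right h0
      have h3 := Nat.eq_zero_of_gcd_eq_zero_left h2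
      have h4 := Nat.eq_zero_of_gcd_eq_zero_right h2
      rcases hach with h | h | h <;> omega
    have hg2' : 2 ≤ g := by omega
    obtain ⟨p₁', he1⟩ := hgz1
    obtain ⟨p₂', he2⟩ := hgz2
    obtain ⟨p₃', he3⟩ := hgz3
    rw [he1] at hpeq hb1
    rw [he2] at hpeq hb2
    rw [he3] at hpeq hb3
    rw [he1, he2, he3] at hpnz
    have hgne : ((g:ℤ)) ≠ 0 := by exact_mod_cast (by omega : g ≠ 0)
    have heq' : (a:ℤ) * p₁' + (b:ℤ) * p₂' + (c:ℤ) * p₃' = 0 := by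
      apply mul_left_cancel₀ hgne
      rw [mul_zero]
      linear_combination hpeq
    have hnz' : ¬(p₁' = 0 ∧ p₂' = 0 ∧ p₃' = 0) := by
      rintro ⟨rfl, rfl, rfl⟩
      exact hpnz ⟨by ring, by ring, by ring⟩
    have hna1 : ((g:ℤ) * p₁').natAbs = g * p₁'.natAbs := by
      rw [Int.natAbs_mul, Int.natAbs_natCast]
    have hna2 : ((g:ℤ) * p₂').natAbs = g * p₂'.natAbs := by
      rw [Int.natAbs_mul, Int.natAbs_natCast]
    have hna3 : ((g:ℤ) * p₃').natAbs = g * p₃'.natAbs := by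
      rw [Int.natAbs_mul, Int.natAbs_natCast]
    have t1 : 2 * p₁'.natAbs ≤ lam := by
      calc 2 * p₁'.natAbs ≤ g * p₁'.natAbs := Nat.mul_le_mul_right _ hg2'
      _ = ((g:ℤ) * p₁').natAbs := hna1.symm
      _ ≤ lam := hb1
    have t2 : 2 * p₂'.natAbs ≤ lam := by
      calc 2 * p₂'.natAbs ≤ g * p₂'.natAbs := Nat.mul_le_mul_right _ hg2'
      _ = ((g:ℤ) * p₂').natAbs := hna2.symm
      _ ≤ lam := hb2
    have t3 : 2 * p₃'.natAbs ≤ lam := by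
      calc 2 * p₃'.natAbs ≤ g * p₃'.natAbs := Nat.mul_le_mul_right _ hg2'
      _ = ((g:ℤ) * p₃').natAbs := hna3.symm
      _ ≤ lam := hb3
    exact hmin (lam - 1) (by omega)
      ⟨p₁', p₂', p₃', heq', hnz', by omega, by omega, by omega⟩
  refine ⟨lam, p₁, p₂, p₃, hlam2, hpeq, hb1, hb2, hb3, hach, hprim, ?_⟩
  intro q₁ q₂ q₃ heq hnz
  by_contra hcon
  push_neg at hcon
  exact hmin (lam - 1) (by omega)
    ⟨q₁, q₂, q₃, heq, hnz, by omega, by omega, by omega⟩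

lemma main_construction (a b c M : ℕ) (S : Finset ℕ)
    (ha : 0 < a) (hb : 0 < b) (hc : 0 < c) (hM : 0 < M)
    (hSM : ∀ s ∈ S, s < M)
    (hfree : ∀ s s' t t' r r' : ℕ, s ∈ S → s' ∈ S → t ∈ S → t' ∈ S → r ∈ S → r' ∈ S →
      (a:ℤ) * ((s:ℤ) - (s':ℤ)) + (b:ℤ) * ((t:ℤ) - (t':ℤ)) + (c:ℤ) * ((r:ℤ) - (r':ℤ)) = 0 →
      s = s' ∧ t = t' ∧ r = r')
    (hcard : ((a+b+c)*M)^100 ≤ S.card^477) :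
    ∃ κ : ℝ, 0 < κ ∧ ∀ N : ℕ, 0 < N → ∃ A : Finset ℤ,
      A ⊆ Finset.Icc 1 (N : ℤ) ∧
      κ * (N : ℝ) ^ ((1 : ℝ) / 4.77) ≤ A.card ∧
      ∀ x y z x' y' z' : ℤ, x ∈ A → y ∈ A → z ∈ A → x' ∈ A → y' ∈ A → z' ∈ A →
        (a : ℤ) * x + (b : ℤ) * y + (c : ℤ) * z
          = (a : ℤ) * x' + (b : ℤ) * y' + (c : ℤ) * z' →
        x = x' ∧ y = y' ∧ z = z' := by
  set D := (a+b+c)*M with hDdef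
  have hD1 : 1 < D := by
    have : 3 ≤ a + b + c := by omega
    calc 1 < 3 * M := by omega
    _ ≤ (a+b+c) * M := Nat.mul_le_mul_right _ this
  have hMD : M ≤ D := by
    calc M = 1 * M := (one_mul M).symm
    _ ≤ (a+b+c) * M := Nat.mul_le_mul_right _ (by omega)
  have hSD : ∀ s ∈ S, s < D := fun s hs => lt_of_lt_of_le (hSM s hs) hMD
  have hScard : 0 < S.card := by
    by_contra h0
    have : S.card = 0 := by omega
    rw [this] at hcard
    have h1 : 0 < ((a+b+c)*M)^100 := by positivity
    simp at hcard
    omega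
  -- solution-freeness of digit sets
  have hDSfree : ∀ K, ∀ x ∈ DS S D K, ∀ x' ∈ DS S D K, ∀ y ∈ DS S D K, ∀ y' ∈ DS S D K,
      ∀ z ∈ DS S D K, ∀ z' ∈ DS S D K,
      (a:ℤ) * ((x:ℤ) - (x':ℤ)) + (b:ℤ) * ((y:ℤ) - (y':ℤ)) + (c:ℤ) * ((z:ℤ) - (z':ℤ)) = 0 →
      x = x' ∧ y = y' ∧ z = z' := by
    intro K
    induction K with
    | zero =>
      intro x hx x' hx' y hy y' hy' z hz z' hz' _
      simp [DS] at hx hx' hy hy' hz hz'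
      omega
    | succ K ih =>
      intro x hx x' hx' y hy y' hy' z hz z' hz' heq
      simp only [DS, Finset.mem_image, Finset.mem_product] at hx hx' hy hy' hz hz'
      obtain ⟨⟨s₁, u₁⟩, ⟨hs₁, hu₁⟩, rfl⟩ := hx
      obtain ⟨⟨s₂, u₂⟩, ⟨hs₂, hu₂⟩, rfl⟩ := hx'
      obtain ⟨⟨t₁, v₁⟩, ⟨ht₁, hv₁⟩, rfl⟩ := hy
      obtain ⟨⟨t₂, v₂⟩, ⟨ht₂, hv₂⟩, rfl⟩ := hy'
      obtain ⟨⟨r₁, w₁⟩, ⟨hr₁, hw₁⟩, rfl⟩ := hz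
      obtain ⟨⟨r₂, w₂⟩, ⟨hr₂, hw₂⟩, rfl⟩ := hz'
      simp only at heq ⊢
      set E₀ : ℤ := (a:ℤ) * ((s₁:ℤ) - s₂) + (b:ℤ) * ((t₁:ℤ) - t₂) + (c:ℤ) * ((r₁:ℤ) - r₂)
        with hE0
      set E₁ : ℤ := (a:ℤ) * ((u₁:ℤ) - u₂) + (b:ℤ) * ((v₁:ℤ) - v₂) + (c:ℤ) * ((w₁:ℤ) - w₂)
        with hE1
      have hsplit : E₀ + (D:ℤ) * E₁ = 0 := by
        rw [hE0, hE1]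
        push_cast at heq
        push_cast
        linear_combination heq
      have hEb : |E₀| < (D:ℤ) := by
        have bd : ∀ s s' : ℕ, s ∈ S → s' ∈ S → |(s:ℤ) - s'| ≤ (M:ℤ) - 1 := by
          intro s s' hs hs'
          have := hSM s hs
          have := hSM s' hs'
          rw [abs_le]
          omega
        have b1 := bd s₁ s₂ hs₁ hs₂
        have b2 := bd t₁ t₂ ht₁ ht₂
        have b3 := bd r₁ r₂ hr₁ hr₂
        have habs : |E₀| ≤ ((a:ℤ) + b + c) * ((M:ℤ) - 1) := by
          rw [hE0]
          calc |(a:ℤ) * ((s₁:ℤ) - s₂) + (b:ℤ) * ((t₁:ℤ) - t₂) + (c:ℤ) * ((r₁:ℤ) - r₂)|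
              ≤ |(a:ℤ) * ((s₁:ℤ) - s₂) + (b:ℤ) * ((t₁:ℤ) - t₂)| + |(c:ℤ) * ((r₁:ℤ) - r₂)| :=
                abs_add_le _ _
          _ ≤ |(a:ℤ) * ((s₁:ℤ) - s₂)| + |(b:ℤ) * ((t₁:ℤ) - t₂)| + |(c:ℤ) * ((r₁:ℤ) - r₂)| := by
                have := abs_add_le ((a:ℤ) * ((s₁:ℤ) - s₂)) ((b:ℤ) * ((t₁:ℤ) - t₂))
                linarith
          _ ≤ (a:ℤ) * ((M:ℤ) - 1) + (b:ℤ) * ((M:ℤ) - 1) + (c:ℤ) * ((M:ℤ) - 1) := by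
                have e1 : |(a:ℤ) * ((s₁:ℤ) - s₂)| = (a:ℤ) * |(s₁:ℤ) - s₂| := by
                  rw [abs_mul, abs_of_nonneg (by positivity : (0:ℤ) ≤ (a:ℤ))]
                have e2 : |(b:ℤ) * ((t₁:ℤ) - t₂)| = (b:ℤ) * |(t₁:ℤ) - t₂| := by
                  rw [abs_mul, abs_of_nonneg (by positivity : (0:ℤ) ≤ (b:ℤ))]
                have e3 : |(c:ℤ) * ((r₁:ℤ) - r₂)| = (c:ℤ) * |(r₁:ℤ) - r₂| := by
                  rw [abs_mul, abs_of_nonneg (by positivity : (0:ℤ) ≤ (c:ℤ))]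
                rw [e1, e2, e3]
                have c1 : (a:ℤ) * |(s₁:ℤ) - s₂| ≤ (a:ℤ) * ((M:ℤ) - 1) :=
                  mul_le_mul_of_nonneg_left b1 (by positivity)
                have c2 : (b:ℤ) * |(t₁:ℤ) - t₂| ≤ (b:ℤ) * ((M:ℤ) - 1) :=
                  mul_le_mul_of_nonneg_left b2 (by positivity)
                have c3 : (c:ℤ) * |(r₁:ℤ) - r₂| ≤ (c:ℤ) * ((M:ℤ) - 1) :=
                  mul_le_mul_of_nonneg_left b3 (by positivity)
                linarith
          _ = ((a:ℤ) + b + c) * ((M:ℤ) - 1) := by ring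
        have hlt : ((a:ℤ) + b + c) * ((M:ℤ) - 1) < (D:ℤ) := by
          have : (D:ℤ) = ((a:ℤ) + b + c) * (M:ℤ) := by rw [hDdef]; push_cast; ring
          rw [this]
          have hs : (0:ℤ) < (a:ℤ) + b + c := by positivity
          have hm : ((M:ℤ) - 1) < (M:ℤ) := by linarith
          exact mul_lt_mul_of_pos_left hm hs
        linarith
      obtain ⟨hE00, hE10⟩ := digit_split hsplit hEb
      obtain ⟨es, et, er⟩ := hfree s₁ s₂ t₁ t₂ r₁ r₂ hs₁ hs₂ ht₁ ht₂ hr₁ hr₂ (by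
        rw [hE0] at hE00; exact hE00)
      obtain ⟨eu, ev, ew⟩ := ih u₁ hu₁ u₂ hu₂ v₁ hv₁ v₂ hv₂ w₁ hw₁ w₂ hw₂ (by
        rw [hE1] at hE10; exact hE10)
      exact ⟨by rw [es, eu], by rw [et, ev], by rw [er, ew]⟩
  -- the sets A
  refine ⟨((D:ℝ))⁻¹, by positivity, ?_⟩
  intro N hN
  obtain ⟨K, hKdef⟩ : ∃ K, K = Nat.log D N := ⟨_, rfl⟩
  refine ⟨(DS S D K).image (fun n : ℕ => (n:ℤ) + 1), ?_, ?_, ?_⟩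
  · intro x hx
    simp only [Finset.mem_image] at hx
    obtain ⟨n, hn, rfl⟩ := hx
    have h1 : n < D ^ K := DS_lt hSD K n hn
    have h2 : D ^ K ≤ N := by rw [hKdef]; exact Nat.pow_log_le_self D (by omega)
    rw [Finset.mem_Icc]
    omega
  · have hAcard : ((DS S D K).image (fun n : ℕ => (n:ℤ) + 1)).card = S.card ^ K := by
      rw [Finset.card_image_of_injective _ (fun n m h => by omega), DS_card hSD]
    rw [hAcard]
    have hlt : N < D ^ (K+1) := by rw [hKdef]; exact Nat.lt_pow_succ_log_self hD1 N
    have hNat : N ^ 100 ≤ (S.card ^ (K+1)) ^ 477 := by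
      calc N ^ 100 ≤ (D ^ (K+1)) ^ 100 := Nat.pow_le_pow_left (by omega) _
      _ = (D ^ 100) ^ (K+1) := by rw [← pow_mul, ← pow_mul, Nat.mul_comm]
      _ ≤ (S.card ^ 477) ^ (K+1) := Nat.pow_le_pow_left hcard _
      _ = (S.card ^ (K+1)) ^ 477 := by rw [← pow_mul, ← pow_mul, Nat.mul_comm]
    have hexp : ((1:ℝ)/4.77) = (100:ℝ)/477 := by norm_num
    rw [hexp]
    have hre : (N:ℝ) ^ ((100:ℝ)/477) ≤ ((S.card ^ (K+1) : ℕ) : ℝ) := by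
      have hNnn : (0:ℝ) ≤ (N:ℝ) := by positivity
      apply le_of_pow_le_pow_left₀ (n := 477) (by norm_num) (Nat.cast_nonneg _)
      have hL : ((N:ℝ) ^ ((100:ℝ)/477)) ^ (477:ℕ) = (N:ℝ) ^ (100:ℕ) := by
        rw [← Real.rpow_natCast ((N:ℝ) ^ ((100:ℝ)/477)) 477, ← Real.rpow_mul hNnn,
          show ((100:ℝ)/477)*((477:ℕ):ℝ) = ((100:ℕ):ℝ) by norm_num, Real.rpow_natCast]
      rw [hL]
      have := hNat
      exact_mod_cast this
    have hDpos : (0:ℝ) < (D:ℝ) := by exact_mod_cast (by omega : 0 < D)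
    rw [inv_mul_le_iff₀ hDpos]
    have hcm : S.card ≤ D := by
      have h1 : S.card ≤ M := by
        have hsub : S ⊆ Finset.range M := fun s hs => Finset.mem_range.mpr (hSM s hs)
        calc S.card ≤ (Finset.range M).card := Finset.card_le_card hsub
        _ = M := Finset.card_range M
      omega
    calc (N:ℝ) ^ ((100:ℝ)/477) ≤ ((S.card ^ (K+1) : ℕ) : ℝ) := hre
    _ ≤ (D:ℝ) * ((S.card ^ K : ℕ) : ℝ) := by
        have hn : S.card ^ (K+1) ≤ D * S.card ^ K := by
          rw [pow_succ']
          exact Nat.mul_le_mul_right _ hcm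
        exact_mod_cast hn
  · intro x y z x' y' z' hx hy hz hx' hy' hz' heq
    simp only [Finset.mem_image] at hx hy hz hx' hy' hz'
    obtain ⟨n₁, hn₁, rfl⟩ := hx
    obtain ⟨n₂, hn₂, rfl⟩ := hy
    obtain ⟨n₃, hn₃, rfl⟩ := hz
    obtain ⟨n₁', hn₁', rfl⟩ := hx'
    obtain ⟨n₂', hn₂', rfl⟩ := hy'
    obtain ⟨n₃', hn₃', rfl⟩ := hz'
    have heq' : (a:ℤ) * ((n₁:ℤ) - n₁') + (b:ℤ) * ((n₂:ℤ) - n₂') + (c:ℤ) * ((n₃:ℤ) - n₃') = 0 := by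
      linear_combination heq
    obtain ⟨e1, e2, e3⟩ := hDSfree K n₁ hn₁ n₁' hn₁' n₂ hn₂ n₂' hn₂' n₃ hn₃ n₃' hn₃' heq'
    exact ⟨by rw [e1], by rw [e2], by rw [e3]⟩

lemma case1_card (a b c lam : ℕ) (h3c : a + b + c ≤ 3*c) (hc : 2^200 ≤ c)
    (hcase : c^27 ≤ lam^100) : ((a+b+c)*lam)^100 ≤ lam^477 := by
  have step1 : ((a+b+c)*lam)^100 ≤ (3*c*lam)^100 :=
    Nat.pow_le_pow_left (Nat.mul_le_mul_right _ h3c) _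
  refine le_trans step1 ?_
  have h100 : ((3*c*lam)^100)^100 ≤ (lam^477)^100 := by
    have e1 : ((3*c*lam)^100)^100 = 3^10000 * c^10000 * lam^10000 := by generalize (3:ℕ) = t; ring
    have e2 : (lam^477)^100 = (lam^100)^377 * lam^10000 := by ring
    rw [e1, e2]
    have h3le : (3:ℕ)^10000 ≤ c^179 := by
      calc (3:ℕ)^10000 ≤ 4^10000 := Nat.pow_le_pow_left (by norm_num) _
      _ = 2^20000 := by rw [show (4:ℕ) = 2^2 from rfl, ← pow_mul]
      _ ≤ 2^35800 := Nat.pow_le_pow_right (by norm_num) (by norm_num)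
      _ = (2^200)^179 := by rw [← pow_mul]
      _ ≤ c^179 := Nat.pow_le_pow_left hc _
    calc 3^10000 * c^10000 * lam^10000 ≤ c^179 * c^10000 * lam^10000 :=
          Nat.mul_le_mul_right _ (Nat.mul_le_mul_right _ h3le)
    _ = (c^27)^377 * lam^10000 := by ring
    _ ≤ (lam^100)^377 * lam^10000 := Nat.mul_le_mul_right _ (Nat.pow_le_pow_left hcase _)
  exact (Nat.pow_le_pow_iff_left (by norm_num : (100:ℕ) ≠ 0)).mp h100

lemma subA (lam R M ell s : ℕ)
    (hkey : R^200 * lam^s ≤ lam^477)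
    (hsurp : 2^400 * lam^100 ≤ lam^(s*(ell+1)))
    (hpow_gt : M < R^(ell+1)) :
    2^400 * lam^100 * M^200 ≤ (lam^ell * lam)^477 := by
  have hkey' : lam^s * R^200 ≤ lam^477 := by rw [Nat.mul_comm]; exact hkey
  calc 2^400 * lam^100 * M^200 ≤ lam^(s*(ell+1)) * M^200 := mul_le_mul_left hsurp _
  _ ≤ lam^(s*(ell+1)) * (R^(ell+1))^200 :=
      mul_le_mul_right (Nat.pow_le_pow_left (le_of_lt hpow_gt) _) _
  _ = (lam^s * R^200)^(ell+1) := by ring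
  _ ≤ (lam^477)^(ell+1) := Nat.pow_le_pow_left hkey' _
  _ = (lam^ell * lam)^477 := by ring

lemma subB (lam R M ell ls s : ℕ)
    (hkey : R^200 * lam^s ≤ lam^477)
    (hsurpB : 2^600 * lam^100 ≤ lam^(s*ell) * ls^277)
    (hMle2 : M ≤ 2*ls*R^ell) :
    2^400 * lam^100 * M^200 ≤ (lam^ell * ls)^477 := by
  have hkey' : lam^s * R^200 ≤ lam^477 := by rw [Nat.mul_comm]; exact hkey
  calc 2^400 * lam^100 * M^200 ≤ 2^400 * lam^100 * (2*ls*R^ell)^200 :=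
      mul_le_mul_right (Nat.pow_le_pow_left hMle2 _) _
  _ = (2^600 * lam^100) * (ls^200 * (R^200)^ell) := by generalize (2:ℕ) = t; ring
  _ ≤ (lam^(s*ell) * ls^277) * (ls^200 * (R^200)^ell) := mul_le_mul_left hsurpB _
  _ = ((lam^s * R^200)^ell) * ls^477 := by ring
  _ ≤ ((lam^477)^ell) * ls^477 := mul_le_mul_left (Nat.pow_le_pow_left hkey' _) _
  _ = (lam^ell * ls)^477 := by ring

lemma case2_card (a b c lam R M ell ls : ℕ)
    (h3c : a + b + c ≤ 3*c) (hb0 : 2^20000 ≤ c) (hlam : 2 ≤ lam)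
    (hcase : lam^100 < c^27)
    (hR : R = 2*lam*(lam-1)+1) (hM : M = c / (2*lam))
    (hell : ell = Nat.log R M) (hls : ls = min lam (M / R^ell)) :
    ((a+b+c)*M)^100 ≤ (lam^ell * ls)^477 ∧ 0 < M ∧ R^ell * ls ≤ M ∧ 1 ≤ ls ∧ ls ≤ lam := by
  have hRpos : 5 ≤ R := by
    rw [hR]
    have h1 : (4:ℕ) ≤ 2*lam*(lam-1) := by
      calc (4:ℕ) = 2*2*1 := by norm_num
      _ ≤ 2*lam*(lam-1) := Nat.mul_le_mul (Nat.mul_le_mul (le_refl 2) hlam) (by omega)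
    omega
  have hR1 : 1 < R := by omega
  have hRle : R ≤ 2*lam^2 := by
    rw [hR]
    obtain ⟨n, rfl⟩ : ∃ n, lam = n + 1 := ⟨lam - 1, by omega⟩
    simp only [Nat.add_sub_cancel]
    nlinarith
  have h2lamc : 2*lam ≤ c := by
    have h1 : (2*lam)^100 ≤ c^100 := by
      calc (2*lam)^100 = 2^100 * lam^100 := by rw [mul_pow]
      _ ≤ 2^100 * c^27 := mul_le_mul_right (le_of_lt hcase) _
      _ ≤ c^73 * c^27 := mul_le_mul_left (by
          calc (2:ℕ)^100 ≤ 2^1460000 := Nat.pow_le_pow_right (by norm_num) (by norm_num)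
          _ = (2^20000)^73 := by rw [← pow_mul]
          _ ≤ c^73 := Nat.pow_le_pow_left hb0 _) _
      _ = c^100 := by ring
    exact (Nat.pow_le_pow_iff_left (by norm_num : (100:ℕ) ≠ 0)).mp h1
  have hMpos : 0 < M := by
    rw [hM]
    have := (Nat.one_le_div_iff (show 0 < 2*lam by omega)).mpr h2lamc
    omega
  have hdm : 2*lam * M + c % (2*lam) = c := by rw [hM]; exact Nat.div_add_mod c (2*lam)
  have hmodlt : c % (2*lam) < 2*lam := Nat.mod_lt _ (by omega)
  have hc4 : c ≤ 4*lam*M := by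
    have e1 : 2*lam ≤ 2*lam*M := Nat.le_mul_of_pos_right _ hMpos
    have e2 : 2*lam*M + 2*lam*M = 4*lam*M := by ring
    omega
  have h8lam3 : 8*lam^3 ≤ c := by
    have h1 : (8*lam^3)^100 ≤ c^100 := by
      calc (8*lam^3)^100 = 2^300 * (lam^100)^3 := by rw [show (8:ℕ) = 2^3 from rfl, mul_pow, ← pow_mul, ← pow_mul, ← pow_mul, show 3*100 = 300 from rfl]
      _ ≤ 2^300 * (c^27)^3 := mul_le_mul_right (Nat.pow_le_pow_left (le_of_lt hcase) _) _
      _ = 2^300 * c^81 := by ring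
      _ ≤ c^19 * c^81 := mul_le_mul_left (by
          calc (2:ℕ)^300 ≤ 2^380000 := Nat.pow_le_pow_right (by norm_num) (by norm_num)
          _ = (2^20000)^19 := by rw [← pow_mul]
          _ ≤ c^19 := Nat.pow_le_pow_left hb0 _) _
      _ = c^100 := by ring
    exact (Nat.pow_le_pow_iff_left (by norm_num : (100:ℕ) ≠ 0)).mp h1
  have hRM : R ≤ M := by
    have t : 4*lam*R ≤ 4*lam*M := by
      calc 4*lam*R ≤ 4*lam*(2*lam^2) := mul_le_mul_right hRle _
      _ = 8*lam^3 := by ring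
      _ ≤ c := h8lam3
      _ ≤ 4*lam*M := hc4
    exact Nat.le_of_mul_le_mul_left t (by omega)
  have hellpos : 0 < ell := by rw [hell]; exact Nat.log_pos hR1 hRM
  have hpow_le : R^ell ≤ M := by rw [hell]; exact Nat.pow_log_le_self R (by omega)
  have hpow_gt : M < R^(ell+1) := by rw [hell]; exact Nat.lt_pow_succ_log_self hR1 M
  have hRellpos : 0 < R^ell := pow_pos (by omega) _
  have hdiv1 : 1 ≤ M / R^ell := (Nat.one_le_div_iff hRellpos).mpr hpow_le
  have hlspos : 1 ≤ ls := by rw [hls]; exact le_min (by omega) hdiv1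
  have hlslam : ls ≤ lam := by rw [hls]; exact min_le_left _ _
  have hlsRM : R^ell * ls ≤ M := by
    rw [hls]
    calc R^ell * min lam (M / R^ell) ≤ R^ell * (M / R^ell) :=
        mul_le_mul_right (min_le_right _ _) _
    _ = (M / R^ell) * R^ell := Nat.mul_comm _ _
    _ ≤ M := Nat.div_mul_le_self M _
  refine ⟨?_, hMpos, hlsRM, hlspos, hlslam⟩
  have hstep : ((a+b+c)*M)^100 ≤ 2^400 * lam^100 * M^200 := by
    calc ((a+b+c)*M)^100 ≤ (3*c*M)^100 := Nat.pow_le_pow_left (mul_le_mul_left h3c _) _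
    _ ≤ (3*(4*lam*M)*M)^100 :=
        Nat.pow_le_pow_left (mul_le_mul_left (mul_le_mul_right hc4 _) _) _
    _ = 12^100 * lam^100 * M^200 := by ring
    _ ≤ 2^400 * lam^100 * M^200 := by
        have h12 : (12:ℕ)^100 ≤ 2^400 := by
          calc (12:ℕ)^100 ≤ 16^100 := Nat.pow_le_pow_left (by norm_num) _
          _ = 2^400 := by rw [show (16:ℕ) = 2^4 from rfl, ← pow_mul]
        exact mul_le_mul_left (mul_le_mul_left h12 _) _
  refine le_trans hstep ?_
  -- key per-level inequality, class I version (valid for all lam ≥ 2)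
  have keyI : R^200 * lam^10 ≤ lam^477 := by
    by_cases h7 : lam ≤ 7
    · subst hR
      interval_cases lam <;> norm_num <;> decide
    · have h8 : 8 ≤ lam := by omega
      calc R^200 * lam^10 ≤ (2*lam^2)^200 * lam^10 :=
          mul_le_mul_left (Nat.pow_le_pow_left hRle _) _
      _ = 2^200 * lam^410 := by ring
      _ ≤ lam^67 * lam^410 := mul_le_mul_left (by
          calc (2:ℕ)^200 ≤ 2^201 := Nat.pow_le_pow_right (by norm_num) (by norm_num)
          _ = (2^3)^67 := by rw [← pow_mul]
          _ ≤ lam^67 := Nat.pow_le_pow_left (by omega) _) _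
      _ = lam^477 := by ring
  by_cases hcls : lam^200 ≤ c
  · -- CLASS I
    have hell70 : 70 ≤ ell := by
      by_contra hcon
      push_neg at hcon
      have hM70 : M < R^70 :=
        lt_of_lt_of_le hpow_gt (Nat.pow_le_pow_right (by omega) (by omega))
      have hcb : c ≤ 2^72 * lam^141 := by
        calc c ≤ 4*lam*M := hc4
        _ ≤ 4*lam*R^70 := mul_le_mul_right (le_of_lt hM70) _
        _ ≤ 4*lam*(2*lam^2)^70 := mul_le_mul_right (Nat.pow_le_pow_left hRle _) _
        _ = 2^72 * lam^141 := by ring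
      have hc200 : c^200 ≤ 2^14400 * c^141 := by
        calc c^200 ≤ (2^72*lam^141)^200 := Nat.pow_le_pow_left hcb _
        _ = 2^14400 * (lam^200)^141 := by generalize (2:ℕ) = t; ring
        _ ≤ 2^14400 * c^141 := mul_le_mul_right (Nat.pow_le_pow_left hcls _) _
      have hc59 : c^59 ≤ 2^14400 := by
        have h1 : c^59 * c^141 ≤ 2^14400 * c^141 := by
          calc c^59 * c^141 = c^200 := by ring
          _ ≤ 2^14400 * c^141 := hc200
        exact Nat.le_of_mul_le_mul_right h1 (pow_pos (by omega) _)
      have hbig : 2^14400 < c^59 := by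
        calc (2:ℕ)^14400 < 2^1180000 :=
            Nat.pow_lt_pow_right (by norm_num) (by norm_num)
        _ = (2^20000)^59 := by rw [← pow_mul]
        _ ≤ c^59 := Nat.pow_le_pow_left hb0 _
      omega
    rcases le_or_gt lam (M / R^ell) with hcA | hcB
    · -- subcase A
      have hlseq : ls = lam := by rw [hls]; exact min_eq_left hcA
      rw [hlseq]
      refine subA lam R M ell 10 keyI ?_ hpow_gt
      calc 2^400 * lam^100 ≤ lam^610 * lam^100 := mul_le_mul_left (by
          calc (2:ℕ)^400 ≤ 2^610 := Nat.pow_le_pow_right (by norm_num) (by norm_num)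
          _ ≤ lam^610 := Nat.pow_le_pow_left hlam _) _
      _ = lam^710 := by ring
      _ ≤ lam^(10*(ell+1)) := Nat.pow_le_pow_right (by omega) (by omega)
    · -- subcase B
      have hlseq : ls = M / R^ell := by rw [hls]; exact min_eq_right (le_of_lt hcB)
      have hdm2 : R^ell * ls + M % R^ell = M := by rw [hlseq]; exact Nat.div_add_mod M (R^ell)
      have hmod2 : M % R^ell < R^ell := Nat.mod_lt _ hRellpos
      have hMle2 : M ≤ 2*ls*R^ell := by
        have e3 : 2*ls*R^ell = R^ell*ls + ls*R^ell := by ring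
        have e4 : R^ell ≤ ls*R^ell := Nat.le_mul_of_pos_left _ hlspos
        omega
      refine subB lam R M ell ls 10 keyI ?_ hMle2
      calc 2^600 * lam^100 ≤ lam^600 * lam^100 := mul_le_mul_left (Nat.pow_le_pow_left hlam _) _
      _ = lam^700 := by ring
      _ ≤ lam^(10*ell) := Nat.pow_le_pow_right (by omega) (by omega)
      _ ≤ lam^(10*ell) * ls^277 := Nat.le_mul_of_pos_right _ (pow_pos (by omega) _)
  · -- CLASS II
    push_neg at hcls
    have hlam100 : 2^100 ≤ lam := by
      by_contra hcon
      push_neg at hcon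
      have h1 : lam^200 ≤ (2^100)^200 := Nat.pow_le_pow_left (by omega) _
      have h2 : (2^100 : ℕ)^200 = 2^20000 := by rw [← pow_mul]
      omega
    have keyII : R^200 * lam^70 ≤ lam^477 := by
      calc R^200 * lam^70 ≤ (2*lam^2)^200 * lam^70 :=
          mul_le_mul_left (Nat.pow_le_pow_left hRle _) _
      _ = 2^200 * lam^470 := by ring
      _ ≤ lam^7 * lam^470 := mul_le_mul_left (by
          calc (2:ℕ)^200 = (2^100)^2 := by rw [← pow_mul]
          _ ≤ lam^2 := Nat.pow_le_pow_left hlam100 _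
          _ ≤ lam^7 := Nat.pow_le_pow_right (by omega) (by norm_num)) _
      _ = lam^477 := by ring
    have hlam40 : 2^600 ≤ lam^40 := by
      calc (2:ℕ)^600 ≤ 2^4000 := Nat.pow_le_pow_right (by norm_num) (by norm_num)
      _ = (2^100)^40 := by rw [← pow_mul]
      _ ≤ lam^40 := Nat.pow_le_pow_left hlam100 _
    rcases le_or_gt lam (M / R^ell) with hcA | hcB
    · -- subcase A
      have hlseq : ls = lam := by rw [hls]; exact min_eq_left hcA
      rw [hlseq]
      refine subA lam R M ell 70 keyII ?_ hpow_gt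
      calc 2^400 * lam^100 ≤ lam^40 * lam^100 := mul_le_mul_left (by
          calc (2:ℕ)^400 ≤ 2^600 := Nat.pow_le_pow_right (by norm_num) (by norm_num)
          _ ≤ lam^40 := hlam40) _
      _ = lam^140 := by ring
      _ ≤ lam^(70*(ell+1)) := Nat.pow_le_pow_right (by omega) (by omega)
    · -- subcase B
      have hlseq : ls = M / R^ell := by rw [hls]; exact min_eq_right (le_of_lt hcB)
      have hdm2 : R^ell * ls + M % R^ell = M := by rw [hlseq]; exact Nat.div_add_mod M (R^ell)
      have hmod2 : M % R^ell < R^ell := Nat.mod_lt _ hRellpos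
      have hMle2 : M ≤ 2*ls*R^ell := by
        have e3 : 2*ls*R^ell = R^ell*ls + ls*R^ell := by ring
        have e4 : R^ell ≤ ls*R^ell := Nat.le_mul_of_pos_left _ hlspos
        omega
      refine subB lam R M ell ls 70 keyII ?_ hMle2
      rcases (show 2 ≤ ell ∨ ell = 1 by omega) with h2e | h1e
      · calc 2^600 * lam^100 ≤ lam^40 * lam^100 := mul_le_mul_left hlam40 _
        _ = lam^140 := by ring
        _ ≤ lam^(70*ell) := Nat.pow_le_pow_right (by omega) (by omega)
        _ ≤ lam^(70*ell) * ls^277 := Nat.le_mul_of_pos_right _ (pow_pos (by omega) _)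
      · -- ell = 1
        subst h1e
        have hc16 : c ≤ 16*lam^3*ls := by
          calc c ≤ 4*lam*M := hc4
          _ ≤ 4*lam*(2*ls*R^1) := mul_le_mul_right hMle2 _
          _ ≤ 4*lam*(2*ls*(2*lam^2)) := by
              have : R^1 ≤ 2*lam^2 := by rw [pow_one]; exact hRle
              exact mul_le_mul_right (mul_le_mul_right this _) _
          _ = 16*lam^3*ls := by ring
        have hlam19 : lam^19 ≤ 2^108 * ls^27 := by
          have h1 : lam^100 ≤ 2^108 * ls^27 * lam^81 := by
            calc lam^100 ≤ c^27 := le_of_lt hcase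
            _ ≤ (16*lam^3*ls)^27 := Nat.pow_le_pow_left hc16 _
            _ = 2^108 * ls^27 * lam^81 := by ring
          have h2 : lam^19 * lam^81 ≤ (2^108 * ls^27) * lam^81 := by
            calc lam^19 * lam^81 = lam^100 := by ring
            _ ≤ 2^108 * ls^27 * lam^81 := h1
          exact Nat.le_of_mul_le_mul_right h2 (pow_pos (by omega) _)
        have hls66 : 2^66 ≤ ls := by
          by_contra hcon
          push_neg at hcon
          have h1 : ls^27 ≤ (2^66)^27 := Nat.pow_le_pow_left (by omega) _
          have h2 : lam^19 ≤ 2^1890 := by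
            calc lam^19 ≤ 2^108 * ls^27 := hlam19
            _ ≤ 2^108 * (2^66)^27 := mul_le_mul_right h1 _
            _ = 2^1890 := by rw [← pow_mul, ← pow_add]
          have h3 : 2^1900 ≤ lam^19 := by
            calc (2:ℕ)^1900 = (2^100)^19 := by rw [← pow_mul]
            _ ≤ lam^19 := Nat.pow_le_pow_left hlam100 _
          have h4 : (2:ℕ)^1890 < 2^1900 := Nat.pow_lt_pow_right (by norm_num) (by norm_num)
          omega
        have hfin : 2^800 * lam^30 ≤ ls^277 := by
          have h1 : lam^30 ≤ lam^38 := Nat.pow_le_pow_right (by omega) (by norm_num)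
          have h2 : lam^38 ≤ 2^216 * ls^54 := by
            calc lam^38 = (lam^19)^2 := by ring
            _ ≤ (2^108 * ls^27)^2 := Nat.pow_le_pow_left hlam19 _
            _ = 2^216 * ls^54 := by ring
          have h3 : (2:ℕ)^1016 ≤ ls^223 := by
            calc (2:ℕ)^1016 ≤ 2^14718 := Nat.pow_le_pow_right (by norm_num) (by norm_num)
            _ = (2^66)^223 := by rw [← pow_mul]
            _ ≤ ls^223 := Nat.pow_le_pow_left hls66 _
          calc 2^800 * lam^30 ≤ 2^800 * (2^216 * ls^54) :=
              mul_le_mul_right (le_trans h1 h2) _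
          _ = 2^1016 * ls^54 := by generalize (2:ℕ) = t; ring
          _ ≤ ls^223 * ls^54 := mul_le_mul_left h3 _
          _ = ls^277 := by ring
        calc 2^600 * lam^100 ≤ 2^800 * lam^100 :=
            mul_le_mul_left (Nat.pow_le_pow_right (by norm_num) (by norm_num)) _
        _ = lam^70 * (2^800 * lam^30) := by ring
        _ ≤ lam^70 * ls^277 := mul_le_mul_right hfin _
        _ = lam^(70*1) * ls^277 := by norm_num

end S1

open S1 in

/-- There is an absolute constant `b₀` such that for all positive integers
`a < b ≤ c ≤ b^{1.01}` with `b ≥ b₀`, `gcd(b,c) = 1` and `c ≠ a + b`, there exists `κ > 0`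
such that for every positive integer `N` there is a set `A ⊆ [N]` with `|A| ≥ κ·N^{1/4.77}`
containing no non-trivial solutions to `ax + by + cz = ax' + by' + cz'`. -/
theorem statement1 :
    ∃ b₀ : ℕ, ∀ a b c : ℕ, 0 < a → a < b → b ≤ c →
      (c : ℝ) ≤ (b : ℝ) ^ (1.01 : ℝ) → b₀ ≤ b → Nat.Coprime b c → c ≠ a + b →
      ∃ κ : ℝ, 0 < κ ∧ ∀ N : ℕ, 0 < N → ∃ A : Finset ℤ,
        A ⊆ Finset.Icc 1 (N : ℤ) ∧
        κ * (N : ℝ) ^ ((1 : ℝ) / 4.77) ≤ A.card ∧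
        ∀ x y z x' y' z' : ℤ, x ∈ A → y ∈ A → z ∈ A → x' ∈ A → y' ∈ A → z' ∈ A →
          (a : ℤ) * x + (b : ℤ) * y + (c : ℤ) * z
            = (a : ℤ) * x' + (b : ℤ) * y' + (c : ℤ) * z' →
          x = x' ∧ y = y' ∧ z = z' := by

  refine ⟨2^20000, ?_⟩
  intro a b c ha hab hle _hpow hb0 hcop hcab
  have hbc : b < c := by
    rcases Nat.lt_or_ge b c with h | h
    · exact h
    · exfalso
      have hbc' : b = c := by omega
      subst hbc'
      have h2 : Nat.gcd b b = 1 := hcop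
      rw [Nat.gcd_self] at h2
      omega
  have hcb0 : 2^20000 ≤ c := le_trans hb0 (le_of_lt hbc)
  have h3c : a + b + c ≤ 3 * c := by omega
  obtain ⟨lam, p₁, p₂, p₃, hlam2, hpeq, hpb1, hpb2, hpb3, hach, hprim, hminall⟩ :=
    exists_short a b c ha hab hbc hcab
  by_cases hcase : c^27 ≤ lam^100
  · -- CASE 1 : interval seed
    have hfree : ∀ s s' t t' r r' : ℕ, s ∈ Finset.range lam → s' ∈ Finset.range lam →
        t ∈ Finset.range lam → t' ∈ Finset.range lam → r ∈ Finset.range lam →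
        r' ∈ Finset.range lam →
        (a:ℤ) * ((s:ℤ) - (s':ℤ)) + (b:ℤ) * ((t:ℤ) - (t':ℤ)) + (c:ℤ) * ((r:ℤ) - (r':ℤ)) = 0 →
        s = s' ∧ t = t' ∧ r = r' := by
      intro s s' t t' r r' hs hs' ht ht' hr hr' heq
      rw [Finset.mem_range] at hs hs' ht ht' hr hr'
      by_contra hcon
      have hnz : ¬((s:ℤ) - s' = 0 ∧ (t:ℤ) - t' = 0 ∧ (r:ℤ) - r' = 0) := by
        rintro ⟨h1, h2, h3⟩
        exact hcon ⟨by omega, by omega, by omega⟩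
      have hge := hminall _ _ _ heq hnz
      have n1 : ((s:ℤ) - s').natAbs ≤ lam - 1 := by omega
      have n2 : ((t:ℤ) - t').natAbs ≤ lam - 1 := by omega
      have n3 : ((r:ℤ) - r').natAbs ≤ lam - 1 := by omega
      omega
    have hcard : ((a+b+c) * lam)^100 ≤ (Finset.range lam).card ^ 477 := by
      rw [Finset.card_range]
      exact case1_card a b c lam h3c
        (le_trans (Nat.pow_le_pow_right (by norm_num) (by norm_num)) hcb0) hcase
    exact main_construction a b c lam (Finset.range lam) ha (by omega) (by omega) (by omega)
      (fun s hs => Finset.mem_range.mp hs) hfree hcard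
  · -- CASE 2
    push_neg at hcase
    obtain ⟨R, hRdef⟩ : ∃ R, R = 2*lam*(lam-1)+1 := ⟨_, rfl⟩
    obtain ⟨M, hMdef⟩ : ∃ M, M = c / (2*lam) := ⟨_, rfl⟩
    obtain ⟨ell, helldef⟩ : ∃ e, e = Nat.log R M := ⟨_, rfl⟩
    obtain ⟨ls, hlsdef⟩ : ∃ l, l = min lam (M / R^ell) := ⟨_, rfl⟩
    obtain ⟨hcard100, hMpos, hlsRM, hlspos, hlslam⟩ :=
      case2_card a b c lam R M ell ls h3c hcb0 hlam2 hcase hRdef hMdef helldef hlsdef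
    have hlamR : lam ≤ R := by
      rw [hRdef]
      obtain ⟨n, rfl⟩ : ∃ n, lam = n + 2 := ⟨lam - 2, by omega⟩
      have he : (n+2) - 1 = n + 1 := by omega
      rw [he]
      calc n + 2 = 1 * (n+2) := (one_mul _).symm
      _ ≤ (2*(n+1)) * (n+2) := mul_le_mul_left (by omega) _
      _ = 2*(n+2)*(n+1) := by ring
      _ ≤ 2*(n+2)*(n+1) + 1 := Nat.le_succ _
    have hRlt : 2*lam*(lam-1) < R := by rw [hRdef]; omega
    have hrange : ∀ s ∈ Finset.range lam, s < R :=
      fun s hs => lt_of_lt_of_le (Finset.mem_range.mp hs) hlamR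
    have hrangelam : ∀ s ∈ Finset.range lam, s < lam := fun s hs => Finset.mem_range.mp hs
    have hMu : 2*lam*M ≤ c := by
      rw [hMdef, Nat.mul_comm]
      exact Nat.div_mul_le_self c (2*lam)
    -- the seed set
    set Seed2 : Finset ℕ := Finset.image (fun pr : ℕ × ℕ => pr.1 + R^ell * pr.2)
      ((DS (Finset.range lam) R ell) ×ˢ Finset.range ls) with hSeed2def
    have hSeedLt : ∀ x ∈ Seed2, x < M := by
      intro x hx
      rw [hSeed2def, Finset.mem_image] at hx
      obtain ⟨⟨low, top⟩, hmem, rfl⟩ := hx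
      rw [Finset.mem_product] at hmem
      have hlow : low < R^ell := DS_lt hrange ell low hmem.1
      have htop : top < ls := Finset.mem_range.mp hmem.2
      have e1 : R^ell*(top+1) = R^ell*top + R^ell := by ring
      have e2 : R^ell*(top+1) ≤ R^ell*ls := mul_le_mul_right (by omega) _
      show low + R^ell * top < M
      omega
    have hSeedCard : Seed2.card = lam^ell * ls := by
      rw [hSeed2def]
      have hinj : Set.InjOn (fun pr : ℕ × ℕ => pr.1 + R^ell * pr.2)
          ↑((DS (Finset.range lam) R ell) ×ˢ Finset.range ls) := by
        intro ⟨l₁, t₁⟩ h1 ⟨l₂, t₂⟩ h2 heq2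
        rw [Finset.mem_coe, Finset.mem_product] at h1 h2
        simp only at heq2
        have hl1 : l₁ < R^ell := DS_lt hrange ell l₁ h1.1
        have hl2 : l₂ < R^ell := DS_lt hrange ell l₂ h2.1
        have hpos : 0 < R^ell := by omega
        have e1 : (l₁ + R^ell * t₁) % (R^ell) = l₁ := by
          rw [Nat.add_mul_mod_self_left, Nat.mod_eq_of_lt hl1]
        have e2 : (l₂ + R^ell * t₂) % (R^ell) = l₂ := by
          rw [Nat.add_mul_mod_self_left, Nat.mod_eq_of_lt hl2]
        have hll : l₁ = l₂ := by rw [← e1, ← e2, heq2]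
        have htt : t₁ = t₂ := by
          have h3 : R^ell * t₁ = R^ell * t₂ := by omega
          exact Nat.eq_of_mul_eq_mul_left hpos h3
        simp [hll, htt]
      rw [Finset.card_image_of_injOn hinj, Finset.card_product, Finset.card_range,
        DS_card hrange, Finset.card_range]
    have hSeedDiff : ∀ x ∈ Seed2, ∀ x' ∈ Seed2, ∃ δ : ℕ → ℤ,
        (∀ i, |δ i| ≤ (lam:ℤ) - 1) ∧
        ((x:ℤ) - (x':ℤ) = ∑ i ∈ range (ell+1), δ i * (R:ℤ)^i) := by
      intro x hx x' hx'
      rw [hSeed2def, Finset.mem_image] at hx hx'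
      obtain ⟨⟨low, top⟩, hmem, rfl⟩ := hx
      obtain ⟨⟨low', top'⟩, hmem', rfl⟩ := hx'
      rw [Finset.mem_product] at hmem hmem'
      have htop : top < ls := Finset.mem_range.mp hmem.2
      have htop' : top' < ls := Finset.mem_range.mp hmem'.2
      obtain ⟨δlow, hδb, hδs⟩ := DS_diff (show 0 < lam by omega) hrangelam ell
        low hmem.1 low' hmem'.1
      refine ⟨fun i => if i < ell then δlow i else ((top:ℤ) - top'), ?_, ?_⟩
      · intro i
        show |if i < ell then δlow i else ((top:ℤ) - top')| ≤ (lam:ℤ) - 1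
        by_cases hi : i < ell
        · rw [if_pos hi]
          have h := hδb i
          omega
        · rw [if_neg hi]
          rw [abs_le]
          constructor <;> push_cast <;> omega
      · show ((low + R^ell*top : ℕ):ℤ) - ((low' + R^ell*top' : ℕ):ℤ)
            = ∑ i ∈ range (ell+1), (if i < ell then δlow i else ((top:ℤ) - top')) * (R:ℤ)^i
        rw [Finset.sum_range_succ]
        rw [if_neg (lt_irrefl ell)]
        have hsum : (∑ i ∈ range ell,
            (if i < ell then δlow i else ((top:ℤ) - top')) * (R:ℤ)^i)
            = ∑ i ∈ range ell, δlow i * (R:ℤ)^i := by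
          refine Finset.sum_congr rfl fun i hi => ?_
          rw [if_pos (Finset.mem_range.mp hi)]
        rw [hsum, ← hδs]
        push_cast
        ring
    -- freeness of the seed
    have hfree : ∀ s s' t t' r r' : ℕ, s ∈ Seed2 → s' ∈ Seed2 → t ∈ Seed2 → t' ∈ Seed2 →
        r ∈ Seed2 → r' ∈ Seed2 →
        (a:ℤ) * ((s:ℤ) - (s':ℤ)) + (b:ℤ) * ((t:ℤ) - (t':ℤ)) + (c:ℤ) * ((r:ℤ) - (r':ℤ)) = 0 →
        s = s' ∧ t = t' ∧ r = r' := by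
      intro s s' t t' r r' hs hs' ht ht' hr hr' heq
      have hb1 := hSeedLt s hs
      have hb2 := hSeedLt s' hs'
      have hb3 := hSeedLt t ht
      have hb4 := hSeedLt t' ht'
      have hb5 := hSeedLt r hr
      have hb6 := hSeedLt r' hr'
      have hsz : 2 * lam * (M - 1) < c := by
        have h1 : 2*lam*(M-1) < 2*lam*M :=
          mul_lt_mul_of_pos_left (by omega) (by omega)
        omega
      obtain ⟨k, hk1, hk2, hk3⟩ := line_lemma hcop (by omega : 0 < c) hpeq heq hprim
        hpb1 hpb2 hpb3 (by omega : ((s:ℤ) - s').natAbs ≤ M - 1)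
        (by omega : ((t:ℤ) - t').natAbs ≤ M - 1)
        (by omega : ((r:ℤ) - r').natAbs ≤ M - 1) hsz
      obtain ⟨δ1, hδ1b, hδ1s⟩ := hSeedDiff s hs s' hs'
      obtain ⟨δ2, hδ2b, hδ2s⟩ := hSeedDiff t ht t' ht'
      obtain ⟨δ3, hδ3b, hδ3s⟩ := hSeedDiff r hr r' hr'
      have hU1 : k * p₁ = ∑ i ∈ range (ell+1), δ1 i * (R:ℤ)^i := by rw [← hk1]; exact hδ1s
      have hU2 : k * p₂ = ∑ i ∈ range (ell+1), δ2 i * (R:ℤ)^i := by rw [← hk2]; exact hδ2s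
      have hU3 : k * p₃ = ∑ i ∈ range (ell+1), δ3 i * (R:ℤ)^i := by rw [← hk3]; exact hδ3s
      have hk0 : k = 0 := by
        rcases hach with hj | hj | hj
        · exact core_kill hlam2 hRlt hprim hj hpb2 hpb3 hδ1b hδ2b hδ3b hU1 hU2 hU3
        · have hg2 : Nat.gcd p₂.natAbs (Nat.gcd p₁.natAbs p₃.natAbs) = 1 := by
            rw [← Nat.gcd_assoc, Nat.gcd_comm p₂.natAbs p₁.natAbs, Nat.gcd_assoc]
            exact hprim
          exact core_kill hlam2 hRlt hg2 hj hpb1 hpb3 hδ2b hδ1b hδ3b hU2 hU1 hU3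
        · have hg3 : Nat.gcd p₃.natAbs (Nat.gcd p₁.natAbs p₂.natAbs) = 1 := by
            rw [Nat.gcd_comm p₃.natAbs (Nat.gcd p₁.natAbs p₂.natAbs), Nat.gcd_assoc]
            exact hprim
          exact core_kill hlam2 hRlt hg3 hj hpb1 hpb2 hδ3b hδ1b hδ2b hU3 hU1 hU2
      rw [hk0, zero_mul] at hk1 hk2 hk3
      refine ⟨?_, ?_, ?_⟩ <;> omega
    have hcard : ((a+b+c) * M)^100 ≤ Seed2.card ^ 477 := by
      rw [hSeedCard]
      exact hcard100
    exact main_construction a b c M Seed2 ha (by omega) (by omega) hMpos hSeedLt hfree hcard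
end

section
/- Let a₁,…,a_k be integers forming a dissociated tuple (equivalently, the symmetric equation a₁x₁+⋯+a_kx_k = a₁x₁'+⋯+a_kx_k' is primitive). Let L > 1 be an integer and let A_L be a nonempty subset of {0,1,…,L−1} containing no non-trivial solutions to the equation, and suppose (|a₁|+|a₂|+⋯+|a_k|)·max(A_L) < L. Then there exists κ > 0 such that for every positive integer N there is a set A ⊆ [N] with |A| ≥ κ·N^r containing no non-trivial solutions to the equation, where r = log|A_L| / log L. -/
lemma digitAux (L : ℤ) (hL : 1 < L) : ∀ (m : ℕ) (c c' : ℕ → ℤ),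
    (∀ j, 0 ≤ c j) → (∀ j, c j < L) → (∀ j, 0 ≤ c' j) → (∀ j, c' j < L) →
    (∑ j ∈ Finset.range m, c j * L ^ j = ∑ j ∈ Finset.range m, c' j * L ^ j) →
    ∀ j < m, c j = c' j := by
  intro m
  induction m with
  | zero => intro c c' _ _ _ _ _ j hj; omega
  | succ n ih =>
    intro c c' h0 h1 h0' h1' heq j hj
    rw [Finset.sum_range_succ', Finset.sum_range_succ'] at heq
    have hfac : ∀ (f : ℕ → ℤ), ∑ j ∈ Finset.range n, f (j + 1) * L ^ (j + 1)
        = L * ∑ j ∈ Finset.range n, f (j + 1) * L ^ j := by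
      intro f; rw [Finset.mul_sum]; exact Finset.sum_congr rfl fun x _ => by ring
    rw [hfac c, hfac c'] at heq
    simp only [pow_zero, mul_one] at heq
    set S := ∑ j ∈ Finset.range n, c (j + 1) * L ^ j with hS
    set S' := ∑ j ∈ Finset.range n, c' (j + 1) * L ^ j with hS'
    have h2 : c 0 - c' 0 = L * (S' - S) := by linarith
    have h00 : c 0 = c' 0 := by
      rcases lt_trichotomy (S' - S) 0 with h | h | h
      · nlinarith [h0 0, h1' 0, mul_le_mul_of_nonneg_left (by omega : S' - S ≤ -1) (by omega : (0:ℤ) ≤ L)]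
      · rw [h, mul_zero] at h2; omega
      · nlinarith [h0' 0, h1 0, mul_le_mul_of_nonneg_left (by omega : (1:ℤ) ≤ S' - S) (by omega : (0:ℤ) ≤ L)]
    have hSS : S = S' := by
      have hls : L * S = L * S' := by linarith
      exact mul_left_cancel₀ (by omega) hls
    have hrec := ih (fun j => c (j + 1)) (fun j => c' (j + 1)) (fun j => h0 _)
      (fun j => h1 _) (fun j => h0' _) (fun j => h1' _) hSS
    match j with
    | 0 => exact h00
    | Nat.succ i => exact hrec i (by omega)

lemma swapAux (k m : ℕ) (a : Fin k → ℤ) (L : ℤ) (E : Fin k → ℕ → ℤ) :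
    ∑ i, a i * ∑ j ∈ Finset.range m, E i j * L ^ j
      = ∑ j ∈ Finset.range m, (∑ i, a i * E i j) * L ^ j := by
  simp_rw [Finset.mul_sum, Finset.sum_mul]
  rw [Finset.sum_comm]
  exact Finset.sum_congr rfl fun j _ => Finset.sum_congr rfl fun i _ => by ring

/-- Let `a₁,…,a_k` be a dissociated tuple of integers (all subset sums are
distinct), `L > 1` an integer, and `A_L` a nonempty subset of `{0,…,L−1}` with no non-trivial
solutions to `∑ aᵢxᵢ = ∑ aᵢxᵢ'` and `(∑|aᵢ|)·max(A_L) < L`. Then there is `κ > 0` such that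
for every positive integer `N` there is `A ⊆ [N]` with `|A| ≥ κ·N^r`, `r = log|A_L|/log L`,
containing no non-trivial solutions to the equation. -/
theorem statement2 (k : ℕ) (a : Fin k → ℤ)
    (hdiss : ∀ S T : Finset (Fin k), ∑ i ∈ S, a i = ∑ i ∈ T, a i → S = T)
    (L : ℕ) (hL : 1 < L) (AL : Finset ℤ)
    (hALsub : AL ⊆ Finset.Icc 0 ((L : ℤ) - 1)) (hne : AL.Nonempty)
    (hmax : (∑ i, |a i|) * AL.max' hne < (L : ℤ))
    (hAL : ∀ x x' : Fin k → ℤ, (∀ i, x i ∈ AL) → (∀ i, x' i ∈ AL) →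
      ∑ i, a i * x i = ∑ i, a i * x' i → x = x') :
    ∃ κ : ℝ, 0 < κ ∧ ∀ N : ℕ, 0 < N → ∃ A : Finset ℤ,
      A ⊆ Finset.Icc 1 (N : ℤ) ∧
      κ * (N : ℝ) ^ (Real.log AL.card / Real.log L) ≤ A.card ∧
      ∀ x x' : Fin k → ℤ, (∀ i, x i ∈ A) → (∀ i, x' i ∈ A) →
        ∑ i, a i * x i = ∑ i, a i * x' i → x = x' := by
  set M := AL.max' hne with hM
  have hLZ : (1 : ℤ) < (L : ℤ) := by exact_mod_cast hL
  have hM0 : 0 ≤ M := (Finset.mem_Icc.1 (hALsub (AL.max'_mem hne))).1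
  have hMle : ∀ x ∈ AL, 0 ≤ x ∧ x ≤ M :=
    fun x hx => ⟨(Finset.mem_Icc.1 (hALsub hx)).1, AL.le_max' x hx⟩
  set c := AL.card with hcdef
  have hc1 : 1 ≤ c := Finset.card_pos.2 hne
  have hcL : c ≤ L := by
    have := Finset.card_le_card hALsub
    rwa [Int.card_Icc, show ((L:ℤ) - 1 + 1 - 0) = (L:ℤ) by ring, Int.toNat_natCast] at this
  set r := Real.log c / Real.log L with hrdef
  have hL0R : (0:ℝ) < L := by positivity
  have hL1R : (1:ℝ) < L := by exact_mod_cast hL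
  have hc0R : (0:ℝ) < c := by exact_mod_cast hc1
  have hlogL : 0 < Real.log L := Real.log_pos hL1R
  have hr0 : 0 ≤ r := div_nonneg (Real.log_nonneg (by exact_mod_cast hc1)) hlogL.le
  have hr1 : r ≤ 1 := by
    rw [hrdef, div_le_one hlogL]
    exact Real.log_le_log hc0R (by exact_mod_cast hcL)
  refine ⟨1 / L, by positivity, fun N hN => ?_⟩
  set m := Nat.log L N with hmdef
  have hm1 : L ^ m ≤ N := Nat.pow_log_le_self L (by omega)
  have hm2 : N < L ^ (m + 1) := Nat.lt_pow_succ_log_self hL N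
  -- the set
  set F : (Fin m → ℤ) → ℤ := fun d => 1 + ∑ j ∈ Finset.range m,
    (if h : j < m then d ⟨j, h⟩ else 0) * (L : ℤ) ^ j with hF
  set P := Fintype.piFinset (fun _ : Fin m => AL) with hP
  set A := P.image F with hA
  -- extension to ℕ-indexed digits
  have hDval : ∀ (d : Fin m → ℤ) (j : ℕ) (hj : j < m),
      (if h : j < m then d ⟨j, h⟩ else 0) = d ⟨j, hj⟩ := fun d j hj => dif_pos hj
  have hDbound : ∀ d ∈ P, ∀ j : ℕ,
      0 ≤ (if h : j < m then d ⟨j, h⟩ else 0) ∧ (if h : j < m then d ⟨j, h⟩ else 0) ≤ M := by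
    intro d hd j
    by_cases hj : j < m
    · rw [dif_pos hj]
      exact hMle _ ((Fintype.mem_piFinset.1 hd) ⟨j, hj⟩)
    · rw [dif_neg hj]; exact ⟨le_refl 0, hM0⟩
  -- injectivity of F on P
  have hinj : Set.InjOn F ↑P := by
    intro d hd d' hd' hFd
    have heq : ∑ j ∈ Finset.range m, (if h : j < m then d ⟨j, h⟩ else 0) * (L:ℤ) ^ j
        = ∑ j ∈ Finset.range m, (if h : j < m then d' ⟨j, h⟩ else 0) * (L:ℤ) ^ j := by
      have := hFd; simp only [hF] at this; linarith
    have hML : M < (L:ℤ) := by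
      have := Finset.mem_Icc.1 (hALsub (AL.max'_mem hne)); omega
    have := digitAux (L:ℤ) hLZ m _ _
      (fun j => (hDbound d (by exact_mod_cast hd) j).1)
      (fun j => lt_of_le_of_lt (hDbound d (by exact_mod_cast hd) j).2 hML)
      (fun j => (hDbound d' (by exact_mod_cast hd') j).1)
      (fun j => lt_of_le_of_lt (hDbound d' (by exact_mod_cast hd') j).2 hML) heq
    funext ⟨j, hj⟩
    have := this j hj
    rwa [hDval d j hj, hDval d' j hj] at this
  have hcard : A.card = c ^ m := by
    rw [hA, Finset.card_image_of_injOn hinj, hP, Fintype.card_piFinset]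
    simp [hcdef]
  refine ⟨A, ?_, ?_, ?_⟩
  · -- subset of [1, N]
    intro x hx
    obtain ⟨d, hd, rfl⟩ := Finset.mem_image.1 hx
    rw [Finset.mem_Icc]
    constructor
    · have : 0 ≤ ∑ j ∈ Finset.range m, (if h : j < m then d ⟨j, h⟩ else 0) * (L:ℤ) ^ j :=
        Finset.sum_nonneg fun j _ => mul_nonneg (hDbound d hd j).1 (by positivity)
      simp only [hF]; linarith
    · have hle : ∑ j ∈ Finset.range m, (if h : j < m then d ⟨j, h⟩ else 0) * (L:ℤ) ^ j
          ≤ ∑ j ∈ Finset.range m, ((L:ℤ) - 1) * (L:ℤ) ^ j := by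
        refine Finset.sum_le_sum fun j _ => mul_le_mul_of_nonneg_right ?_ (by positivity)
        have hb := (hDbound d hd j).2
        have : M ≤ (L:ℤ) - 1 := (Finset.mem_Icc.1 (hALsub (AL.max'_mem hne))).2
        omega
      have hgeo : ∑ j ∈ Finset.range m, ((L:ℤ) - 1) * (L:ℤ) ^ j = (L:ℤ) ^ m - 1 := by
        calc ∑ j ∈ Finset.range m, ((L:ℤ) - 1) * (L:ℤ) ^ j
            = (∑ j ∈ Finset.range m, (L:ℤ) ^ j) * ((L:ℤ) - 1) := by
              rw [Finset.sum_mul]; exact Finset.sum_congr rfl fun j _ => mul_comm _ _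
          _ = (L:ℤ) ^ m - 1 := geom_sum_mul (L:ℤ) m
      have hLN : (L:ℤ) ^ m ≤ (N:ℤ) := by exact_mod_cast hm1
      simp only [hF]
      have := hle.trans_eq hgeo
      omega
  · -- cardinality bound
    rw [hcard]
    have hNle : (N:ℝ) ≤ (L:ℝ) ^ (m + 1) := by exact_mod_cast hm2.le
    have hstep1 : (N:ℝ) ^ r ≤ ((L:ℝ) ^ (m + 1)) ^ r :=
      Real.rpow_le_rpow (by positivity) hNle hr0
    have hLmr : ((L:ℝ) ^ m) ^ r = (c:ℝ) ^ m := by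
      rw [← Real.rpow_natCast (L:ℝ) m, ← Real.rpow_natCast (c:ℝ) m,
        ← Real.rpow_mul hL0R.le, Real.rpow_def_of_pos hL0R, Real.rpow_def_of_pos hc0R]
      congr 1
      rw [hrdef]
      field_simp
    have hstep2 : ((L:ℝ) ^ (m + 1)) ^ r = (c:ℝ) ^ m * (L:ℝ) ^ r := by
      rw [pow_succ, Real.mul_rpow (by positivity) hL0R.le, hLmr]
    have hLr : (L:ℝ) ^ r ≤ (L:ℝ) := by
      nth_rewrite 2 [← Real.rpow_one (L:ℝ)]
      exact Real.rpow_le_rpow_of_exponent_le hL1R.le hr1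
    have : (N:ℝ) ^ r ≤ (c:ℝ) ^ m * (L:ℝ) := by
      calc (N:ℝ) ^ r ≤ ((L:ℝ) ^ (m+1)) ^ r := hstep1
        _ = (c:ℝ)^m * (L:ℝ)^r := hstep2
        _ ≤ (c:ℝ)^m * (L:ℝ) := by
            exact mul_le_mul_of_nonneg_left hLr (by positivity)
    rw [div_mul_eq_mul_div, one_mul, div_le_iff₀ hL0R]
    push_cast
    linarith
  · -- no nontrivial solutions
    intro x x' hx hx' heq
    have hxd : ∀ i, ∃ d ∈ P, F d = x i := fun i => Finset.mem_image.1 (hx i)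
    have hxd' : ∀ i, ∃ d ∈ P, F d = x' i := fun i => Finset.mem_image.1 (hx' i)
    choose d hd hdx using hxd
    choose d' hd' hdx' using hxd'
    set D : Fin k → ℕ → ℤ := fun i j => if h : j < m then d i ⟨j, h⟩ else 0 with hDdef
    set D' : Fin k → ℕ → ℤ := fun i j => if h : j < m then d' i ⟨j, h⟩ else 0 with hDdef'
    -- rewrite the equation
    have heq2 : ∑ j ∈ Finset.range m, (∑ i, a i * D i j) * (L:ℤ) ^ j
        = ∑ j ∈ Finset.range m, (∑ i, a i * D' i j) * (L:ℤ) ^ j := by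
      rw [← swapAux k m a (L:ℤ) D, ← swapAux k m a (L:ℤ) D']
      have hx1 : ∀ i, x i = 1 + ∑ j ∈ Finset.range m, D i j * (L:ℤ) ^ j := fun i =>
        (hdx i).symm
      have hx1' : ∀ i, x' i = 1 + ∑ j ∈ Finset.range m, D' i j * (L:ℤ) ^ j := fun i =>
        (hdx' i).symm
      simp_rw [hx1, hx1', mul_add, mul_one, Finset.sum_add_distrib] at heq
      linarith
    -- positive/negative parts
    set u : ℕ → ℤ := fun j => ∑ i, ((a i)⁺ * D i j + (a i)⁻ * D' i j) with hu
    set v : ℕ → ℤ := fun j => ∑ i, ((a i)⁺ * D' i j + (a i)⁻ * D i j) with hv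
    set t : ℕ → ℤ := fun j => ∑ i, (a i)⁻ * (D i j + D' i j) with ht
    have huv : ∀ j, u j = (∑ i, a i * D i j) + t j := by
      intro j
      rw [hu, ht, ← Finset.sum_add_distrib]
      refine Finset.sum_congr rfl fun i _ => ?_
      have h := posPart_sub_negPart (a i)
      linear_combination (D i j) * h
    have hvv : ∀ j, v j = (∑ i, a i * D' i j) + t j := by
      intro j
      rw [hv, ht, ← Finset.sum_add_distrib]
      refine Finset.sum_congr rfl fun i _ => ?_
      have h := posPart_sub_negPart (a i)
      linear_combination (D' i j) * h
    have hequv : ∑ j ∈ Finset.range m, u j * (L:ℤ) ^ j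
        = ∑ j ∈ Finset.range m, v j * (L:ℤ) ^ j := by
      simp_rw [huv, hvv, add_mul, Finset.sum_add_distrib, heq2]
    -- bounds on u, v
    have hbnd : ∀ (w : ℕ → ℤ), (∀ j, w j = ∑ i, ((a i)⁺ * D i j + (a i)⁻ * D' i j) ∨
        w j = ∑ i, ((a i)⁺ * D' i j + (a i)⁻ * D i j)) → (∀ j, 0 ≤ w j) ∧ (∀ j, w j < L) := by
      intro w hw
      have key : ∀ (E E' : Fin k → ℕ → ℤ), (∀ i j, 0 ≤ E i j ∧ E i j ≤ M) →
          (∀ i j, 0 ≤ E' i j ∧ E' i j ≤ M) → ∀ j,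
          0 ≤ ∑ i, ((a i)⁺ * E i j + (a i)⁻ * E' i j) ∧
          ∑ i, ((a i)⁺ * E i j + (a i)⁻ * E' i j) < L := by
        intro E E' hE hE' j
        constructor
        · exact Finset.sum_nonneg fun i _ => add_nonneg
            (mul_nonneg (posPart_nonneg _) (hE i j).1)
            (mul_nonneg (negPart_nonneg _) (hE' i j).1)
        · have hle : ∑ i, ((a i)⁺ * E i j + (a i)⁻ * E' i j) ≤ ∑ i, |a i| * M := by
            refine Finset.sum_le_sum fun i _ => ?_
            have h1 : (a i)⁺ * E i j ≤ (a i)⁺ * M :=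
              mul_le_mul_of_nonneg_left (hE i j).2 (posPart_nonneg _)
            have h2 : (a i)⁻ * E' i j ≤ (a i)⁻ * M :=
              mul_le_mul_of_nonneg_left (hE' i j).2 (negPart_nonneg _)
            have h3 := posPart_add_negPart (a i)
            nlinarith
          rw [← Finset.sum_mul] at hle
          exact lt_of_le_of_lt hle hmax
      have hDb : ∀ i j, 0 ≤ D i j ∧ D i j ≤ M := fun i j => hDbound (d i) (hd i) j
      have hDb' : ∀ i j, 0 ≤ D' i j ∧ D' i j ≤ M := fun i j => hDbound (d' i) (hd' i) j
      constructor
      · intro j; rcases hw j with h | h <;> rw [h]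
        · exact (key D D' hDb hDb' j).1
        · exact (key D' D hDb' hDb j).1
      · intro j; rcases hw j with h | h <;> rw [h]
        · exact (key D D' hDb hDb' j).2
        · exact (key D' D hDb' hDb j).2
    obtain ⟨hu0, hu1⟩ := hbnd u fun j => Or.inl rfl
    obtain ⟨hv0, hv1⟩ := hbnd v fun j => Or.inr rfl
    have hdig := digitAux (L:ℤ) hLZ m u v hu0 hu1 hv0 hv1 hequv
    -- conclude digit-wise
    have hdd : ∀ i, d i = d' i := by
      have hjj : ∀ j (hj : j < m), ∀ i, d i ⟨j, hj⟩ = d' i ⟨j, hj⟩ := by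
        intro j hj
        have hsj : ∑ i, a i * D i j = ∑ i, a i * D' i j := by
          have h1 := huv j
          have h2 := hvv j
          have h3 := hdig j hj
          linarith
        have happ := hAL (fun i => d i ⟨j, hj⟩) (fun i => d' i ⟨j, hj⟩)
          (fun i => Fintype.mem_piFinset.1 (hd i) ⟨j, hj⟩)
          (fun i => Fintype.mem_piFinset.1 (hd' i) ⟨j, hj⟩)
          (by
            have e1 : ∀ i, D i j = d i ⟨j, hj⟩ := fun i => dif_pos hj
            have e2 : ∀ i, D' i j = d' i ⟨j, hj⟩ := fun i => dif_pos hj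
            simp_rw [← e1, ← e2]; exact hsj)
        exact fun i => congrFun happ i
      intro i
      funext ⟨j, hj⟩
      exact hjj j hj i
    funext i
    rw [← hdx i, ← hdx' i, hdd i]
end

section
/- Let k ≥ 2 and m ≥ 2 be integers and N ≥ 1. Then there exists a set A ⊆ [N] with |A| ≥ N^{1/k} that contains no non-trivial solutions to the equation x₁ + m·x₂ + m²·x₃ + ⋯ + m^{k−1}·x_k = x₁' + m·x₂' + m²·x₃' + ⋯ + m^{k−1}·x_k'. -/
namespace Statement5Aux

/-- Spread base-`m` digits of `x` onto positions `0, k, 2k, ...` in base `m`. -/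
def f (m k x : ℕ) : ℕ := Nat.ofDigits (m ^ k) (Nat.digits m x)

lemma f_zero (m k : ℕ) : f m k 0 = 0 := by simp [f]

lemma f_rec (m k : ℕ) (hm : 2 ≤ m) (x : ℕ) :
    f m k x = x % m + m ^ k * f m k (x / m) := by
  rcases Nat.eq_zero_or_pos x with h | h
  · simp [h, f]
  · rw [f, Nat.digits_def' (by omega : 1 < m) h, Nat.ofDigits_cons, f]

lemma f_strict (m k : ℕ) (hm : 2 ≤ m) (hk : 1 ≤ k) :
    ∀ y x, x < y → f m k x < f m k y := by
  intro y
  induction y using Nat.strong_induction_on with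
  | _ y ih =>
    intro x hxy
    rw [f_rec m k hm x, f_rec m k hm y]
    rcases Nat.lt_or_ge (x / m) (y / m) with h | h
    · have h1 : f m k (x / m) < f m k (y / m) :=
        ih (y / m) (Nat.div_lt_self (by omega) (by omega)) _ h
      have h2 : x % m < m ^ k :=
        lt_of_lt_of_le (Nat.mod_lt x (by omega)) (Nat.le_self_pow (by omega) m)
      calc x % m + m ^ k * f m k (x / m)
          < m ^ k + m ^ k * f m k (x / m) := Nat.add_lt_add_right h2 _
        _ = m ^ k * (f m k (x / m) + 1) := by ring
        _ ≤ m ^ k * f m k (y / m) := Nat.mul_le_mul_left _ (by omega)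
        _ ≤ y % m + m ^ k * f m k (y / m) := Nat.le_add_left _ _
    · have hdiv : x / m = y / m := le_antisymm (Nat.div_le_div_right hxy.le) h
      have hmlt : x % m < y % m := by
        have hx := Nat.div_add_mod x m
        have hy := Nat.div_add_mod y m
        have : m * (x / m) = m * (y / m) := by rw [hdiv]
        omega
      rw [hdiv]
      exact Nat.add_lt_add_right hmlt _

lemma pow_add_le (a r k : ℕ) (ha : 1 ≤ a) (hk : 1 ≤ k) : a ^ k + r ≤ (a + r) ^ k := by
  induction k with
  | zero => omega
  | succ k ih =>
    rcases Nat.eq_zero_or_pos k with hk0 | hk0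
    · subst hk0; simp
    · have h1 := ih hk0
      calc a ^ (k + 1) + r = a ^ k * a + r := by rw [pow_succ]
        _ ≤ (a ^ k + r) * (a + r) := by
            have hra : r ≤ r * a := by
              calc r = r * 1 := by ring
                _ ≤ r * a := Nat.mul_le_mul_left r ha
            calc a ^ k * a + r ≤ a ^ k * a + r * a := Nat.add_le_add_left hra _
              _ = (a ^ k + r) * a := by ring
              _ ≤ (a ^ k + r) * (a + r) := Nat.mul_le_mul_left _ (Nat.le_add_right a r)
        _ ≤ (a + r) ^ k * (a + r) := Nat.mul_le_mul_right _ h1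
        _ = (a + r) ^ (k + 1) := by rw [pow_succ]

lemma f_le (m k : ℕ) (hm : 2 ≤ m) (hk : 1 ≤ k) : ∀ x, f m k x ≤ x ^ k := by
  intro x
  induction x using Nat.strong_induction_on with
  | _ x ih =>
    rcases Nat.lt_or_ge x m with h | h
    · rw [f_rec m k hm x, Nat.div_eq_of_lt h, Nat.mod_eq_of_lt h, f_zero,
        Nat.mul_zero, Nat.add_zero]
      exact Nat.le_self_pow (by omega) x
    · have hq : x / m < x := Nat.div_lt_self (by omega) (by omega)
      have h1 : f m k (x / m) ≤ (x / m) ^ k := ih _ hq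
      have h2 : m ^ k * f m k (x / m) ≤ (m * (x / m)) ^ k := by
        rw [mul_pow]; exact Nat.mul_le_mul_left _ h1
      have ha : 1 ≤ m * (x / m) := by
        have h3 : 1 ≤ x / m := (Nat.one_le_div_iff (by omega)).mpr h
        calc 1 ≤ m := by omega
          _ = m * 1 := (Nat.mul_one m).symm
          _ ≤ m * (x / m) := Nat.mul_le_mul_left _ h3
      have h3 := pow_add_le (m * (x / m)) (x % m) k ha hk
      have h4 : m * (x / m) + x % m = x := Nat.div_add_mod x m
      calc f m k x = x % m + m ^ k * f m k (x / m) := f_rec m k hm x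
        _ ≤ x % m + (m * (x / m)) ^ k := Nat.add_le_add_left h2 _
        _ = (m * (x / m)) ^ k + x % m := Nat.add_comm _ _
        _ ≤ (m * (x / m) + x % m) ^ k := h3
        _ = x ^ k := by rw [h4]

lemma sum_digits_lt (m : ℕ) (hm : 2 ≤ m) :
    ∀ (k : ℕ) (c : Fin k → ℕ), (∀ i, c i < m) → ∑ i, m ^ i.val * c i < m ^ k := by
  intro k
  induction k with
  | zero => intro c _; simp
  | succ k ih =>
    intro c hc
    rw [Fin.sum_univ_succ]
    have e : ∑ i : Fin k, m ^ (Fin.succ i).val * c i.succ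
        = m * ∑ i : Fin k, m ^ i.val * c i.succ := by
      rw [Finset.mul_sum]
      refine Finset.sum_congr rfl fun i _ => ?_
      rw [Fin.val_succ, pow_succ]; ring
    rw [e]
    have hS : ∑ i : Fin k, m ^ i.val * c i.succ < m ^ k := ih _ fun i => hc i.succ
    have h1 : m * (∑ i : Fin k, m ^ i.val * c i.succ) + m ≤ m * m ^ k := by
      calc m * (∑ i : Fin k, m ^ i.val * c i.succ) + m
          = m * ((∑ i : Fin k, m ^ i.val * c i.succ) + 1) := by ring
        _ ≤ m * m ^ k := Nat.mul_le_mul_left _ (by omega)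
    have h0 := hc 0
    have hps : m ^ (k + 1) = m * m ^ k := by rw [pow_succ]; ring
    simp only [Fin.val_zero, pow_zero, one_mul]
    rw [hps]
    omega

lemma digits_inj (m : ℕ) (hm : 2 ≤ m) : ∀ (k : ℕ) (c c' : Fin k → ℕ),
    (∀ i, c i < m) → (∀ i, c' i < m) →
    ∑ i, m ^ i.val * c i = ∑ i, m ^ i.val * c' i → c = c' := by
  intro k
  induction k with
  | zero => intro c c' _ _ _; funext i; exact i.elim0
  | succ k ih =>
    intro c c' hc hc' hsum
    rw [Fin.sum_univ_succ, Fin.sum_univ_succ] at hsum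
    have e : ∀ d : Fin (k+1) → ℕ, ∑ i : Fin k, m ^ (Fin.succ i).val * d i.succ
        = m * ∑ i : Fin k, m ^ i.val * d i.succ := by
      intro d
      rw [Finset.mul_sum]
      refine Finset.sum_congr rfl fun i _ => ?_
      rw [Fin.val_succ, pow_succ]; ring
    rw [e c, e c'] at hsum
    simp only [Fin.val_zero, pow_zero, one_mul] at hsum
    have h0 : c 0 = c' 0 := by
      have l1 : (c 0 + m * ∑ i : Fin k, m ^ i.val * c i.succ) % m = c 0 :=
        by rw [Nat.add_mul_mod_self_left, Nat.mod_eq_of_lt (hc 0)]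
      have l2 : (c' 0 + m * ∑ i : Fin k, m ^ i.val * c' i.succ) % m = c' 0 :=
        by rw [Nat.add_mul_mod_self_left, Nat.mod_eq_of_lt (hc' 0)]
      rw [← l1, ← l2, hsum]
    have hS : ∑ i : Fin k, m ^ i.val * c i.succ = ∑ i : Fin k, m ^ i.val * c' i.succ := by
      have := hsum
      rw [h0] at this
      exact Nat.eq_of_mul_eq_mul_left (by omega) (Nat.add_left_cancel this)
    have htail : (fun i : Fin k => c i.succ) = (fun i : Fin k => c' i.succ) :=
      ih _ _ (fun i => hc i.succ) (fun i => hc' i.succ) hS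
    funext i
    refine Fin.cases h0 (fun j => ?_) i
    exact congrFun htail j

lemma F_inj (m k : ℕ) (hm : 2 ≤ m) :
    ∀ (n : ℕ) (x x' : Fin k → ℕ), ∑ i, (x i + x' i) = n →
      ∑ i, m ^ i.val * f m k (x i) = ∑ i, m ^ i.val * f m k (x' i) → x = x' := by
  intro n
  induction n using Nat.strong_induction_on with
  | _ n ih =>
    intro x x' hn hs
    have key : ∀ y : Fin k → ℕ, ∑ i, m ^ i.val * f m k (y i)
        = (∑ i, m ^ i.val * (y i % m)) + m ^ k * ∑ i, m ^ i.val * f m k (y i / m) := by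
      intro y
      rw [Finset.mul_sum, ← Finset.sum_add_distrib]
      refine Finset.sum_congr rfl fun i _ => ?_
      rw [f_rec m k hm (y i)]; ring
    have low_lt : ∀ y : Fin k → ℕ, (∑ i, m ^ i.val * (y i % m)) < m ^ k := fun y =>
      sum_digits_lt m hm k _ (fun i => Nat.mod_lt _ (by omega))
    rw [key x, key x'] at hs
    have hLow : ∑ i, m ^ i.val * (x i % m) = ∑ i, m ^ i.val * (x' i % m) := by
      have l1 : ((∑ i, m ^ i.val * (x i % m)) + m ^ k * ∑ i, m ^ i.val * f m k (x i / m))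
          % m ^ k = ∑ i, m ^ i.val * (x i % m) := by
        rw [Nat.add_mul_mod_self_left, Nat.mod_eq_of_lt (low_lt x)]
      have l2 : ((∑ i, m ^ i.val * (x' i % m)) + m ^ k * ∑ i, m ^ i.val * f m k (x' i / m))
          % m ^ k = ∑ i, m ^ i.val * (x' i % m) := by
        rw [Nat.add_mul_mod_self_left, Nat.mod_eq_of_lt (low_lt x')]
      rw [← l1, ← l2, hs]
    have hHigh : ∑ i, m ^ i.val * f m k (x i / m) = ∑ i, m ^ i.val * f m k (x' i / m) := by
      rw [hLow] at hs
      exact Nat.eq_of_mul_eq_mul_left (by positivity) (Nat.add_left_cancel hs)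
    have hmod : (fun i : Fin k => x i % m) = (fun i : Fin k => x' i % m) :=
      digits_inj m hm k _ _ (fun i => Nat.mod_lt _ (by omega))
        (fun i => Nat.mod_lt _ (by omega)) hLow
    rcases Nat.eq_zero_or_pos n with hn0 | hn0
    · subst hn0
      have hz := (Finset.sum_eq_zero_iff).mp hn
      funext i
      have := hz i (Finset.mem_univ i)
      omega
    · have hex : ∃ i, 0 < x i + x' i := by
        by_contra hcon
        push_neg at hcon
        have : ∑ i, (x i + x' i) = 0 :=
          Finset.sum_eq_zero fun i _ => by have := hcon i; omega
        omega
      obtain ⟨i₀, hi₀⟩ := hex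
      have hstrict : ∑ i, (x i / m + x' i / m) < n := by
        rw [← hn]
        refine Finset.sum_lt_sum (fun i _ => ?_) ⟨i₀, Finset.mem_univ i₀, ?_⟩
        · have := Nat.div_le_self (x i) m
          have := Nat.div_le_self (x' i) m
          omega
        · rcases Nat.eq_zero_or_pos (x i₀) with h0 | h0
          · have h1 : 0 < x' i₀ := by omega
            have h2 := Nat.div_lt_self h1 (show 1 < m by omega)
            have h3 := Nat.div_le_self (x i₀) m
            omega
          · have h2 := Nat.div_lt_self h0 (show 1 < m by omega)
            have h3 := Nat.div_le_self (x' i₀) m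
            omega
      have hdiv : (fun i : Fin k => x i / m) = (fun i : Fin k => x' i / m) :=
        ih _ hstrict _ _ rfl hHigh
      funext i
      have e1 := congrFun hmod i
      have e2 := congrFun hdiv i
      have d1 := Nat.div_add_mod (x i) m
      have d2 := Nat.div_add_mod (x' i) m
      calc x i = m * (x i / m) + x i % m := d1.symm
        _ = m * (x' i / m) + x' i % m := by rw [e1, e2]
        _ = x' i := d2

end Statement5Aux

open Statement5Aux in
/-- For integers `k, m ≥ 2` and `N ≥ 1` there exists `A ⊆ [N]` with
`|A| ≥ N^{1/k}` containing no non-trivial solutions to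
`x₁ + m·x₂ + ⋯ + m^{k−1}·x_k = x₁' + m·x₂' + ⋯ + m^{k−1}·x_k'`. -/
theorem statement5 (k m N : ℕ) (hk : 2 ≤ k) (hm : 2 ≤ m) (hN : 1 ≤ N) :
    ∃ A : Finset ℤ, A ⊆ Finset.Icc 1 (N : ℤ) ∧
      (N : ℝ) ^ ((1 : ℝ) / k) ≤ A.card ∧
      ∀ x x' : Fin k → ℤ, (∀ i, x i ∈ A) → (∀ i, x' i ∈ A) →
        ∑ i, (m : ℤ) ^ i.val * x i = ∑ i, (m : ℤ) ^ i.val * x' i → x = x' := by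
  have hex : ∃ n : ℕ, N ≤ n ^ k := ⟨N, Nat.le_self_pow (by omega) N⟩
  set n := Nat.find hex with hn_def
  have hn : N ≤ n ^ k := Nat.find_spec hex
  have hn0 : 0 < n := by
    rcases Nat.eq_zero_or_pos n with h | h
    · exfalso; rw [h, Nat.zero_pow (by omega)] at hn; omega
    · exact h
  have hmin : (n - 1) ^ k < N := by
    have := Nat.find_min hex (show n - 1 < n by omega)
    omega
  -- the set
  refine ⟨(Finset.range n).image (fun x => ((1 + f m k x : ℕ) : ℤ)), ?_, ?_, ?_⟩
  · -- subset of Icc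
    intro a ha
    obtain ⟨b, hb, rfl⟩ := Finset.mem_image.mp ha
    rw [Finset.mem_range] at hb
    have h1 : f m k b ≤ b ^ k := f_le m k hm (by omega) b
    have h2 : b ^ k ≤ (n - 1) ^ k := Nat.pow_le_pow_left (by omega) k
    have h3 : 1 + f m k b ≤ N := by omega
    rw [Finset.mem_Icc]
    constructor
    · exact_mod_cast Nat.one_le_iff_ne_zero.mpr (by omega)
    · exact_mod_cast h3
  · -- cardinality
    have hinj : Function.Injective (fun x : ℕ => ((1 + f m k x : ℕ) : ℤ)) := by
      intro a b hab
      simp only [Nat.cast_inj] at hab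
      by_contra hne
      rcases Nat.lt_or_ge a b with h | h
      · have := f_strict m k hm (by omega) b a h; omega
      · have hba : b < a := by omega
        have := f_strict m k hm (by omega) a b hba; omega
    rw [Finset.card_image_of_injective _ hinj, Finset.card_range]
    have h1 : (N : ℝ) ≤ (n : ℝ) ^ (k : ℕ) := by exact_mod_cast hn
    have h2 : (N : ℝ) ^ ((1 : ℝ) / k) ≤ ((n : ℝ) ^ (k : ℕ)) ^ ((1 : ℝ) / k) :=
      Real.rpow_le_rpow (by positivity) h1 (by positivity)
    calc (N : ℝ) ^ ((1 : ℝ) / k) ≤ ((n : ℝ) ^ (k : ℕ)) ^ ((1 : ℝ) / k) := h2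
      _ = (n : ℝ) ^ ((k : ℝ) * ((1 : ℝ) / k)) := by
          rw [← Real.rpow_natCast (n : ℝ) k, ← Real.rpow_mul (by positivity)]
      _ = (n : ℝ) := by
          rw [mul_one_div, div_self (by positivity : (k : ℝ) ≠ 0), Real.rpow_one]
  · -- no nontrivial solutions
    intro x x' hx hx' heq
    have hch : ∀ i : Fin k, ∃ u : ℕ, u ∈ Finset.range n ∧ ((1 + f m k u : ℕ) : ℤ) = x i :=
      fun i => Finset.mem_image.mp (hx i)
    have hch' : ∀ i : Fin k, ∃ u : ℕ, u ∈ Finset.range n ∧ ((1 + f m k u : ℕ) : ℤ) = x' i :=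
      fun i => Finset.mem_image.mp (hx' i)
    choose u hu1 hu2 using hch
    choose u' hu1' hu2' using hch'
    have hNat : ∑ i, m ^ i.val * (1 + f m k (u i)) = ∑ i, m ^ i.val * (1 + f m k (u' i)) := by
      have hcast : ((∑ i, m ^ i.val * (1 + f m k (u i)) : ℕ) : ℤ)
          = ((∑ i, m ^ i.val * (1 + f m k (u' i)) : ℕ) : ℤ) := by
        have heq' := heq
        simp only [← hu2, ← hu2'] at heq'
        push_cast at heq' ⊢
        exact heq'
      exact_mod_cast hcast
    have expand : ∀ v : Fin k → ℕ, ∑ i, m ^ i.val * (1 + f m k (v i))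
        = (∑ i : Fin k, m ^ i.val) + ∑ i, m ^ i.val * f m k (v i) := by
      intro v
      rw [← Finset.sum_add_distrib]
      refine Finset.sum_congr rfl fun i _ => ?_
      ring
    rw [expand u, expand u'] at hNat
    have hF : ∑ i, m ^ i.val * f m k (u i) = ∑ i, m ^ i.val * f m k (u' i) :=
      Nat.add_left_cancel hNat
    have huu : u = u' := F_inj m k hm _ u u' rfl hF
    funext i
    rw [← hu2 i, ← hu2' i, huu]
end

section
/- Let a, b be coprime integers with |a| < |b| and |b| ≥ 2, and let N > 0 be an integer. Then there exists a set A ⊆ [N] with |A| ≥ N^r that contains no non-trivial solutions to the equation a·x₁ + b·x₂ = a·x₁' + b·x₂', where r = log|b| / log(1 + (|a|+|b|)(|b|−1)). Moreover, r ≥ 1/2 − 1/log|b|. -/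
private lemma rpow_superadd {x y p : ℝ} (hx : 0 ≤ x) (hy : 0 ≤ y) (hp : 1 ≤ p) :
    x ^ p + y ^ p ≤ (x + y) ^ p := by
  have h := NNReal.add_rpow_le_rpow_add x.toNNReal y.toNNReal hp
  rw [← NNReal.coe_le_coe] at h
  push_cast at h
  rwa [Real.coe_toNNReal x hx, Real.coe_toNNReal y hy] at h

private def phiD (d q n : ℕ) : ℕ := Nat.ofDigits q (Nat.digits d n)

private lemma phiD_rec (d q : ℕ) (hd : 2 ≤ d) (n : ℕ) :
    phiD d q n = n % d + q * phiD d q (n / d) := by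
  rcases eq_or_ne n 0 with rfl | h
  · simp [phiD]
  · unfold phiD
    rw [Nat.digits_def' (by omega : 1 < d) (Nat.pos_of_ne_zero h), Nat.ofDigits_cons]

private lemma le_phiD (d q : ℕ) (hd : 2 ≤ d) (hq : d ≤ q) : ∀ n, n ≤ phiD d q n := by
  intro n; induction n using Nat.strong_induction_on with
  | _ n ih =>
    rcases eq_or_ne n 0 with rfl | h
    · simp [phiD]
    · rw [phiD_rec d q hd]
      have h1 : n / d < n := Nat.div_lt_self (Nat.pos_of_ne_zero h) (by omega)
      have h2' := ih _ h1
      have h3 := Nat.div_add_mod n d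
      have h4 : d * (n / d) ≤ q * phiD d q (n / d) := Nat.mul_le_mul hq h2'
      omega

private lemma phiD_le_rpow (d q : ℕ) (hd : 2 ≤ d) (hq : d ≤ q) :
    ∀ n, (phiD d q n : ℝ) ≤ (n : ℝ) ^ (Real.log q / Real.log d) := by
  set α := Real.log q / Real.log d with hαdef
  have hd1 : (1:ℝ) < (d:ℝ) := by exact_mod_cast (by omega : 1 < d)
  have hlogd : 0 < Real.log d := Real.log_pos hd1
  have hα1 : 1 ≤ α := by
    rw [hαdef, le_div_iff₀ hlogd, one_mul]
    exact Real.log_le_log (by positivity) (by exact_mod_cast hq)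
  have hα0 : α ≠ 0 := by linarith
  have hdpow : (d:ℝ) ^ α = (q:ℝ) := by
    rw [hαdef, Real.rpow_def_of_pos (by positivity : (0:ℝ) < (d:ℝ)),
      mul_comm, div_mul_cancel₀ _ (ne_of_gt hlogd), Real.exp_log]
    have : (0:ℕ) < q := by omega
    exact_mod_cast this
  intro n; induction n using Nat.strong_induction_on with
  | _ n ih =>
    rcases eq_or_ne n 0 with rfl | h
    · simp [phiD, Real.zero_rpow hα0]
    · have hlt : n / d < n := Nat.div_lt_self (Nat.pos_of_ne_zero h) (by omega)
      have IH := ih _ hlt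
      rw [phiD_rec d q hd n]
      have hn : n = d * (n / d) + n % d := (Nat.div_add_mod n d).symm
      have hs : ((n % d : ℕ):ℝ) ≤ ((n % d : ℕ):ℝ) ^ α := by
        rcases Nat.eq_zero_or_pos (n % d) with h0 | h0
        · rw [h0]; simp [Real.zero_rpow hα0]
        · have h1 : (1:ℝ) ≤ ((n % d : ℕ):ℝ) := by exact_mod_cast h0
          calc ((n % d : ℕ):ℝ) = ((n % d : ℕ):ℝ) ^ (1:ℝ) := (Real.rpow_one _).symm
          _ ≤ _ := Real.rpow_le_rpow_of_exponent_le h1 hα1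
      push_cast
      calc ((n % d : ℕ):ℝ) + (q:ℝ) * (phiD d q (n / d) : ℝ)
          ≤ ((n % d : ℕ):ℝ) ^ α + (q:ℝ) * ((n / d : ℕ):ℝ) ^ α := by
            have hq0 : (0:ℝ) ≤ (q:ℝ) := by positivity
            nlinarith [IH, hs]
        _ = ((n % d : ℕ):ℝ) ^ α + ((d:ℝ) * ((n / d : ℕ):ℝ)) ^ α := by
            rw [Real.mul_rpow (by positivity) (by positivity), hdpow]
        _ ≤ (((n % d : ℕ):ℝ) + (d:ℝ) * ((n / d : ℕ):ℝ)) ^ α :=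
            rpow_superadd (by positivity) (by positivity) hα1
        _ = (n:ℝ) ^ α := by
            congr 1
            conv_rhs => rw [hn]
            push_cast; ring

private lemma key_lemma (a b : ℤ) (d q : ℕ) (hco : IsCoprime a b) (hd : d = b.natAbs)
    (h2 : 2 ≤ d) (hq : q = 1 + (a.natAbs + b.natAbs) * (d - 1)) :
    ∀ s : ℕ, ∀ u v u' v' : ℕ, u + v + u' + v' ≤ s →
      a * (phiD d q u : ℤ) + b * (phiD d q v : ℤ)
        = a * (phiD d q u' : ℤ) + b * (phiD d q v' : ℤ) →
      u = u' ∧ v = v' := by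
  have hqZ : (q:ℤ) = (|a| + |b|) * ((d:ℤ) - 1) + 1 := by
    rw [hq, Int.abs_eq_natAbs, Int.abs_eq_natAbs]
    push_cast [Nat.cast_sub (show 1 ≤ d by omega)]
    ring
  have hdb : (d:ℤ) = |b| := by rw [hd, Int.abs_eq_natAbs]
  have habs : 0 ≤ |a| := abs_nonneg a
  have hdZ : (2:ℤ) ≤ (d:ℤ) := by exact_mod_cast h2
  intro s
  induction s with
  | zero => intro u v u' v' hs _; omega
  | succ s IH =>
    intro u v u' v' hs E
    rcases Nat.eq_zero_or_pos (u + v + u' + v') with h0 | hpos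
    · omega
    · rw [phiD_rec d q h2 u, phiD_rec d q h2 v, phiD_rec d q h2 u',
        phiD_rec d q h2 v'] at E
      push_cast at E
      set U := (phiD d q (u/d) : ℤ) with hU
      set V := (phiD d q (v/d) : ℤ) with hV
      set U' := (phiD d q (u'/d) : ℤ) with hU'
      set V' := (phiD d q (v'/d) : ℤ) with hV'
      set e := (u:ℤ) % (d:ℤ) - (u':ℤ) % (d:ℤ) with he
      set f := (v:ℤ) % (d:ℤ) - (v':ℤ) % (d:ℤ) with hf
      set K : ℤ := (a * U' + b * V') - (a * U + b * V) with hKdef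
      have hE2 : a * e + b * f = (q:ℤ) * K := by
        rw [he, hf, hKdef]; linear_combination E
      have hm1 : ((u % d : ℕ):ℤ) = (u:ℤ) % (d:ℤ) := Int.natCast_mod u d
      have hm2 : ((v % d : ℕ):ℤ) = (v:ℤ) % (d:ℤ) := Int.natCast_mod v d
      have hm3 : ((u' % d : ℕ):ℤ) = (u':ℤ) % (d:ℤ) := Int.natCast_mod u' d
      have hm4 : ((v' % d : ℕ):ℤ) = (v':ℤ) % (d:ℤ) := Int.natCast_mod v' d
      have hb1 : u % d < d := Nat.mod_lt u (by omega)
      have hb2 : v % d < d := Nat.mod_lt v (by omega)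
      have hb3 : u' % d < d := Nat.mod_lt u' (by omega)
      have hb4 : v' % d < d := Nat.mod_lt v' (by omega)
      have heu : |e| ≤ (d:ℤ) - 1 := by rw [abs_le, he, ← hm1, ← hm3]; omega
      have hev : |f| ≤ (d:ℤ) - 1 := by rw [abs_le, hf, ← hm2, ← hm4]; omega
      have hbd : |a * e + b * f| ≤ (q:ℤ) - 1 := by
        calc |a * e + b * f| ≤ |a * e| + |b * f| := abs_add_le _ _
          _ = |a| * |e| + |b| * |f| := by rw [abs_mul, abs_mul]
          _ ≤ |a| * ((d:ℤ) - 1) + |b| * ((d:ℤ) - 1) := by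
              gcongr
          _ = (q:ℤ) - 1 := by rw [hqZ]; ring
      have hK0 : K = 0 := by
        by_contra hne
        have h1 : 1 ≤ |K| := Int.one_le_abs hne
        have hq1 : (1:ℤ) ≤ (q:ℤ) := by
          have : 0 < q := by rw [hq]; omega
          exact_mod_cast this
        have h3 : (q:ℤ) ≤ |(q:ℤ) * K| := by
          rw [abs_mul, abs_of_nonneg (by linarith : (0:ℤ) ≤ (q:ℤ))]
          exact le_mul_of_one_le_right (by linarith) h1
        rw [← hE2] at h3
        linarith
      have hE3 : a * e + b * f = 0 := by rw [hE2, hK0, mul_zero]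
      have hbdvd : b ∣ e := hco.symm.dvd_of_dvd_mul_left ⟨-f, by linarith⟩
      have he0 : e = 0 := by
        by_contra hne
        have := Int.le_of_dvd (abs_pos.mpr hne) ((abs_dvd _ _).mpr ((dvd_abs _ _).mpr hbdvd))
        omega
      have hb0 : b ≠ 0 := by
        intro hb; rw [hb] at hdb; simp at hdb; omega
      have hf0 : f = 0 := by
        have hbf : b * f = 0 := by rw [he0] at hE3; linarith
        rcases mul_eq_zero.mp hbf with h | h
        · exact absurd h hb0
        · exact h
      have hrec : a * U + b * V = a * U' + b * V' := by
        have := hK0; rw [hKdef] at this; linarith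
      have hsum : u/d + v/d + u'/d + v'/d ≤ s := by
        have d1 := Nat.div_le_self u d
        have d2 := Nat.div_le_self v d
        have d3 := Nat.div_le_self u' d
        have d4 := Nat.div_le_self v' d
        have h4 : 0 < u ∨ 0 < v ∨ 0 < u' ∨ 0 < v' := by omega
        rcases h4 with h | h | h | h
        · have := Nat.div_lt_self h (show 1 < d by omega); omega
        · have := Nat.div_lt_self h (show 1 < d by omega); omega
        · have := Nat.div_lt_self h (show 1 < d by omega); omega
        · have := Nat.div_lt_self h (show 1 < d by omega); omega
      obtain ⟨h5, h6⟩ := IH (u/d) (v/d) (u'/d) (v'/d) hsum hrec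
      have hu := Nat.div_add_mod u d
      have hu' := Nat.div_add_mod u' d
      have hv := Nat.div_add_mod v d
      have hv' := Nat.div_add_mod v' d
      have hemod : u % d = u' % d := by
        have h7 : ((u % d : ℕ):ℤ) = ((u' % d : ℕ):ℤ) := by
          rw [hm1, hm3]; rw [he] at he0; linarith
        exact_mod_cast h7
      have hfmod : v % d = v' % d := by
        have h7 : ((v % d : ℕ):ℤ) = ((v' % d : ℕ):ℤ) := by
          rw [hm2, hm4]; rw [hf] at hf0; linarith
        exact_mod_cast h7
      refine ⟨?_, ?_⟩
      · rw [h5, hemod] at hu; omega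
      · rw [h6, hfmod] at hv; omega


/-- Let `a, b` be coprime integers with `|a| < |b|`, `|b| ≥ 2`, and `N > 0`.
Then there is `A ⊆ [N]` with `|A| ≥ N^r`, `r = log|b| / log(1 + (|a|+|b|)(|b|−1))`,
containing no non-trivial solutions to `a·x₁ + b·x₂ = a·x₁' + b·x₂'`.
Moreover `r ≥ 1/2 − 1/log|b|`. -/
theorem statement6 (a b : ℤ) (hco : IsCoprime a b) (h1 : |a| < |b|) (h2 : 2 ≤ |b|)
    (N : ℕ) (hN : 0 < N) :
    ∃ A : Finset ℤ, A ⊆ Finset.Icc 1 (N : ℤ) ∧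
      (N : ℝ) ^ (Real.log ((|b| : ℤ) : ℝ) /
          Real.log (1 + ((|a| : ℝ) + (|b| : ℝ)) * ((|b| : ℝ) - 1))) ≤ A.card ∧
      (∀ x₁ x₂ x₁' x₂' : ℤ, x₁ ∈ A → x₂ ∈ A → x₁' ∈ A → x₂' ∈ A →
        a * x₁ + b * x₂ = a * x₁' + b * x₂' → x₁ = x₁' ∧ x₂ = x₂') ∧
      (1 : ℝ) / 2 - 1 / Real.log ((|b| : ℤ) : ℝ) ≤
        Real.log ((|b| : ℤ) : ℝ) / Real.log (1 + ((|a| : ℝ) + (|b| : ℝ)) * ((|b| : ℝ) - 1)) := by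
  classical
  set d : ℕ := b.natAbs with hddef
  set q : ℕ := 1 + (a.natAbs + b.natAbs) * (d - 1) with hqdef
  have h2' : 2 ≤ d := by
    rw [Int.abs_eq_natAbs] at h2; exact_mod_cast h2
  have ha' : a.natAbs < d := by
    rw [Int.abs_eq_natAbs, Int.abs_eq_natAbs] at h1
    rw [hddef]; exact_mod_cast h1
  have hdq : d ≤ q := by
    have h3 : d ≤ (a.natAbs + b.natAbs) * (d - 1) + 1 := by
      calc d ≤ (a.natAbs + b.natAbs) * 1 := by omega
        _ ≤ (a.natAbs + b.natAbs) * (d - 1) := Nat.mul_le_mul_left _ (by omega)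
        _ ≤ (a.natAbs + b.natAbs) * (d - 1) + 1 := by omega
    omega
  have cast1 : ((|b| : ℤ) : ℝ) = (d : ℝ) := by
    rw [hddef]; push_cast [Nat.cast_natAbs]; rfl
  have cast2 : 1 + (|(a:ℝ)| + |(b:ℝ)|) * (|(b:ℝ)| - 1) = (q : ℝ) := by
    rw [hqdef, hddef]
    push_cast [Nat.cast_natAbs, Nat.cast_sub (show 1 ≤ b.natAbs from by omega)]
    ring
  rw [cast1, cast2]
  have hd1R : (1:ℝ) < (d:ℝ) := by exact_mod_cast (show 1 < d by omega)
  have hlogd : 0 < Real.log d := Real.log_pos hd1R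
  have hlogq : 0 < Real.log q := Real.log_pos (by exact_mod_cast (show 1 < q by omega))
  have hr0 : 0 ≤ Real.log (d:ℝ) / Real.log (q:ℝ) := le_of_lt (div_pos hlogd hlogq)
  have hex : ∃ m, N ≤ phiD d q m := ⟨N, le_phiD d q h2' hdq N⟩
  set m := Nat.find hex with hmdef
  have hm : N ≤ phiD d q m := Nat.find_spec hex
  have hmlt : ∀ n < m, phiD d q n < N := fun n hn =>
    Nat.lt_of_not_le (Nat.find_min hex hn)
  have hkey := key_lemma a b d q hco hddef h2' hqdef
  have hinj : Function.Injective (fun n : ℕ => (1 + phiD d q n : ℤ)) := by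
    intro n n' h
    simp only at h
    have hphi : (phiD d q n : ℤ) = (phiD d q n' : ℤ) := by omega
    have heq : a * (phiD d q n : ℤ) + b * (phiD d q 0 : ℤ)
        = a * (phiD d q n' : ℤ) + b * (phiD d q 0 : ℤ) := by rw [hphi]
    exact (hkey (n + 0 + n' + 0) n 0 n' 0 le_rfl heq).1
  refine ⟨(Finset.range m).image (fun n => (1 + phiD d q n : ℤ)), ?_, ?_, ?_, ?_⟩
  · intro x hx
    simp only [Finset.mem_image, Finset.mem_range] at hx
    obtain ⟨n, hn, rfl⟩ := hx
    have h5 := hmlt n hn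
    simp only [Finset.mem_Icc]
    constructor
    · omega
    · have : (phiD d q n : ℤ) < (N:ℤ) := by exact_mod_cast h5
      omega
  · rw [Finset.card_image_of_injective _ hinj, Finset.card_range]
    have hNle : (N:ℝ) ≤ ((m:ℝ)) ^ (Real.log q / Real.log d) :=
      le_trans (by exact_mod_cast hm) (phiD_le_rpow d q h2' hdq m)
    calc (N:ℝ) ^ (Real.log (d:ℝ) / Real.log (q:ℝ))
        ≤ ((m:ℝ) ^ (Real.log q / Real.log d)) ^ (Real.log (d:ℝ) / Real.log (q:ℝ)) :=
          Real.rpow_le_rpow (Nat.cast_nonneg N) hNle hr0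
      _ = (m:ℝ) ^ ((Real.log q / Real.log d) * (Real.log (d:ℝ) / Real.log (q:ℝ))) :=
          (Real.rpow_mul (Nat.cast_nonneg m) _ _).symm
      _ = (m:ℝ) := by
          have hone : (Real.log (q:ℝ) / Real.log (d:ℝ)) * (Real.log (d:ℝ) / Real.log (q:ℝ)) = 1 := by
            field_simp
          rw [hone, Real.rpow_one]
  · intro x₁ x₂ x₁' x₂' hx1 hx2 hx1' hx2' hEq
    simp only [Finset.mem_image, Finset.mem_range] at hx1 hx2 hx1' hx2'
    obtain ⟨u, hu, rfl⟩ := hx1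
    obtain ⟨v, hv, rfl⟩ := hx2
    obtain ⟨u', hu', rfl⟩ := hx1'
    obtain ⟨v', hv', rfl⟩ := hx2'
    have heq2 : a * (phiD d q u : ℤ) + b * (phiD d q v : ℤ)
        = a * (phiD d q u' : ℤ) + b * (phiD d q v' : ℤ) := by ring_nf; ring_nf at hEq; linarith
    obtain ⟨e1, e2⟩ := hkey (u + v + u' + v') u v u' v' le_rfl heq2
    subst e1; subst e2; exact ⟨rfl, rfl⟩
  · -- final bound
    have hq2d : (q:ℝ) ≤ 2 * (d:ℝ) ^ (2:ℕ) := by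
      have hnat : q ≤ 2 * d ^ 2 := by
        have hb' : b.natAbs = d := hddef.symm
        obtain ⟨e, hde⟩ : ∃ e, d = e + 2 := ⟨d - 2, by omega⟩
        rw [hqdef, hb', hde]
        have ha2 : a.natAbs ≤ e + 1 := by omega
        have : (e + 2) - 1 = e + 1 := by omega
        rw [this]
        nlinarith [ha2]
      exact_mod_cast hnat
    have hlq : Real.log q ≤ Real.log 2 + 2 * Real.log d := by
      calc Real.log q ≤ Real.log (2 * (d:ℝ) ^ (2:ℕ)) :=
            Real.log_le_log (by positivity) hq2d
        _ = Real.log 2 + 2 * Real.log d := by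
            rw [Real.log_mul (by norm_num) (by positivity), Real.log_pow]
            norm_num
    rw [le_div_iff₀ hlogq]
    set L := Real.log (d:ℝ) with hLdef
    rcases le_or_gt L 2 with hL | hL
    · have h0 : (1:ℝ)/2 - 1/L ≤ 0 := by
        rw [sub_nonpos, div_le_div_iff₀ (by norm_num) hlogd]
        linarith
      nlinarith
    · have hinvpos : 0 < 1/L := by positivity
      have hLL : (1/L) * L = 1 := by field_simp
      nlinarith [Real.log_two_gt_d9, Real.log_two_lt_d9, mul_pos hinvpos (Real.log_pos (by norm_num : (1:ℝ) < 2))]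
end

section
/- Let a, b be coprime integers with |a| < |b| and |b| ≥ 2, and let N > 0 be an integer. Then there exists a set A ⊆ [N] with |A| ≥ N^{log 6 / log 56} that contains no non-trivial solutions to the equation a·x₁ + b·x₂ = a·x₁' + b·x₂'. -/
open Real Finset

/-- digits of `y` in base `q` are all `≤ d` -/
def GoodD (q d y : ℕ) : Prop := ∀ i, y / q^i % q ≤ d

lemma goodD_zero (q d : ℕ) : GoodD q d 0 := by intro i; simp

lemma goodD_iff (q d y : ℕ) : GoodD q d y ↔ (y % q ≤ d ∧ GoodD q d (y / q)) := by
  constructor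
  · intro h
    refine ⟨by simpa using h 0, fun i => ?_⟩
    rw [Nat.div_div_eq_div_mul, ← pow_succ']
    exact h (i+1)
  · rintro ⟨h0, h⟩ i
    cases i with
    | zero => simpa using h0
    | succ i =>
      have := h i
      rwa [Nat.div_div_eq_div_mul, ← pow_succ'] at this


noncomputable def GSet (q d N : ℕ) : Finset ℕ :=
  @Finset.filter _ (GoodD q d) (Classical.decPred _) (Finset.range N)

lemma mem_GSet {q d N y : ℕ} : y ∈ GSet q d N ↔ y < N ∧ GoodD q d y := by
  simp [GSet, Finset.mem_filter, Finset.mem_range]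

lemma goodD_mul_add {q d z c : ℕ} (hq : 2 ≤ q) (hc : c < q) :
    GoodD q d (q * z + c) ↔ (c ≤ d ∧ GoodD q d z) := by
  rw [goodD_iff]
  have h1 : (q * z + c) % q = c := by
    simp [Nat.mul_add_mod, Nat.mod_eq_of_lt hc]
  have h2 : (q * z + c) / q = z := by
    rw [Nat.mul_add_div (by omega), Nat.div_eq_of_lt hc]; omega
  rw [h1, h2]

lemma memA1 (q d M : ℕ) (hq : 2 ≤ q) (hd : d < q) (y : ℕ) :
    (y ∈ ((GSet q d M) ×ˢ (Finset.range (d+1))).image (fun p => q * p.1 + p.2))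
      ↔ (y / q < M ∧ y % q ≤ d ∧ GoodD q d (y/q)) := by
  simp only [Finset.mem_image, Finset.mem_product, mem_GSet, Finset.mem_range, Prod.exists]
  constructor
  · rintro ⟨z, c, ⟨⟨hzM, hgz⟩, hc⟩, rfl⟩
    have h1 : (q * z + c) % q = c := by
      simp [Nat.mul_add_mod, Nat.mod_eq_of_lt (by omega : c < q)]
    have h2 : (q * z + c) / q = z := by
      rw [Nat.mul_add_div (by omega), Nat.div_eq_of_lt (by omega : c < q)]; omega
    rw [h1, h2]; exact ⟨hzM, by omega, hgz⟩
  · rintro ⟨h1, h2, h3⟩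
    exact ⟨y / q, y % q, ⟨⟨h1, h3⟩, by omega⟩, Nat.div_add_mod y q⟩

lemma cardA1 (q d M : ℕ) (hq : 2 ≤ q) (hd : d < q) :
    (((GSet q d M) ×ˢ (Finset.range (d+1))).image (fun p => q * p.1 + p.2)).card
      = (d+1) * (GSet q d M).card := by
  rw [Finset.card_image_of_injOn, Finset.card_product, Finset.card_range, mul_comm]
  rintro ⟨z1, c1⟩ h1 ⟨z2, c2⟩ h2 heq
  simp only [Finset.coe_product, Set.mem_prod, Finset.mem_coe, mem_GSet, Finset.mem_range] at h1 h2
  change q * z1 + c1 = q * z2 + c2 at heq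
  have e1 : (q * z1 + c1) / q = z1 := by
    rw [Nat.mul_add_div (by omega), Nat.div_eq_of_lt (by omega : c1 < q)]; omega
  have e2 : (q * z2 + c2) / q = z2 := by
    rw [Nat.mul_add_div (by omega), Nat.div_eq_of_lt (by omega : c2 < q)]; omega
  have hz : z1 = z2 := by rw [← e1, ← e2, heq]
  subst hz
  have hc : c1 = c2 := by omega
  simp [hc]

lemma GSet_rec_bad (q d M e : ℕ) (hq : 2 ≤ q) (hd : d < q) (he : e ≤ q)
    (hg : ¬ GoodD q d M) :
    (GSet q d (q * M + e)).card = (d+1) * (GSet q d M).card := by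
  rw [← cardA1 q d M hq hd]
  congr 1
  ext y
  rw [mem_GSet, memA1 q d M hq hd]
  constructor
  · rintro ⟨hy, hgood⟩
    rw [goodD_iff] at hgood
    obtain ⟨hc, hgz⟩ := hgood
    have hdm := Nat.div_add_mod y q
    refine ⟨?_, hc, hgz⟩
    rcases Nat.lt_or_ge (y/q) M with h | h
    · exact h
    · exfalso
      have : y / q = M := by
        by_contra hne
        have h5 : M + 1 ≤ y / q := by omega
        have f3 : q * (M+1) ≤ q * (y/q) := Nat.mul_le_mul_left q h5
        have f4 : q * (M+1) = q*M + q := by ring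
        omega
      rw [this] at hgz; exact hg hgz
  · rintro ⟨h1, h2, h3⟩
    have hdm := Nat.div_add_mod y q
    have f1 : y/q + 1 ≤ M := h1
    have f3 : q * (y/q+1) ≤ q * M := Nat.mul_le_mul_left q f1
    have f4 : q * (y/q+1) = q*(y/q) + q := by ring
    refine ⟨by omega, goodD_iff q d y |>.2 ⟨h2, h3⟩⟩

lemma GSet_rec_good (q d M e : ℕ) (hq : 2 ≤ q) (hd : d < q) (he : e ≤ q)
    (hg : GoodD q d M) :
    (GSet q d (q * M + e)).card = (d+1) * (GSet q d M).card + min e (d+1) := by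
  classical
  set A1 : Finset ℕ := ((GSet q d M) ×ˢ (Finset.range (d+1))).image (fun p => q * p.1 + p.2)
    with hA1
  set A2 : Finset ℕ := (Finset.range (min e (d+1))).image (fun c => q * M + c) with hA2
  have hmemA2 : ∀ y, y ∈ A2 ↔ (y / q = M ∧ y % q < min e (d+1)) := by
    intro y
    simp only [hA2, Finset.mem_image, Finset.mem_range]
    constructor
    · rintro ⟨c, hc, rfl⟩
      have hcq : c < q := by omega
      have h1 : (q * M + c) % q = c := by
        simp [Nat.mul_add_mod, Nat.mod_eq_of_lt hcq]
      have h2 : (q * M + c) / q = M := by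
        rw [Nat.mul_add_div (by omega), Nat.div_eq_of_lt hcq]; omega
      rw [h1, h2]; exact ⟨rfl, hc⟩
    · rintro ⟨h1, h2⟩
      refine ⟨y % q, h2, ?_⟩
      have hdm := Nat.div_add_mod y q
      rw [h1] at hdm; exact hdm
  have hset : GSet q d (q * M + e) = A1 ∪ A2 := by
    ext y
    rw [Finset.mem_union, mem_GSet, memA1 q d M hq hd, hmemA2]
    constructor
    · rintro ⟨hy, hgood⟩
      rw [goodD_iff] at hgood
      obtain ⟨hc, hgz⟩ := hgood
      have hdm := Nat.div_add_mod y q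
      rcases Nat.lt_or_ge (y/q) M with h | h
      · exact Or.inl ⟨h, hc, hgz⟩
      · right
        have hmod : y % q < q := Nat.mod_lt _ (by omega)
        have hzeq : y / q = M := by
          by_contra hne
          have h5 : M + 1 ≤ y / q := by omega
          have f3 : q * (M+1) ≤ q * (y/q) := Nat.mul_le_mul_left q h5
          have f4 : q * (M+1) = q*M + q := by ring
          omega
        refine ⟨hzeq, ?_⟩
        rw [hzeq] at hdm
        rw [Nat.lt_min]
        exact ⟨by omega, by omega⟩
    · rintro (⟨h1, h2, h3⟩ | ⟨h1, h2⟩)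
      · have hdm := Nat.div_add_mod y q
        have f1 : y/q + 1 ≤ M := h1
        have f3 : q * (y/q+1) ≤ q * M := Nat.mul_le_mul_left q f1
        have f4 : q * (y/q+1) = q*(y/q) + q := by ring
        refine ⟨by omega, goodD_iff q d y |>.2 ⟨h2, h3⟩⟩
      · have hdm := Nat.div_add_mod y q
        rw [h1] at hdm
        rw [Nat.lt_min] at h2
        refine ⟨by omega, goodD_iff q d y |>.2 ⟨by omega, by rw [h1]; exact hg⟩⟩
  have hdisj : Disjoint A1 A2 := by
    rw [Finset.disjoint_left]
    intro y hy1 hy2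
    rw [memA1 q d M hq hd] at hy1; rw [hmemA2] at hy2
    omega
  have hcard2 : A2.card = min e (d+1) := by
    rw [hA2, Finset.card_image_of_injective _ (fun x y h => by simpa using h),
      Finset.card_range]
  rw [hset, Finset.card_union_of_disjoint hdisj, cardA1 q d M hq hd, hcard2]

lemma real_rpow_add_le {x y p : ℝ} (hx : 0 ≤ x) (hy : 0 ≤ y) (hp : 0 ≤ p) (hp1 : p ≤ 1) :
    (x + y) ^ p ≤ x ^ p + y ^ p := by
  lift x to NNReal using hx
  lift y to NNReal using hy
  have h := NNReal.rpow_add_le_add_rpow x y hp hp1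
  have := NNReal.coe_le_coe.2 h
  push_cast at this
  convert this using 2 <;> simp [← NNReal.coe_rpow]

noncomputable def pen (q d N : ℕ) : ℝ := @ite _ (GoodD q d N) (Classical.dec _) 0 1

lemma pen_good {q d N : ℕ} (h : GoodD q d N) : pen q d N = 0 := by
  simp [pen, h]

lemma pen_bad {q d N : ℕ} (h : ¬ GoodD q d N) : pen q d N = 1 := by
  simp [pen, h]

lemma pen_nonneg (q d N : ℕ) : 0 ≤ pen q d N := by
  unfold pen; split <;> norm_num

lemma count_lower (q d : ℕ) (hq : 2 ≤ q) (hd : d + 1 ≤ q) (hd1 : 1 ≤ d) :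
    ∀ N : ℕ, ((N : ℝ) + pen q d N) ^ (Real.log (d+1) / Real.log q)
      ≤ ((GSet q d N).card : ℝ) := by
  set α : ℝ := Real.log (d+1) / Real.log q with hα
  have hq1 : (1:ℝ) < q := by exact_mod_cast hq
  have hlogq : 0 < Real.log q := Real.log_pos hq1
  have hm1 : (1:ℝ) < ((d:ℝ)+1) := by
    have : (1:ℝ) ≤ (d:ℝ) := by exact_mod_cast hd1
    linarith
  have hα0 : 0 < α := div_pos (Real.log_pos hm1) hlogq
  have hα1 : α ≤ 1 := by
    rw [hα, div_le_one hlogq]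
    exact Real.log_le_log (by positivity) (by exact_mod_cast hd)
  have hqα : (q:ℝ) ^ α = ((d:ℝ)+1) := by
    rw [Real.rpow_def_of_pos (by positivity), hα, mul_comm,
      div_mul_cancel₀ _ hlogq.ne', Real.exp_log (by positivity)]
  have hself : ∀ k : ℕ, ((k:ℝ)) ^ α ≤ k := by
    intro k
    rcases Nat.eq_zero_or_pos k with rfl | hk
    · simp [Real.zero_rpow hα0.ne']
    · have h1 : (1:ℝ) ≤ (k:ℝ) := by exact_mod_cast hk
      calc ((k:ℝ)) ^ α ≤ (k:ℝ) ^ (1:ℝ) := Real.rpow_le_rpow_of_exponent_le h1 hα1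
      _ = k := Real.rpow_one _
  intro N
  induction N using Nat.strong_induction_on with
  | _ N ih =>
    rcases Nat.eq_zero_or_pos N with rfl | hN
    · rw [pen_good (goodD_zero q d)]
      simp [Real.zero_rpow hα0.ne']
    · set M := N / q with hM
      set e := N % q with he
      have hNd : N = q * M + e := by rw [hM, he]; exact (Nat.div_add_mod N q).symm
      have heq : e < q := Nat.mod_lt _ (by omega)
      have hMN : M < N := Nat.div_lt_self hN (by omega)
      have ihM := ih M hMN
      -- basic facts
      have hMge : ((M:ℝ)) ^ α ≤ ((GSet q d M).card : ℝ) := by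
        refine le_trans ?_ ihM
        apply Real.rpow_le_rpow (by positivity) _ hα0.le
        have := pen_nonneg q d M; linarith
      by_cases hgM : GoodD q d M
      · rw [pen_good hgM, add_zero] at ihM
        by_cases hed : e ≤ d
        · -- good N
          have hgN : GoodD q d N := by
            rw [hNd, goodD_mul_add hq heq]; exact ⟨hed, hgM⟩
          rw [pen_good hgN, add_zero]
          have hcard : (GSet q d N).card = (d+1) * (GSet q d M).card + e := by
            rw [hNd, GSet_rec_good q d M e hq (by omega) (by omega) hgM]
            have : min e (d+1) = e := by omega
            rw [this]
          rw [hcard]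
          have hsplit : (N:ℝ) = (q:ℝ) * (M:ℝ) + (e:ℝ) := by
            rw [hNd]; push_cast; ring
          have h1 : (N:ℝ) ^ α ≤ ((q:ℝ)*(M:ℝ)) ^ α + ((e:ℝ)) ^ α := by
            rw [hsplit]
            exact real_rpow_add_le (by positivity) (by positivity) hα0.le hα1
          have h2 : ((q:ℝ)*(M:ℝ)) ^ α = ((d:ℝ)+1) * ((M:ℝ))^α := by
            rw [Real.mul_rpow (by positivity) (by positivity), hqα]
          have h4 : ((d:ℝ)+1) * ((M:ℝ))^α ≤ ((d:ℝ)+1) * ((GSet q d M).card : ℝ) :=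
            mul_le_mul_of_nonneg_left ihM (by positivity)
          have h5 := hself e
          push_cast
          calc (N:ℝ) ^ α ≤ ((q:ℝ)*(M:ℝ)) ^ α + ((e:ℝ)) ^ α := h1
          _ = ((d:ℝ)+1) * ((M:ℝ))^α + ((e:ℝ))^α := by rw [h2]
          _ ≤ ((d:ℝ)+1) * ((GSet q d M).card : ℝ) + (e:ℝ) := by linarith
        · -- e > d : N not good
          have hgN : ¬ GoodD q d N := by
            rw [hNd, goodD_mul_add hq heq]; tauto
          rw [pen_bad hgN]
          have hcard : (GSet q d N).card = (d+1) * (GSet q d M).card + (d+1) := by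
            rw [hNd, GSet_rec_good q d M e hq (by omega) (by omega) hgM]
            have : min e (d+1) = d+1 := by omega
            rw [this]
          rw [hcard]
          have hNb : (N:ℝ) + 1 ≤ (q:ℝ) * ((M:ℝ) + 1) := by
            rw [hNd]; push_cast
            have hq' : ((e:ℝ)) + 1 ≤ (q:ℝ) := by exact_mod_cast heq
            linarith
          have h1 : ((N:ℝ) + 1) ^ α ≤ ((q:ℝ) * ((M:ℝ)+1)) ^ α :=
            Real.rpow_le_rpow (by positivity) hNb hα0.le
          have h2 : ((q:ℝ) * ((M:ℝ)+1)) ^ α = ((d:ℝ)+1) * ((M:ℝ)+1)^α := by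
            rw [Real.mul_rpow (by positivity) (by positivity), hqα]
          have h3 : ((M:ℝ)+1)^α ≤ ((M:ℝ))^α + 1 := by
            have := real_rpow_add_le (x := (M:ℝ)) (y := 1) (by positivity) (by norm_num)
              hα0.le hα1
            rwa [Real.one_rpow] at this
          have h4 : ((d:ℝ)+1) * ((M:ℝ))^α ≤ ((d:ℝ)+1) * ((GSet q d M).card : ℝ) :=
            mul_le_mul_of_nonneg_left ihM (by positivity)
          push_cast
          calc ((N:ℝ) + 1) ^ α ≤ ((d:ℝ)+1) * ((M:ℝ)+1)^α := by rw [← h2]; exact h1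
          _ ≤ ((d:ℝ)+1) * (((M:ℝ))^α + 1) := by
              apply mul_le_mul_of_nonneg_left h3 (by positivity)
          _ = ((d:ℝ)+1) * ((M:ℝ))^α + ((d:ℝ)+1) := by ring
          _ ≤ ((d:ℝ)+1) * ((GSet q d M).card : ℝ) + ((d:ℝ)+1) := by linarith
      · -- M not good
        rw [pen_bad hgM] at ihM
        have hgN : ¬ GoodD q d N := by
          rw [hNd, goodD_mul_add hq heq]; tauto
        rw [pen_bad hgN]
        have hcard : (GSet q d N).card = (d+1) * (GSet q d M).card := by
          rw [hNd, GSet_rec_bad q d M e hq (by omega) (by omega) hgM]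
        rw [hcard]
        have hNb : (N:ℝ) + 1 ≤ (q:ℝ) * ((M:ℝ) + 1) := by
          rw [hNd]; push_cast
          have hq' : ((e:ℝ)) + 1 ≤ (q:ℝ) := by exact_mod_cast heq
          linarith
        have h1 : ((N:ℝ) + 1) ^ α ≤ ((q:ℝ) * ((M:ℝ)+1)) ^ α :=
          Real.rpow_le_rpow (by positivity) hNb hα0.le
        have h2 : ((q:ℝ) * ((M:ℝ)+1)) ^ α = ((d:ℝ)+1) * ((M:ℝ)+1)^α := by
          rw [Real.mul_rpow (by positivity) (by positivity), hqα]
        have h4 : ((d:ℝ)+1) * ((M:ℝ)+1)^α ≤ ((d:ℝ)+1) * ((GSet q d M).card : ℝ) :=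
          mul_le_mul_of_nonneg_left ihM (by positivity)
        push_cast
        calc ((N:ℝ) + 1) ^ α ≤ ((d:ℝ)+1) * ((M:ℝ)+1)^α := by rw [← h2]; exact h1
        _ ≤ ((d:ℝ)+1) * ((GSet q d M).card : ℝ) := h4

lemma key_inj (a b : ℤ) (hco : IsCoprime a b) (h1 : |a| < |b|) (h2 : 2 ≤ |b|)
    (q d : ℕ) (hd : (d : ℤ) = |b| - 1) (hq : (q : ℤ) = (|a| + |b|) * d + 1) :
    ∀ n : ℕ, ∀ y1 y2 y1' y2' : ℕ, y1 + y2 + y1' + y2' = n →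
      GoodD q d y1 → GoodD q d y2 → GoodD q d y1' → GoodD q d y2' →
      a * y1 + b * y2 = a * y1' + b * y2' → y1 = y1' ∧ y2 = y2' := by
  have hb0 : (0:ℤ) < |b| := by omega
  have ha0 : (0:ℤ) ≤ |a| := abs_nonneg a
  have hd0 : (0:ℤ) ≤ (d:ℤ) := by positivity
  have hq2 : (2:ℕ) ≤ q := by
    have : (2:ℤ) ≤ (q:ℤ) := by rw [hq]; nlinarith
    exact_mod_cast this
  intro n
  induction n using Nat.strong_induction_on with
  | _ n ih =>
    intro y1 y2 y1' y2' hsum g1 g2 g1' g2' heq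
    rcases Nat.eq_zero_or_pos n with rfl | hn
    · omega
    -- digits and quotients
    set c1 := y1 % q with hc1
    set c2 := y2 % q with hc2
    set c1' := y1' % q with hc1'
    set c2' := y2' % q with hc2'
    set z1 := y1 / q with hz1
    set z2 := y2 / q with hz2
    set z1' := y1' / q with hz1'
    set z2' := y2' / q with hz2'
    have hy1 : (y1:ℤ) = q * z1 + c1 := by exact_mod_cast (Nat.div_add_mod y1 q).symm
    have hy2 : (y2:ℤ) = q * z2 + c2 := by exact_mod_cast (Nat.div_add_mod y2 q).symm
    have hy1' : (y1':ℤ) = q * z1' + c1' := by exact_mod_cast (Nat.div_add_mod y1' q).symm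
    have hy2' : (y2':ℤ) = q * z2' + c2' := by exact_mod_cast (Nat.div_add_mod y2' q).symm
    have hc1d : (c1:ℤ) ≤ d := by exact_mod_cast (goodD_iff q d y1).1 g1 |>.1
    have hc2d : (c2:ℤ) ≤ d := by exact_mod_cast (goodD_iff q d y2).1 g2 |>.1
    have hc1d' : (c1':ℤ) ≤ d := by exact_mod_cast (goodD_iff q d y1').1 g1' |>.1
    have hc2d' : (c2':ℤ) ≤ d := by exact_mod_cast (goodD_iff q d y2').1 g2' |>.1
    have hc10 : (0:ℤ) ≤ c1 := by positivity
    have hc20 : (0:ℤ) ≤ c2 := by positivity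
    have hc10' : (0:ℤ) ≤ c1' := by positivity
    have hc20' : (0:ℤ) ≤ c2' := by positivity
    -- the equation mod q
    have hW : a * ((c1:ℤ) - c1') + b * ((c2:ℤ) - c2')
        = (q:ℤ) * (a * ((z1':ℤ) - z1) + b * ((z2':ℤ) - z2)) := by
      rw [hy1, hy2, hy1', hy2'] at heq
      ring_nf
      ring_nf at heq
      linarith
    have habs : |a * ((c1:ℤ) - c1') + b * ((c2:ℤ) - c2')| < q := by
      have e1 : |a * ((c1:ℤ) - c1')| ≤ |a| * d := by
        rw [abs_mul]
        apply mul_le_mul_of_nonneg_left _ (abs_nonneg a)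
        rw [abs_le]; omega
      have e2 : |b * ((c2:ℤ) - c2')| ≤ |b| * d := by
        rw [abs_mul]
        apply mul_le_mul_of_nonneg_left _ (abs_nonneg b)
        rw [abs_le]; omega
      calc |a * ((c1:ℤ) - c1') + b * ((c2:ℤ) - c2')|
          ≤ |a * ((c1:ℤ) - c1')| + |b * ((c2:ℤ) - c2')| := abs_add_le _ _
      _ ≤ |a| * d + |b| * d := add_le_add e1 e2
      _ < q := by rw [hq]; nlinarith
    have hW0 : a * ((z1':ℤ) - z1) + b * ((z2':ℤ) - z2) = 0 := by
      by_contra h0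
      have hq0 : (0:ℤ) < (q:ℤ) := by exact_mod_cast (by omega : 0 < q)
      have h0' : (1:ℤ) ≤ |a * ((z1':ℤ) - z1) + b * ((z2':ℤ) - z2)| := abs_pos.2 h0
      have h1' : (q:ℤ) ≤ |(q:ℤ) * (a * ((z1':ℤ) - z1) + b * ((z2':ℤ) - z2))| := by
        rw [abs_mul, abs_of_nonneg hq0.le]
        exact le_mul_of_one_le_right hq0.le h0'
      rw [← hW] at h1'
      linarith
    have hcc : a * ((c1:ℤ) - c1') = b * ((c2':ℤ) - c2) := by
      rw [hW0, mul_zero] at hW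
      linarith
    -- b divides c1 - c1'
    have hbdvd : b ∣ ((c1:ℤ) - c1') := by
      apply hco.symm.dvd_of_dvd_mul_left
      exact ⟨(c2':ℤ) - c2, hcc⟩
    have hc1eq : (c1:ℤ) = c1' := by
      by_contra hne
      have hne' : (c1:ℤ) - c1' ≠ 0 := by omega
      have h5 : |b| ≤ |(c1:ℤ) - c1'| :=
        Int.le_of_dvd (abs_pos.2 hne') ((abs_dvd _ _).2 ((dvd_abs _ _).2 hbdvd))
      have h6 : |(c1:ℤ) - c1'| ≤ d := by rw [abs_le]; omega
      linarith
    have hc2eq : (c2:ℤ) = c2' := by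
      have : b * ((c2':ℤ) - c2) = 0 := by rw [← hcc, hc1eq]; ring
      rcases mul_eq_zero.1 this with h | h
      · exfalso; rw [h] at hb0; simp at hb0
      · omega
    -- recurse on quotients
    have hzeq : a * (z1:ℤ) + b * z2 = a * z1' + b * z2' := by linarith [hW0]
    have hz1g : GoodD q d z1 := ((goodD_iff q d y1).1 g1).2
    have hz2g : GoodD q d z2 := ((goodD_iff q d y2).1 g2).2
    have hz1g' : GoodD q d z1' := ((goodD_iff q d y1').1 g1').2
    have hz2g' : GoodD q d z2' := ((goodD_iff q d y2').1 g2').2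
    have hne0 : y1 > 0 ∨ y2 > 0 ∨ y1' > 0 ∨ y2' > 0 := by omega
    have hlt : z1 + z2 + z1' + z2' < n := by
      have l1 : z1 ≤ y1 := Nat.div_le_self _ _
      have l2 : z2 ≤ y2 := Nat.div_le_self _ _
      have l3 : z1' ≤ y1' := Nat.div_le_self _ _
      have l4 : z2' ≤ y2' := Nat.div_le_self _ _
      rcases hne0 with h | h | h | h
      · have := Nat.div_lt_self h (by omega : 1 < q); omega
      · have := Nat.div_lt_self h (by omega : 1 < q); omega
      · have := Nat.div_lt_self h (by omega : 1 < q); omega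
      · have := Nat.div_lt_self h (by omega : 1 < q); omega
    obtain ⟨e1, e2⟩ := ih _ hlt z1 z2 z1' z2' rfl hz1g hz2g hz1g' hz2g' hzeq
    constructor
    · have : (y1:ℤ) = y1' := by rw [hy1, hy1', hc1eq, e1]
      exact_mod_cast this
    · have : (y2:ℤ) = y2' := by rw [hy2, hy2', hc2eq, e2]
      exact_mod_cast this

lemma frac_helper (m Q p r : ℕ) (hm : 2 ≤ m) (hQ : 2 ≤ Q) (hp : 1 ≤ p) (hr : 1 ≤ r)
    (h6 : 6^r ≤ 56^p) (hQm : Q^p ≤ m^r) :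
    Real.log 6 * Real.log Q ≤ Real.log 56 * Real.log m := by
  have l6 : (0:ℝ) ≤ Real.log 6 := Real.log_nonneg (by norm_num)
  have l56 : (0:ℝ) ≤ Real.log 56 := Real.log_nonneg (by norm_num)
  have lQ : (0:ℝ) ≤ Real.log Q := Real.log_nonneg (by exact_mod_cast hQ.trans' (by norm_num))
  have lm : (0:ℝ) ≤ Real.log m := Real.log_nonneg (by exact_mod_cast hm.trans' (by norm_num))
  have h6' : (r:ℝ) * Real.log 6 ≤ (p:ℝ) * Real.log 56 := by
    have := Real.log_le_log (by positivity : (0:ℝ) < (6:ℝ)^r)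
      (by exact_mod_cast h6 : ((6:ℝ))^r ≤ ((56:ℝ))^p)
    rwa [Real.log_pow, Real.log_pow] at this
  have hQm' : (p:ℝ) * Real.log Q ≤ (r:ℝ) * Real.log m := by
    have hQ0 : (0:ℝ) < (Q:ℝ)^p := by positivity
    have := Real.log_le_log hQ0 (by exact_mod_cast hQm : ((Q:ℝ))^p ≤ ((m:ℝ))^r)
    rwa [Real.log_pow, Real.log_pow] at this
  have hp0 : (0:ℝ) < p := by exact_mod_cast hp
  have hr0 : (0:ℝ) < r := by exact_mod_cast hr
  have key : ((r:ℝ) * Real.log 6) * ((p:ℝ) * Real.log Q)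
      ≤ ((p:ℝ) * Real.log 56) * ((r:ℝ) * Real.log m) :=
    mul_le_mul h6' hQm' (by positivity) (by positivity)
  have : ((r:ℝ) * p) * (Real.log 6 * Real.log Q) ≤ ((r:ℝ) * p) * (Real.log 56 * Real.log m) := by
    nlinarith [key]
  exact le_of_mul_le_mul_left this (by positivity)

lemma numeric_key (m : ℕ) (hm : 2 ≤ m) (q : ℕ) (hq2 : 2 ≤ q)
    (hq : q ≤ (2*m - 1) * (m - 1) + 1) :
    Real.log 6 * Real.log q ≤ Real.log 56 * Real.log m := by
  set Q : ℕ := (2*m - 1) * (m - 1) + 1 with hQdef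
  have hQ2 : 2 ≤ Q := by
    have : 1 ≤ (2*m-1) * (m-1) := by
      have : 1 ≤ 2*m - 1 := by omega
      have : 1 ≤ m - 1 := by omega
      nlinarith
    omega
  have hmono : Real.log q ≤ Real.log Q :=
    Real.log_le_log (by exact_mod_cast hq2.trans' (by norm_num)) (by exact_mod_cast hq)
  have l6 : (0:ℝ) ≤ Real.log 6 := Real.log_nonneg (by norm_num)
  refine le_trans (mul_le_mul_of_nonneg_left hmono l6) ?_
  -- now reduce to Q
  rcases Nat.lt_or_ge m 23 with hlt | hge
  · -- finitely many cases
    interval_cases m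
    · have h := frac_helper 2 4 1 2 (by norm_num) (by norm_num) (by norm_num)
        (by norm_num) (by norm_num) (by norm_num)
      rw [hQdef]; push_cast at h ⊢; norm_num at h ⊢; exact h
    · have h := frac_helper 3 11 5 11 (by norm_num) (by norm_num) (by norm_num)
        (by norm_num) (by norm_num) (by norm_num)
      rw [hQdef]; push_cast at h ⊢; norm_num at h ⊢; exact h
    · have h := frac_helper 4 22 13 29 (by norm_num) (by norm_num) (by norm_num)
        (by norm_num) (by norm_num) (by norm_num)
      rw [hQdef]; push_cast at h ⊢; norm_num at h ⊢; exact h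
    · have h := frac_helper 5 37 41 92 (by norm_num) (by norm_num) (by norm_num)
        (by norm_num) (by norm_num) (by norm_num)
      rw [hQdef]; push_cast at h ⊢; norm_num at h ⊢; exact h
    · -- m = 6 : equality
      rw [hQdef]; push_cast; norm_num [mul_comm]
    · have h := frac_helper 7 79 57 128 (by norm_num) (by norm_num) (by norm_num)
        (by norm_num) (by norm_num) (by norm_num)
      rw [hQdef]; push_cast at h ⊢; norm_num at h ⊢; exact h
    · have h := frac_helper 8 106 37 83 (by norm_num) (by norm_num) (by norm_num)
        (by norm_num) (by norm_num) (by norm_num)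
      rw [hQdef]; push_cast at h ⊢; norm_num at h ⊢; exact h
    · have h := frac_helper 9 137 25 56 (by norm_num) (by norm_num) (by norm_num)
        (by norm_num) (by norm_num) (by norm_num)
      rw [hQdef]; push_cast at h ⊢; norm_num at h ⊢; exact h
    · have h := frac_helper 10 172 21 47 (by norm_num) (by norm_num) (by norm_num)
        (by norm_num) (by norm_num) (by norm_num)
      rw [hQdef]; push_cast at h ⊢; norm_num at h ⊢; exact h
    · have h := frac_helper 11 211 17 38 (by norm_num) (by norm_num) (by norm_num)
        (by norm_num) (by norm_num) (by norm_num)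
      rw [hQdef]; push_cast at h ⊢; norm_num at h ⊢; exact h
    · have h := frac_helper 12 254 13 29 (by norm_num) (by norm_num) (by norm_num)
        (by norm_num) (by norm_num) (by norm_num)
      rw [hQdef]; push_cast at h ⊢; norm_num at h ⊢; exact h
    · have h := frac_helper 13 301 13 29 (by norm_num) (by norm_num) (by norm_num)
        (by norm_num) (by norm_num) (by norm_num)
      rw [hQdef]; push_cast at h ⊢; norm_num at h ⊢; exact h
    · have h := frac_helper 14 352 9 20 (by norm_num) (by norm_num) (by norm_num)
        (by norm_num) (by norm_num) (by norm_num)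
      rw [hQdef]; push_cast at h ⊢; norm_num at h ⊢; exact h
    · have h := frac_helper 15 407 9 20 (by norm_num) (by norm_num) (by norm_num)
        (by norm_num) (by norm_num) (by norm_num)
      rw [hQdef]; push_cast at h ⊢; norm_num at h ⊢; exact h
    · have h := frac_helper 16 466 9 20 (by norm_num) (by norm_num) (by norm_num)
        (by norm_num) (by norm_num) (by norm_num)
      rw [hQdef]; push_cast at h ⊢; norm_num at h ⊢; exact h
    · have h := frac_helper 17 529 9 20 (by norm_num) (by norm_num) (by norm_num)
        (by norm_num) (by norm_num) (by norm_num)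
      rw [hQdef]; push_cast at h ⊢; norm_num at h ⊢; exact h
    · have h := frac_helper 18 596 9 20 (by norm_num) (by norm_num) (by norm_num)
        (by norm_num) (by norm_num) (by norm_num)
      rw [hQdef]; push_cast at h ⊢; norm_num at h ⊢; exact h
    · have h := frac_helper 19 667 9 20 (by norm_num) (by norm_num) (by norm_num)
        (by norm_num) (by norm_num) (by norm_num)
      rw [hQdef]; push_cast at h ⊢; norm_num at h ⊢; exact h
    · have h := frac_helper 20 742 9 20 (by norm_num) (by norm_num) (by norm_num)
        (by norm_num) (by norm_num) (by norm_num)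
      rw [hQdef]; push_cast at h ⊢; norm_num at h ⊢; exact h
    · have h := frac_helper 21 821 9 20 (by norm_num) (by norm_num) (by norm_num)
        (by norm_num) (by norm_num) (by norm_num)
      rw [hQdef]; push_cast at h ⊢; norm_num at h ⊢; exact h
    · have h := frac_helper 22 904 9 20 (by norm_num) (by norm_num) (by norm_num)
        (by norm_num) (by norm_num) (by norm_num)
      rw [hQdef]; push_cast at h ⊢; norm_num at h ⊢; exact h
  · -- m ≥ 23 : use 9/20
    apply frac_helper m Q 9 20 hm hQ2 (by norm_num) (by norm_num) (by norm_num)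
    have hQle : Q ≤ 2 * m^2 := by
      obtain ⟨k, rfl⟩ : ∃ k, m = k + 23 := ⟨m - 23, by omega⟩
      have e1 : 2*(k+23) - 1 = 2*k + 45 := by omega
      have e2 : (k+23) - 1 = k + 22 := by omega
      rw [hQdef, e1, e2]; nlinarith
    calc Q^9 ≤ (2*m^2)^9 := Nat.pow_le_pow_left hQle 9
    _ = 512 * m^18 := by ring
    _ ≤ m^2 * m^18 := by
        have : 512 ≤ m^2 := by nlinarith [hge]
        exact Nat.mul_le_mul_right _ this
    _ = m^20 := by ring

/-- Let `a, b` be coprime integers with `|a| < |b|`, `|b| ≥ 2`, and `N > 0`.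
Then there is `A ⊆ [N]` with `|A| ≥ N^{log 6/log 56}` containing no non-trivial solutions
to `a·x₁ + b·x₂ = a·x₁' + b·x₂'`. -/
theorem statement7 (a b : ℤ) (hco : IsCoprime a b) (h1 : |a| < |b|) (h2 : 2 ≤ |b|)
    (N : ℕ) (hN : 0 < N) :
    ∃ A : Finset ℤ, A ⊆ Finset.Icc 1 (N : ℤ) ∧
      (N : ℝ) ^ (Real.log 6 / Real.log 56) ≤ A.card ∧
      ∀ x₁ x₂ x₁' x₂' : ℤ, x₁ ∈ A → x₂ ∈ A → x₁' ∈ A → x₂' ∈ A →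
        a * x₁ + b * x₂ = a * x₁' + b * x₂' → x₁ = x₁' ∧ x₂ = x₂' := by
  set m : ℕ := b.natAbs with hmdef
  have hbabs : |b| = (m:ℤ) := by rw [hmdef, Int.abs_eq_natAbs]
  have hm2 : 2 ≤ m := by
    have : (2:ℤ) ≤ (m:ℤ) := by rw [← hbabs]; exact h2
    exact_mod_cast this
  set d : ℕ := m - 1 with hddef
  have hd1 : 1 ≤ d := by omega
  have hdZ : (d:ℤ) = |b| - 1 := by rw [hbabs, hddef]; push_cast [Nat.cast_sub (by omega : 1 ≤ m)]; ring
  have haabs : |a| = (a.natAbs : ℤ) := Int.abs_eq_natAbs a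
  have haN : a.natAbs ≤ m - 1 := by
    have : (a.natAbs : ℤ) < (m:ℤ) := by rw [← haabs, ← hbabs]; exact h1
    have := by exact_mod_cast this
    omega
  set q : ℕ := (a.natAbs + m) * d + 1 with hqdef
  have hqZ : (q:ℤ) = (|a| + |b|) * (d:ℤ) + 1 := by
    rw [haabs, hbabs, hqdef]; push_cast; ring
  have hq2 : 2 ≤ q := by
    have : 1 ≤ (a.natAbs + m) * d := Nat.one_le_iff_ne_zero.2 (by positivity)
    omega
  have hdq : d + 1 ≤ q := by
    have : d ≤ (a.natAbs + m) * d := Nat.le_mul_of_pos_left d (by omega)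
    omega
  -- the set
  refine ⟨(GSet q d N).image (fun y : ℕ => (y:ℤ) + 1), ?_, ?_, ?_⟩
  · intro x hx
    simp only [Finset.mem_image, mem_GSet] at hx
    obtain ⟨y, ⟨hy, _⟩, rfl⟩ := hx
    simp only [Finset.mem_Icc]
    have : (y:ℤ) < N := by exact_mod_cast hy
    omega
  · -- cardinality
    have hcard : ((GSet q d N).image (fun y : ℕ => (y:ℤ) + 1)).card = (GSet q d N).card :=
      Finset.card_image_of_injective _ (fun x y h => by
        simp only [add_left_inj] at h; exact_mod_cast h)
    rw [hcard]
    set α : ℝ := Real.log (d+1) / Real.log q with hα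
    have hlow := count_lower q d hq2 hdq hd1 N
    have hpen := pen_nonneg q d N
    have hN1 : (1:ℝ) ≤ (N:ℝ) := by exact_mod_cast hN
    have hlogq : 0 < Real.log q := Real.log_pos (by exact_mod_cast hq2)
    have hlog56 : 0 < Real.log 56 := Real.log_pos (by norm_num)
    have hdm : ((d:ℝ) + 1) = (m:ℝ) := by
      have : d + 1 = m := by omega
      exact_mod_cast this
    have hLα : Real.log 6 / Real.log 56 ≤ α := by
      rw [hα, div_le_div_iff₀ hlog56 hlogq, hdm]
      have hqle : q ≤ (2*m - 1) * (m - 1) + 1 := by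
        rw [hqdef, hddef]
        have : a.natAbs + m ≤ 2*m - 1 := by omega
        exact Nat.add_le_add_right (Nat.mul_le_mul_right _ this) 1
      have := numeric_key m hm2 q hq2 hqle
      linarith [this]
    calc (N:ℝ) ^ (Real.log 6 / Real.log 56) ≤ (N:ℝ) ^ α :=
          Real.rpow_le_rpow_of_exponent_le hN1 hLα
    _ ≤ ((N:ℝ) + pen q d N) ^ α := by
        apply Real.rpow_le_rpow (by positivity) (by linarith) ?_
        rw [hα]
        refine div_nonneg (Real.log_nonneg ?_) hlogq.le
        have : (1:ℝ) ≤ (d:ℝ) := by exact_mod_cast hd1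
        linarith
    _ ≤ ((GSet q d N).card : ℝ) := hlow
  · -- solution-free
    intro x₁ x₂ x₁' x₂' hx1 hx2 hx1' hx2' heq
    simp only [Finset.mem_image, mem_GSet] at hx1 hx2 hx1' hx2'
    obtain ⟨y1, ⟨hy1, g1⟩, rfl⟩ := hx1
    obtain ⟨y2, ⟨hy2, g2⟩, rfl⟩ := hx2
    obtain ⟨y1', ⟨hy1', g1'⟩, rfl⟩ := hx1'
    obtain ⟨y2', ⟨hy2', g2'⟩, rfl⟩ := hx2'
    have heq' : a * (y1:ℤ) + b * (y2:ℤ) = a * (y1':ℤ) + b * (y2':ℤ) := by ring_nf at heq ⊢; linarith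
    obtain ⟨e1, e2⟩ := key_inj a b hco h1 h2 q d hdZ hqZ (y1+y2+y1'+y2') y1 y2 y1' y2' rfl
      g1 g2 g1' g2' heq'
    subst e1; subst e2
    exact ⟨rfl, rfl⟩
end

section
/- Let k, a, b ≥ 2 be integers with gcd(a,b) = 1 and a ≤ b^{k−1}, and let N ≥ 1. Then there exists a set A ⊆ [N] with |A| ≥ N^{1/k − 1/log b} that contains no non-trivial solutions to the equation a·x₁ + b·x₂ + b²·x₃ + ⋯ + b^{k−1}·x_k = a·x₁' + b·x₂' + b²·x₃' + ⋯ + b^{k−1}·x_k'. -/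
namespace St8


def spread (b k n : ℕ) : ℕ := Nat.ofDigits (b^k) (Nat.digits b n)

lemma spread_zero (b k : ℕ) : spread b k 0 = 0 := by simp [spread]

lemma spread_def (b k : ℕ) (hb : 1 < b) (n : ℕ) :
    spread b k n = n % b + b^k * spread b k (n / b) := by
  rcases Nat.eq_zero_or_pos n with h | h
  · simp [h, spread]
  · rw [spread, Nat.digits_def' hb h, Nat.ofDigits_cons]; rfl

lemma spread_inj (b k : ℕ) (hb : 1 < b) (hk : k ≠ 0) : Function.Injective (spread b k) := by
  intro m n h
  have hbk : 1 < b ^ k := Nat.one_lt_pow hk hb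
  have key : ∀ x : ℕ, Nat.digits (b^k) (spread b k x) = Nat.digits b x := by
    intro x
    refine Nat.digits_ofDigits _ hbk _ (fun l hl => lt_of_lt_of_le (Nat.digits_lt_base hb hl) (Nat.le_self_pow hk b)) ?_
    intro hne
    have hx : x ≠ 0 := by
      intro h0; rw [h0] at hne; simp at hne
    exact Nat.getLast_digit_ne_zero b hx
  have : Nat.digits b m = Nat.digits b n := by rw [← key m, ← key n, h]
  calc m = Nat.ofDigits b (Nat.digits b m) := (Nat.ofDigits_digits b m).symm
    _ = Nat.ofDigits b (Nat.digits b n) := by rw [this]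
    _ = n := Nat.ofDigits_digits b n

lemma spread_lt (b k : ℕ) (hb : 2 ≤ b) (hk : 1 ≤ k) :
    ∀ (m : ℕ) {c n : ℕ}, c ≤ b → n < c * b ^ m → spread b k n < c * b ^ (k * m) := by
  intro m
  induction m with
  | zero =>
    intro c n hc hn
    simp only [pow_zero, mul_one] at hn ⊢
    have hnb : n < b := lt_of_lt_of_le hn hc
    have : spread b k n = n := by
      rw [spread_def b k (by omega), Nat.mod_eq_of_lt hnb, Nat.div_eq_of_lt hnb, spread_zero]
      ring
    simp only [Nat.mul_zero, pow_zero, mul_one]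
    omega
  | succ m ih =>
    intro c n hc hn
    have hb0 : 0 < b := by omega
    have hdiv : n / b < c * b ^ m := by
      rw [Nat.div_lt_iff_lt_mul hb0]
      calc n < c * b ^ (m+1) := hn
        _ = c * b ^ m * b := by ring
    have h1 : spread b k (n / b) < c * b ^ (k * m) := ih hc hdiv
    have h2 : spread b k n = n % b + b^k * spread b k (n / b) := spread_def b k (by omega) n
    have h3 : n % b < b := Nat.mod_lt n hb0
    have hbk : b ≤ b ^ k := Nat.le_self_pow (by omega) b
    calc spread b k n = n % b + b^k * spread b k (n/b) := h2
      _ < b + b^k * spread b k (n/b) := by omega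
      _ ≤ b^k + b^k * spread b k (n/b) := by omega
      _ = b^k * (1 + spread b k (n/b)) := by ring
      _ ≤ b^k * (c * b ^ (k*m)) := Nat.mul_le_mul_left _ (by omega)
      _ = c * b ^ (k * (m+1)) := by ring


lemma spread_cast_def (b k : ℕ) (hb : 1 < b) (n : ℕ) :
    (spread b k n : ℤ) = (n % b : ℕ) + (b:ℤ)^k * spread b k (n / b) := by
  rw [spread_def b k hb n]; push_cast; ring

lemma mod_eq_of_dvd (b k : ℕ) (hb : 1 < b) (hk : 1 ≤ k) {n n' : ℕ}
    (h : (b : ℤ) ∣ (spread b k n : ℤ) - spread b k n') : n % b = n' % b := by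
  have h1 := spread_cast_def b k hb n
  have h2 := spread_cast_def b k hb n'
  have hbd : (b:ℤ) ∣ (b:ℤ)^k := dvd_pow_self _ (by omega)
  have h3 : (b:ℤ) ∣ ((n % b : ℕ) : ℤ) - ((n' % b : ℕ) : ℤ) := by
    have : ((n % b : ℕ) : ℤ) - ((n' % b : ℕ) : ℤ) =
        ((spread b k n : ℤ) - spread b k n')
        - (b:ℤ)^k * (spread b k (n / b) - spread b k (n' / b)) := by
      rw [h1, h2]; ring
    rw [this]
    exact dvd_sub h (Dvd.dvd.mul_right hbd _)
  have hn : n % b < b := Nat.mod_lt _ (by omega)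
  have hn' : n' % b < b := Nat.mod_lt _ (by omega)
  rcases h3 with ⟨c, hc⟩
  have hb0 : (0:ℤ) < b := by exact_mod_cast Nat.lt_of_lt_of_le Nat.zero_lt_one hb.le
  have : c = 0 := by nlinarith [Int.ofNat_le.mpr hn.le, (by exact_mod_cast hn : ((n % b : ℕ):ℤ) < b), (by exact_mod_cast hn' : ((n' % b : ℕ):ℤ) < b), Int.natCast_nonneg (n % b), Int.natCast_nonneg (n' % b)]
  rw [this, mul_zero, sub_eq_zero] at hc
  exact_mod_cast hc

lemma sub_eq (b k : ℕ) (hb : 1 < b) {n n' : ℕ} (h : n % b = n' % b) :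
    (spread b k n : ℤ) - spread b k n' = (b:ℤ)^k * ((spread b k (n / b) : ℤ) - spread b k (n' / b)) := by
  rw [spread_cast_def b k hb n, spread_cast_def b k hb n', h]; ring


lemma key (k a b : ℕ) (hk : 2 ≤ k) (hb : 2 ≤ b) (hco : Nat.Coprime a b) :
    ∀ s : ℕ, ∀ n n' : Fin k → ℕ, (∑ i, (n i + n' i)) = s →
      (∑ i : Fin k, (if i.val = 0 then (a:ℤ) else (b:ℤ)^i.val) * spread b k (n i)) =
      (∑ i : Fin k, (if i.val = 0 then (a:ℤ) else (b:ℤ)^i.val) * spread b k (n' i)) →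
      n = n' := by
  intro s
  induction s using Nat.strong_induction_on with
  | _ s IH =>
  intro n n' hs heq
  have hb1 : 1 < b := by omega
  set C : Fin k → ℤ := fun i => if i.val = 0 then (a:ℤ) else (b:ℤ)^i.val with hC
  set D : Fin k → ℤ := fun i => (spread b k (n i) : ℤ) - spread b k (n' i) with hD
  have hsum0 : ∑ i : Fin k, C i * D i = 0 := by
    simp only [hD, mul_sub, Finset.sum_sub_distrib]
    rw [heq]; ring
  -- step 1: all low digits agree
  have hmod : ∀ j : Fin k, n j % b = n' j % b := by
    suffices H : ∀ jv : ℕ, ∀ hj : jv < k, n ⟨jv, hj⟩ % b = n' ⟨jv, hj⟩ % b by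
      intro j; have := H j.val j.isLt; simpa using this
    intro jv
    induction jv using Nat.strong_induction_on with
    | _ jv IHj =>
    intro hj
    set j : Fin k := ⟨jv, hj⟩ with hjdef
    have hdvd_all : ∀ i ∈ Finset.univ.erase j, ((b:ℤ)^(jv+1)) ∣ C i * D i := by
      intro i hi
      have hij : i ≠ j := (Finset.mem_erase.mp hi).1
      rcases lt_or_ge i.val jv with hlt | hge
      · -- i.val < jv : IH applies, D i divisible by b^k
        have hmi : n i % b = n' i % b := by
          have := IHj i.val hlt i.isLt
          simpa using this
        have hDi : D i = (b:ℤ)^k * ((spread b k (n i / b) : ℤ) - spread b k (n' i / b)) :=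
          sub_eq b k hb1 hmi
        have hkd : (b:ℤ)^(jv+1) ∣ (b:ℤ)^k := pow_dvd_pow _ (by omega)
        rw [hDi]
        exact Dvd.dvd.mul_left (hkd.mul_right _) _
      · -- i.val ≥ jv, and i ≠ j so i.val > jv; then i.val ≠ 0 and b^{i.val} ∣ C i
        have hgt : jv < i.val := by
          rcases lt_or_eq_of_le hge with h | h
          · exact h
          · exact absurd (Fin.ext h.symm : i = j) hij
        have hine : i.val ≠ 0 := by omega
        have hCi : C i = (b:ℤ)^i.val := by simp [hC, hine]
        rw [hCi]
        exact Dvd.dvd.mul_right (pow_dvd_pow _ (by omega)) _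
    have hsplit : C j * D j + ∑ i ∈ Finset.univ.erase j, C i * D i = 0 := by
      have h := Finset.add_sum_erase Finset.univ (fun i => C i * D i) (Finset.mem_univ j)
      rw [h, hsum0]
    have h3 : (b:ℤ)^(jv+1) ∣ C j * D j := by
      have : C j * D j = -∑ i ∈ Finset.univ.erase j, C i * D i := by linarith
      rw [this]
      exact (Finset.dvd_sum hdvd_all).neg_right
    have h4 : (b:ℤ) ∣ D j := by
      rcases Nat.eq_zero_or_pos jv with h0 | hpos
      · -- j = 0 : coprimality
        have hCj : C j = (a:ℤ) := by simp [hC, hjdef, h0]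
        rw [hCj, h0, pow_one] at h3
        have hcop : IsCoprime (b:ℤ) (a:ℤ) := (Nat.isCoprime_iff_coprime.mpr hco).symm
        exact hcop.dvd_of_dvd_mul_left h3
      · have hCj : C j = (b:ℤ)^jv := by simp [hC, hjdef]; omega
        rw [hCj] at h3
        have hbne : ((b:ℤ)^jv) ≠ 0 := pow_ne_zero _ (by exact_mod_cast (by omega : b ≠ 0))
        have : (b:ℤ)^jv * (b:ℤ) ∣ (b:ℤ)^jv * D j := by
          rw [← pow_succ]; exact h3
        exact (mul_dvd_mul_iff_left hbne).mp this
    exact mod_eq_of_dvd b k hb1 (by omega) h4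
  -- step 2: divide by b^k and recurse
  have heq2 : (∑ i : Fin k, C i * spread b k (n i / b)) = ∑ i : Fin k, C i * spread b k (n' i / b) := by
    have h5 : (b:ℤ)^k * ∑ i : Fin k, C i * ((spread b k (n i / b) : ℤ) - spread b k (n' i / b)) = 0 := by
      rw [Finset.mul_sum]
      rw [← hsum0]
      apply Finset.sum_congr rfl
      intro i _
      rw [show D i = (b:ℤ)^k * ((spread b k (n i / b) : ℤ) - spread b k (n' i / b)) from sub_eq b k hb1 (hmod i)]
      ring
    have hbne : ((b:ℤ)^k) ≠ 0 := pow_ne_zero _ (by exact_mod_cast (by omega : b ≠ 0))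
    have h6 : ∑ i : Fin k, C i * ((spread b k (n i / b) : ℤ) - spread b k (n' i / b)) = 0 :=
      by rcases mul_eq_zero.mp h5 with h | h; exact absurd h hbne; exact h
    have := h6
    simp only [mul_sub, Finset.sum_sub_distrib, sub_eq_zero] at this
    exact this
  rcases Nat.eq_zero_or_pos s with hs0 | hspos
  · -- all zero
    rw [hs0] at hs
    funext i
    have h1 : n i + n' i = 0 := by
      have := Finset.sum_eq_zero_iff.mp hs i (Finset.mem_univ i)
      omega
    omega
  · obtain ⟨i0, hi0⟩ : ∃ i : Fin k, 0 < n i + n' i := by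
      by_contra hcon
      push_neg at hcon
      have : ∑ i : Fin k, (n i + n' i) = 0 := Finset.sum_eq_zero (fun i _ => by have := hcon i; omega)
      omega
    have hlt : ∑ i : Fin k, (n i / b + n' i / b) < s := by
      rw [← hs]
      apply Finset.sum_lt_sum
      · intro i _
        have := Nat.div_le_self (n i) b
        have := Nat.div_le_self (n' i) b
        omega
      · refine ⟨i0, Finset.mem_univ _, ?_⟩
        have h1 := Nat.div_le_self (n i0) b
        have h2 := Nat.div_le_self (n' i0) b
        rcases Nat.eq_zero_or_pos (n i0) with hz | hp
        · have hp' : 0 < n' i0 := by omega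
          have := Nat.div_lt_self hp' hb1
          omega
        · have := Nat.div_lt_self hp hb1
          omega
    have hrec := IH _ hlt (fun i => n i / b) (fun i => n' i / b) rfl heq2
    funext i
    have h1 : n i / b = n' i / b := congrFun hrec i
    have h4 := hmod i
    rw [← Nat.div_add_mod (n i) b, ← Nat.div_add_mod (n' i) b, h1, h4]

end St8

open St8 in
/-- Let `k, a, b ≥ 2` be integers with `gcd(a,b) = 1` and `a ≤ b^{k−1}`, and
`N ≥ 1`. Then there is `A ⊆ [N]` with `|A| ≥ N^{1/k − 1/log b}` containing no non-trivial
solutions to `a·x₁ + b·x₂ + ⋯ + b^{k−1}·x_k = a·x₁' + b·x₂' + ⋯ + b^{k−1}·x_k'`. -/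
theorem statement8 (k a b : ℕ) (hk : 2 ≤ k) (ha : 2 ≤ a) (hb : 2 ≤ b)
    (hco : Nat.Coprime a b) (hab : a ≤ b ^ (k - 1)) (N : ℕ) (hN : 1 ≤ N) :
    ∃ A : Finset ℤ, A ⊆ Finset.Icc 1 (N : ℤ) ∧
      (N : ℝ) ^ ((1 : ℝ) / k - 1 / Real.log b) ≤ A.card ∧
      ∀ x x' : Fin k → ℤ, (∀ i, x i ∈ A) → (∀ i, x' i ∈ A) →
        (∑ i, (if i.val = 0 then (a : ℤ) else (b : ℤ) ^ i.val) * x i) =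
          (∑ i, (if i.val = 0 then (a : ℤ) else (b : ℤ) ^ i.val) * x' i) → x = x' := by
  have hb1 : 1 < b := by omega
  set L : ℕ := Nat.log b N with hL
  set m : ℕ := L / k with hm
  have hkm : k * m ≤ L := by
    rw [hm, mul_comm]; exact Nat.div_mul_le_self L k
  have hBle : b ^ (k * m) ≤ N :=
    le_trans (Nat.pow_le_pow_right (by omega) hkm) (Nat.pow_log_le_self b (by omega))
  have hBpos : 0 < b ^ (k * m) := Nat.pow_pos (by omega)
  set c : ℕ := min b (N / b ^ (k * m)) with hc
  have hc1 : 1 ≤ c := le_min (by omega) ((Nat.one_le_div_iff hBpos).mpr hBle)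
  have hcb : c ≤ b := min_le_left _ _
  have hcN : c * b ^ (k * m) ≤ N := by
    have h1 : c ≤ N / b ^ (k * m) := min_le_right _ _
    calc c * b ^ (k * m) ≤ N / b ^ (k * m) * b ^ (k * m) := Nat.mul_le_mul_right _ h1
      _ ≤ N := Nat.div_mul_le_self _ _
  set s : ℕ := c * b ^ m with hsdef
  have hs1 : 1 ≤ s := Nat.one_le_iff_ne_zero.mpr (by positivity)
  set f : ℕ → ℤ := fun n => ((1 + spread b k n : ℕ) : ℤ) with hf
  set A : Finset ℤ := (Finset.range s).image f with hA
  have hfinj : Function.Injective f := by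
    intro x y hxy
    simp only [hf] at hxy
    have : (1 + spread b k x : ℕ) = 1 + spread b k y := by exact_mod_cast hxy
    exact spread_inj b k hb1 (by omega) (by omega)
  have hmem : ∀ z ∈ A, ∃ n < s, f n = z := by
    intro z hz
    obtain ⟨n, hn, hfn⟩ := Finset.mem_image.mp hz
    exact ⟨n, Finset.mem_range.mp hn, hfn⟩
  refine ⟨A, ?_, ?_, ?_⟩
  · -- subset
    intro z hz
    obtain ⟨n, hn, hfn⟩ := hmem z hz
    have hsp : spread b k n < c * b ^ (k * m) := spread_lt b k hb (by omega) m hcb hn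
    rw [Finset.mem_Icc, ← hfn]
    simp only [hf]
    constructor
    · exact_mod_cast (by omega : 1 ≤ 1 + spread b k n)
    · exact_mod_cast (by omega : 1 + spread b k n ≤ N)
  · -- cardinality bound
    have hcard : A.card = s := by
      rw [hA, Finset.card_image_of_injective _ hfinj, Finset.card_range]
    rw [hcard]
    have hN1 : (1:ℝ) ≤ N := by exact_mod_cast hN
    have hNpos : (0:ℝ) < N := by linarith
    have hβ : 0 < Real.log b := Real.log_pos (by exact_mod_cast hb1)
    have hkR : (2:ℝ) ≤ (k:ℝ) := by exact_mod_cast hk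
    have hinv : (0:ℝ) ≤ 1 / Real.log b := by positivity
    rcases lt_or_ge N b with hNb | hbN
    · -- Case 1 : N < b, then s = N
      have hL0 : L = 0 := Nat.log_eq_zero_iff.mpr (Or.inl hNb)
      have hm0 : m = 0 := by rw [hm, hL0, Nat.zero_div]
      have hseq : s = N := by
        rw [hsdef, hc, hm0]
        simp [Nat.mul_zero, pow_zero, Nat.div_one, min_eq_right hNb.le]
      rw [hseq]
      calc (N:ℝ) ^ ((1:ℝ)/k - 1/Real.log b) ≤ (N:ℝ) ^ (1:ℝ) := by
            apply Real.rpow_le_rpow_of_exponent_le hN1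
            have : (1:ℝ)/k ≤ 1 := by
              rw [div_le_one (by linarith)]; linarith
            linarith
        _ = N := Real.rpow_one _
    · rcases le_or_gt b (N / b ^ (k * m)) with h2 | h2
      · -- Case 2a : c = b, s = b^(m+1)
        have hceq : c = b := min_eq_left h2
        have hseq : s = b ^ (m + 1) := by rw [hsdef, hceq]; ring
        have hLlt : L < k * (m + 1) := by
          have h3 : L / k < m + 1 := by omega
          calc L < (m+1) * k := (Nat.div_lt_iff_lt_mul (by omega : 0 < k)).mp h3
            _ = k * (m+1) := by ring
        have hNlt : N < b ^ (k * (m + 1)) :=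
          lt_of_lt_of_le (Nat.lt_pow_succ_log_self hb1 N) (Nat.pow_le_pow_right (by omega) (by omega))
        rw [hseq]
        have step1 : (N:ℝ) ^ ((1:ℝ)/k - 1/Real.log b) ≤ (N:ℝ) ^ ((1:ℝ)/k) :=
          Real.rpow_le_rpow_of_exponent_le hN1 (by linarith)
        have step2 : (N:ℝ) ^ ((1:ℝ)/k) ≤ ((b:ℝ) ^ (k * (m+1))) ^ ((1:ℝ)/k) := by
          apply Real.rpow_le_rpow (by positivity) (by exact_mod_cast hNlt.le) (by positivity)
        have step3 : ((b:ℝ) ^ (k * (m+1))) ^ ((1:ℝ)/k) = (b:ℝ) ^ (m+1) := by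
          rw [← Real.rpow_natCast (b:ℝ) (k * (m+1)), ← Real.rpow_mul (by positivity)]
          rw [← Real.rpow_natCast (b:ℝ) (m+1)]
          congr 1
          push_cast
          field_simp
        calc (N:ℝ) ^ ((1:ℝ)/k - 1/Real.log b) ≤ ((b:ℝ) ^ (k * (m+1))) ^ ((1:ℝ)/k) := step1.trans step2
          _ = (b:ℝ) ^ (m+1) := step3
          _ = ((b ^ (m+1) : ℕ) : ℝ) := by push_cast; ring
      · -- Case 2b : c = N / b^(k*m), b ≤ N
        have hceq : c = N / b ^ (k * m) := min_eq_right h2.le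
        have hNlt2 : N < (c + 1) * b ^ (k * m) := by
          rw [hceq]
          exact (Nat.div_lt_iff_lt_mul hBpos).mp (by omega)
        have hN2c : (N:ℝ) ≤ 2 * c * (b:ℝ) ^ (k * m) := by
          have h3 : N ≤ 2 * c * b ^ (k*m) := by
            have h4 : (c+1) * b^(k*m) ≤ 2 * c * b ^ (k*m) := by
              calc (c+1) * b^(k*m) ≤ (2*c) * b^(k*m) := Nat.mul_le_mul_right _ (by omega)
                _ = 2 * c * b ^ (k*m) := by ring
            omega
          exact_mod_cast h3
        set β := Real.log b with hβdef
        set ℓ := Real.log N with hℓdef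
        set γ := Real.log c with hγdef
        have hcpos : (0:ℝ) < c := by exact_mod_cast hc1
        have hγ0 : 0 ≤ γ := Real.log_nonneg (by exact_mod_cast hc1)
        have hℓ0 : 0 ≤ ℓ := Real.log_nonneg (by exact_mod_cast hN)
        have f1 : ℓ ≤ Real.log 2 + γ + (k:ℝ) * ((m:ℝ) * β) := by
          have h5 := Real.log_le_log (by exact_mod_cast hN : (0:ℝ) < N) hN2c
          rw [Real.log_mul (mul_pos two_pos hcpos).ne' (by positivity),
            Real.log_mul two_ne_zero hcpos.ne', Real.log_pow] at h5
          have h6 : ((k*m : ℕ) : ℝ) * β = (k:ℝ) * ((m:ℝ) * β) := by push_cast; ring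
          rw [h6] at h5
          linarith
        have f2 : (k:ℝ) * ((m:ℝ) * β) ≤ ℓ := by
          have h4 : ((b:ℝ) ^ (k*m)) ≤ N := by exact_mod_cast hBle
          have h5 := Real.log_le_log (by positivity) h4
          rw [Real.log_pow] at h5
          have h6 : ((k*m : ℕ) : ℝ) * β = (k:ℝ) * ((m:ℝ) * β) := by push_cast; ring
          rw [h6] at h5
          linarith
        have f3 : β ≤ ℓ := Real.log_le_log (by positivity) (by exact_mod_cast hbN)
        have hlog2 : Real.log 2 < 1 := by
          have := Real.log_two_lt_d9
          linarith
        -- main linear inequality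
        have main : ((1:ℝ)/k - 1/β) * ℓ ≤ γ + m * β := by
          have hu : (m:ℝ) * β ≤ ℓ / k := by
            rw [le_div_iff₀ (by linarith : (0:ℝ) < k)]
            nlinarith [f2]
          have hv : (1:ℝ) ≤ ℓ / β := (one_le_div hβ).mpr f3
          have hγ2 : ℓ - Real.log 2 - (k:ℝ) * ((m:ℝ) * β) ≤ γ := by linarith
          have hkk : (k:ℝ) * (ℓ / k) = ℓ := by field_simp
          have hkk2 : (1:ℝ)/k * ℓ = ℓ / k := by ring
          have hbb2 : (1:ℝ)/β * ℓ = ℓ / β := by ring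
          have hprod : (0:ℝ) ≤ ((k:ℝ) - 1) * (ℓ/k - m*β) :=
            mul_nonneg (by linarith) (by linarith)
          have hexp : ((k:ℝ) - 1) * (ℓ/k - (m:ℝ)*β) =
              (k:ℝ)*(ℓ/k) - (k:ℝ)*((m:ℝ)*β) - ℓ/k + (m:ℝ)*β := by ring
          rw [sub_mul, hkk2, hbb2]
          linarith [hv, hγ2, hprod, hexp, hkk, hlog2]
        -- convert to the rpow goal
        have hcast : ((s:ℕ):ℝ) = (c:ℝ) * (b:ℝ)^m := by rw [hsdef]; push_cast; ring
        rw [hcast]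
        have lhs_eq : (N:ℝ) ^ ((1:ℝ)/k - 1/Real.log b) = Real.exp (((1:ℝ)/k - 1/β) * ℓ) := by
          rw [Real.rpow_def_of_pos (by exact_mod_cast hN : (0:ℝ) < N)]
          rw [mul_comm]
        have rhs_eq : (c:ℝ) * (b:ℝ)^m = Real.exp (γ + m * β) := by
          rw [Real.exp_add, Real.exp_log hcpos]
          congr 1
          rw [← Real.log_pow, Real.exp_log (by positivity)]
        rw [lhs_eq, rhs_eq]
        exact Real.exp_le_exp.mpr main
  · -- solution-free
    intro x x' hx hx' heq
    choose nf hnf hxf using fun i => hmem (x i) (hx i)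
    choose nf' hnf' hxf' using fun i => hmem (x' i) (hx' i)
    set C : Fin k → ℤ := fun i => if i.val = 0 then (a:ℤ) else (b:ℤ)^i.val with hC
    have heq2 : (∑ i : Fin k, C i * spread b k (nf i)) = ∑ i : Fin k, C i * spread b k (nf' i) := by
      have e1 : ∀ i : Fin k, C i * x i = C i + C i * spread b k (nf i) := by
        intro i; rw [← hxf i, hf]; push_cast; ring
      have e2 : ∀ i : Fin k, C i * x' i = C i + C i * spread b k (nf' i) := by
        intro i; rw [← hxf' i, hf]; push_cast; ring
      have h3 : ∑ i : Fin k, (C i + C i * spread b k (nf i)) = ∑ i : Fin k, (C i + C i * spread b k (nf' i)) := by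
        rw [← Finset.sum_congr rfl (fun i _ => e1 i), ← Finset.sum_congr rfl (fun i _ => e2 i)]
        exact heq
      rw [Finset.sum_add_distrib, Finset.sum_add_distrib] at h3
      linarith
    have hnn : nf = nf' := key k a b hk hb hco _ nf nf' rfl heq2
    funext i
    rw [← hxf i, ← hxf' i, hnn]
end

section
/- Let s ≥ 2 be an integer and let a₁,…,a_k be positive integers with s·a_i ≤ a_{i+1} for all 1 ≤ i < k. Then there exists κ > 0 such that for every positive integer N there is a set A ⊆ [N] with |A| ≥ κ·N^r containing no non-trivial solutions to the equation a₁x₁+⋯+a_kx_k = a₁x₁'+⋯+a_kx_k', where r = log s / (log s + log(a₁+a₂+⋯+a_k)). -/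
lemma digit_le (n : ℕ) (w B d d' : ℕ → ℕ)
    (hcond : ∑ i ∈ Finset.range n, w i * (B i - 1) < w n)
    (hd' : ∀ i < n, d' i < B i)
    (heq : w n * d n + ∑ i ∈ Finset.range n, w i * d i
         = w n * d' n + ∑ i ∈ Finset.range n, w i * d' i) :
    d n ≤ d' n := by
  by_contra h
  push_neg at h
  have h1 : ∑ i ∈ Finset.range n, w i * d' i ≤ ∑ i ∈ Finset.range n, w i * (B i - 1) :=
    Finset.sum_le_sum fun i hi =>
      Nat.mul_le_mul_left _ (Nat.le_pred_of_lt (hd' i (Finset.mem_range.mp hi)))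
  have h2 : w n * d' n + w n ≤ w n * d n := by
    calc w n * d' n + w n = w n * (d' n + 1) := by ring
    _ ≤ w n * d n := Nat.mul_le_mul_left _ h
  omega

lemma digit_uniq (n : ℕ) (w B d d' : ℕ → ℕ)
    (hcond : ∀ j < n, ∑ i ∈ Finset.range j, w i * (B i - 1) < w j)
    (hd : ∀ i < n, d i < B i) (hd' : ∀ i < n, d' i < B i)
    (heq : ∑ i ∈ Finset.range n, w i * d i = ∑ i ∈ Finset.range n, w i * d' i) :
    ∀ i < n, d i = d' i := by
  induction n with
  | zero => intro i hi; omega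
  | succ n ih =>
    rw [Finset.sum_range_succ, Finset.sum_range_succ] at heq
    have heq' : w n * d n + ∑ i ∈ Finset.range n, w i * d i
        = w n * d' n + ∑ i ∈ Finset.range n, w i * d' i := by omega
    have hdn : d n = d' n :=
      le_antisymm
        (digit_le n w B d d' (hcond n (by omega)) (fun i hi => hd' i (by omega)) heq')
        (digit_le n w B d' d (hcond n (by omega)) (fun i hi => hd i (by omega)) heq'.symm)
    rw [hdn] at heq'
    have hrec := ih (fun j hj => hcond j (by omega)) (fun i hi => hd i (by omega))
      (fun i hi => hd' i (by omega)) (by omega)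
    intro i hi
    rcases Nat.lt_succ_iff_lt_or_eq.mp hi with h | h
    · exact hrec i h
    · subst h; exact hdn

lemma geo (b : ℕ) (hb : 1 ≤ b) (n : ℕ) :
    (∑ i ∈ Finset.range n, b ^ i * (b - 1)) + 1 = b ^ n := by
  induction n with
  | zero => simp
  | succ n ih =>
    rw [Finset.sum_range_succ, pow_succ]
    zify [hb] at ih ⊢
    linear_combination ih

lemma weight_cond (s k : ℕ) (hs : 2 ≤ s) (a : Fin k → ℕ) (ha : ∀ i, 0 < a i)
    (hgrow : ∀ i : Fin k, ∀ h : i.val + 1 < k, s * a i ≤ a ⟨i.val + 1, h⟩)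
    (A' : ℕ → ℕ) (hA' : ∀ i (h : i < k), A' i = a ⟨i, h⟩) :
    ∀ j < k, ∑ i ∈ Finset.range j, A' i * (s - 1) < A' j := by
  intro j
  induction j with
  | zero => intro hj; simpa [hA' 0 hj] using ha ⟨0, hj⟩
  | succ j ih =>
    intro hj
    have hj' : j < k := by omega
    have h1 := ih hj'
    rw [Finset.sum_range_succ]
    have h2 : s * a ⟨j, hj'⟩ ≤ a ⟨j + 1, hj⟩ := hgrow ⟨j, hj'⟩ hj
    rw [hA' j hj', hA' (j+1) hj] at *
    have h3 : a ⟨j, hj'⟩ * (s-1) + a ⟨j, hj'⟩ = a ⟨j, hj'⟩ * s := by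
      zify [show 1 ≤ s by omega]; ring
    have h4 : s * a ⟨j, hj'⟩ = a ⟨j, hj'⟩ * s := Nat.mul_comm _ _
    omega

/-- Let `s ≥ 2` be an integer and `a₁,…,a_k` positive integers with
`s·aᵢ ≤ a_{i+1}` for `1 ≤ i < k`. Then there is `κ > 0` such that for every positive `N`
there is `A ⊆ [N]` with `|A| ≥ κ·N^r`, `r = log s/(log s + log(a₁+⋯+a_k))`, containing
no non-trivial solutions to `∑ aᵢxᵢ = ∑ aᵢxᵢ'`. -/
theorem statement9 (s k : ℕ) (hs : 2 ≤ s) (hk : 1 ≤ k)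
    (a : Fin k → ℕ) (ha : ∀ i, 0 < a i)
    (hgrow : ∀ i : Fin k, ∀ h : i.val + 1 < k, s * a i ≤ a ⟨i.val + 1, h⟩) :
    ∃ κ : ℝ, 0 < κ ∧ ∀ N : ℕ, 0 < N → ∃ A : Finset ℤ,
      A ⊆ Finset.Icc 1 (N : ℤ) ∧
      κ * (N : ℝ) ^ (Real.log s / (Real.log s + Real.log (∑ i, (a i : ℝ)))) ≤ A.card ∧
      ∀ x x' : Fin k → ℤ, (∀ i, x i ∈ A) → (∀ i, x' i ∈ A) →
        ∑ i, (a i : ℤ) * x i = ∑ i, (a i : ℤ) * x' i → x = x' := by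
  classical
  set Sa : ℕ := ∑ i, a i with hSadef
  have hSa1 : 1 ≤ Sa := by
    have h0 : a ⟨0, hk⟩ ≤ Sa :=
      Finset.single_le_sum (fun i _ => Nat.zero_le _) (Finset.mem_univ _)
    have := ha ⟨0, hk⟩
    omega
  set b : ℕ := s * Sa with hbdef
  have hb2 : 2 ≤ b := by
    calc 2 = 2 * 1 := rfl
    _ ≤ s * Sa := Nat.mul_le_mul hs hSa1
  have hsb : s ≤ b := by
    calc s = s * 1 := (Nat.mul_one s).symm
    _ ≤ s * Sa := Nat.mul_le_mul_left _ hSa1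
  -- r is log s / log b
  have hcastSa : (∑ i, (a i : ℝ)) = (Sa : ℝ) := by push_cast [hSadef]; ring
  have hlogb : Real.log s + Real.log (∑ i, (a i : ℝ)) = Real.log b := by
    rw [hcastSa, hbdef]
    push_cast
    rw [Real.log_mul (by positivity) (by exact_mod_cast Nat.one_le_iff_ne_zero.mp hSa1)]
  set r : ℝ := Real.log s / (Real.log s + Real.log (∑ i, (a i : ℝ))) with hrdef
  have hlogs : (0:ℝ) < Real.log s := by
    apply Real.log_pos; exact_mod_cast by omega
  have hlogbpos : (0:ℝ) < Real.log b := by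
    apply Real.log_pos; exact_mod_cast hb2
  have hr : r = Real.log s / Real.log b := by rw [hrdef, hlogb]
  have hrpos : 0 < r := by rw [hr]; positivity
  have hbr : (b:ℝ) ^ r = (s:ℝ) := by
    rw [Real.rpow_def_of_pos (by positivity : (0:ℝ) < (b:ℝ)), hr, mul_comm,
      div_mul_cancel₀ _ (ne_of_gt hlogbpos), Real.exp_log (by positivity)]
  refine ⟨1 / s, by positivity, ?_⟩
  intro N hN
  set n : ℕ := Nat.log b N with hndef
  have hbn : b ^ n ≤ N := Nat.pow_log_le_self b hN.ne'
  have hNb : N < b ^ (n + 1) := Nat.lt_pow_succ_log_self (by omega) N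
  -- digit extraction
  set D : (Fin n → Fin s) → ℕ → ℕ :=
    fun d j => if h : j < n then (d ⟨j, h⟩ : ℕ) else 0 with hDdef
  set g : (Fin n → Fin s) → ℕ :=
    fun d => 1 + ∑ j ∈ Finset.range n, D d j * b ^ j with hgdef
  have hpowcond : ∀ j, ∑ i ∈ Finset.range j, b ^ i * (b - 1) < b ^ j := by
    intro j
    have := geo b (by omega) j
    omega
  have hDlt : ∀ d j, D d j < s := by
    intro d j
    simp only [hDdef]
    split
    · exact (d ⟨j, _⟩).2
    · omega
  have hginj : Function.Injective g := by
    intro d d' hdd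
    have heq : ∑ j ∈ Finset.range n, (b ^ j) * D d j
        = ∑ j ∈ Finset.range n, (b ^ j) * D d' j := by
      simp only [hgdef] at hdd
      calc ∑ j ∈ Finset.range n, (b ^ j) * D d j
          = ∑ j ∈ Finset.range n, D d j * b ^ j := by
            exact Finset.sum_congr rfl fun j _ => Nat.mul_comm _ _
      _ = ∑ j ∈ Finset.range n, D d' j * b ^ j := by omega
      _ = ∑ j ∈ Finset.range n, (b ^ j) * D d' j := by
            exact Finset.sum_congr rfl fun j _ => Nat.mul_comm _ _
    have huniq := digit_uniq n (fun j => b ^ j) (fun _ => b) (D d) (D d')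
      (fun j _ => hpowcond j) (fun i _ => lt_of_lt_of_le (hDlt d i) hsb)
      (fun i _ => lt_of_lt_of_le (hDlt d' i) hsb) heq
    funext j
    have hj := huniq j.val j.2
    simp only [hDdef, dif_pos j.2, Fin.eta] at hj
    exact Fin.val_injective hj
  have hgub : ∀ d, g d ≤ b ^ n := by
    intro d
    have h1 : ∑ j ∈ Finset.range n, D d j * b ^ j
        ≤ ∑ j ∈ Finset.range n, b ^ j * (b - 1) := by
      apply Finset.sum_le_sum
      intro j _
      rw [Nat.mul_comm (b ^ j) (b - 1)]
      exact Nat.mul_le_mul_right _ (by have := hDlt d j; omega)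
    have h2 := geo b (by omega) n
    simp only [hgdef]
    omega
  refine ⟨Finset.image (fun d => ((g d : ℕ) : ℤ)) Finset.univ, ?_, ?_, ?_⟩
  · -- subset
    intro x hx
    obtain ⟨d, -, hd⟩ := Finset.mem_image.mp hx
    rw [Finset.mem_Icc, ← hd]
    constructor
    · exact_mod_cast Nat.le_add_right 1 _
    · exact_mod_cast le_trans (hgub d) hbn
  · -- cardinality
    rw [Finset.card_image_of_injective _ (fun d d' h => hginj (by exact_mod_cast h))]
    rw [Finset.card_univ, Fintype.card_fun, Fintype.card_fin, Fintype.card_fin]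
    have hstep : (N : ℝ) ^ r ≤ (s : ℝ) ^ (n + 1) := by
      have h1 : (N : ℝ) ≤ ((b : ℝ) ^ (n + 1)) := by exact_mod_cast hNb.le
      calc (N : ℝ) ^ r ≤ ((b : ℝ) ^ (n + 1)) ^ r :=
            Real.rpow_le_rpow (Nat.cast_nonneg N) h1 hrpos.le
      _ = ((b : ℝ) ^ r) ^ (n + 1) := by
            rw [← Real.rpow_natCast (b : ℝ) (n + 1), ← Real.rpow_mul (Nat.cast_nonneg b),
              mul_comm, Real.rpow_mul (Nat.cast_nonneg b), Real.rpow_natCast]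
      _ = (s : ℝ) ^ (n + 1) := by rw [hbr]
    have hs0 : (0:ℝ) < (s:ℝ) := by positivity
    rw [div_mul_eq_mul_div, one_mul, div_le_iff₀ hs0]
    push_cast
    calc (N : ℝ) ^ r ≤ (s : ℝ) ^ (n + 1) := hstep
    _ = (s : ℝ) ^ n * s := by ring
  · -- no nontrivial solutions
    intro x x' hx hx' heq
    have hx2 : ∀ i, ∃ c : Fin n → Fin s, ((g c : ℕ) : ℤ) = x i := fun i => by
      obtain ⟨c, -, hc⟩ := Finset.mem_image.mp (hx i); exact ⟨c, hc⟩
    choose d hd using hx2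
    have hx2' : ∀ i, ∃ c : Fin n → Fin s, ((g c : ℕ) : ℤ) = x' i := fun i => by
      obtain ⟨c, -, hc⟩ := Finset.mem_image.mp (hx' i); exact ⟨c, hc⟩
    choose d' hd' using hx2'
    have heqN : ∑ i, a i * g (d i) = ∑ i, a i * g (d' i) := by
      have hZ : ((∑ i, a i * g (d i) : ℕ) : ℤ) = ((∑ i, a i * g (d' i) : ℕ) : ℤ) := by
        push_cast
        simp_rw [hd, hd']
        exact heq
      exact_mod_cast hZ
    have expand : ∀ e : Fin k → (Fin n → Fin s),
        ∑ i, a i * g (e i)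
          = Sa + ∑ j ∈ Finset.range n, (b ^ j) * (∑ i, a i * D (e i) j) := by
      intro e
      simp only [hgdef, Nat.mul_add, Nat.mul_one, Finset.sum_add_distrib, Finset.mul_sum]
      congr 1
      rw [Finset.sum_comm]
      apply Finset.sum_congr rfl
      intro j _
      apply Finset.sum_congr rfl
      intro i _
      ring
    rw [expand d, expand d'] at heqN
    have hcolbound : ∀ (e : Fin k → (Fin n → Fin s)) (j : ℕ),
        (∑ i, a i * D (e i) j) < b := by
      intro e j
      have h1 : ∑ i, a i * D (e i) j ≤ ∑ i, a i * (s - 1) :=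
        Finset.sum_le_sum fun i _ =>
          Nat.mul_le_mul_left _ (by have := hDlt (e i) j; omega)
      have h2 : ∑ i, a i * (s - 1) = Sa * (s - 1) := by
        rw [hSadef, Finset.sum_mul]
      have h3 : Sa * (s - 1) + Sa = Sa * s := by zify [show 1 ≤ s by omega]; ring
      have h4 : s * Sa = Sa * s := Nat.mul_comm _ _
      omega
    have hSeq : ∑ j ∈ Finset.range n, (b ^ j) * (∑ i, a i * D (d i) j)
        = ∑ j ∈ Finset.range n, (b ^ j) * (∑ i, a i * D (d' i) j) := by omega
    have hcol := digit_uniq n (fun j => b ^ j) (fun _ => b)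
      (fun j => ∑ i, a i * D (d i) j) (fun j => ∑ i, a i * D (d' i) j)
      (fun j _ => hpowcond j) (fun j _ => hcolbound d j) (fun j _ => hcolbound d' j) hSeq
    set A' : ℕ → ℕ := fun i => if h : i < k then a ⟨i, h⟩ else 0 with hA'def
    have hA' : ∀ i (h : i < k), A' i = a ⟨i, h⟩ := fun i h => dif_pos h
    have hwc := weight_cond s k hs a ha hgrow A' hA'
    have hddj : ∀ (i : Fin k) (j : Fin n), d i j = d' i j := by
      intro i j
      have hc := hcol j.val j.2
      set E : ℕ → ℕ := fun t => if h : t < k then D (d ⟨t, h⟩) j.val else 0 with hEdef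
      set E' : ℕ → ℕ := fun t => if h : t < k then D (d' ⟨t, h⟩) j.val else 0 with hE'def
      have hsum : ∀ (f : Fin k → (Fin n → Fin s)) (F : ℕ → ℕ),
          (∀ t (h : t < k), F t = D (f ⟨t, h⟩) j.val) →
          ∑ i, a i * D (f i) j.val = ∑ t ∈ Finset.range k, A' t * F t := by
        intro f F hF
        rw [← Fin.sum_univ_eq_sum_range (fun t => A' t * F t) k]
        apply Finset.sum_congr rfl
        intro i _
        rw [hA' i.val i.2, hF i.val i.2, Fin.eta]
      have hEb : ∀ t < k, E t < s := by
        intro t ht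
        rw [hEdef]
        simp only [dif_pos ht]
        exact hDlt _ _
      have hE'b : ∀ t < k, E' t < s := by
        intro t ht
        rw [hE'def]
        simp only [dif_pos ht]
        exact hDlt _ _
      have hcE : ∑ t ∈ Finset.range k, A' t * E t = ∑ t ∈ Finset.range k, A' t * E' t := by
        rw [← hsum d E (fun t h => by rw [hEdef]; exact dif_pos h),
          ← hsum d' E' (fun t h => by rw [hE'def]; exact dif_pos h)]
        exact hc
      have huniq := digit_uniq k A' (fun _ => s) E E' hwc hEb hE'b hcE
      have hfin := huniq i.val i.2
      rw [hEdef, hE'def] at hfin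
      simp only [dif_pos i.2, Fin.eta, hDdef, dif_pos j.2] at hfin
      exact Fin.val_injective hfin
    funext i
    rw [← hd i, ← hd' i]
    have : d i = d' i := funext fun j => hddj i j
    rw [this]
end

section
/- Let m ≥ 3 be an integer. Then there exists κ > 0 such that for every positive integer N there is a set A ⊆ [N] with |A| ≥ κ·N^r, where r = log(m−1) / log((6m−5)(m−2)+1), such that every tuple (x₁,x₂,x₃,x₁',x₂',x₃') ∈ A⁶ satisfying m·x₁ + (2m−2)·x₂ + (3m−3)·x₃ = m·x₁' + (2m−2)·x₂' + (3m−3)·x₃' has x₁ = x₁'. In particular, A contains no solution of this equation with all six entries pairwise distinct. -/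
open Finset

lemma sum_digits_nonneg (b : ℤ) (hb : 0 ≤ b) (k : ℕ) (d : ℕ → ℤ) (hd : ∀ i, 0 ≤ d i) :
    0 ≤ ∑ i ∈ Finset.range k, d i * b ^ i :=
  Finset.sum_nonneg fun i _ => mul_nonneg (hd i) (pow_nonneg hb i)

lemma sum_digits_le (b : ℤ) (hb : 0 < b) (k : ℕ) (d : ℕ → ℤ) (hd : ∀ i, d i ≤ b - 1) :
    ∑ i ∈ Finset.range k, d i * b ^ i ≤ b ^ k - 1 := by
  calc ∑ i ∈ Finset.range k, d i * b ^ i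
      ≤ ∑ i ∈ Finset.range k, (b - 1) * b ^ i := by
        apply Finset.sum_le_sum; intro i _
        exact mul_le_mul_of_nonneg_right (hd i) (pow_nonneg hb.le i)
    _ = (∑ i ∈ Finset.range k, b ^ i) * (b - 1) := by
        rw [Finset.sum_mul]; apply Finset.sum_congr rfl; intro i _; ring
    _ = b ^ k - 1 := geom_sum_mul b k

lemma digits_unique (b : ℤ) (hb : 0 < b) :
    ∀ (k : ℕ) (d e : ℕ → ℤ), (∀ i, 0 ≤ d i) → (∀ i, d i ≤ b - 1) →
    (∀ i, 0 ≤ e i) → (∀ i, e i ≤ b - 1) →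
    ∑ i ∈ Finset.range k, d i * b ^ i = ∑ i ∈ Finset.range k, e i * b ^ i →
    ∀ i < k, d i = e i := by
  intro k
  induction k with
  | zero => intro d e _ _ _ _ _ i hi; omega
  | succ n ih =>
    intro d e hd0 hd1 he0 he1 hsum i hi
    rw [Finset.sum_range_succ', Finset.sum_range_succ'] at hsum
    have hD : ∀ f : ℕ → ℤ, ∑ i ∈ Finset.range n, f (i+1) * b ^ (i+1)
        = (∑ i ∈ Finset.range n, f (i+1) * b ^ i) * b := by
      intro f
      rw [Finset.sum_mul]; apply Finset.sum_congr rfl; intro i _; ring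
    rw [hD d, hD e, pow_zero, mul_one, mul_one] at hsum
    set D := ∑ i ∈ Finset.range n, d (i+1) * b ^ i with hDdef
    set E := ∑ i ∈ Finset.range n, e (i+1) * b ^ i with hEdef
    have hdvd : b ∣ (d 0 - e 0) := ⟨E - D, by linarith [hsum]⟩
    have habs : |d 0 - e 0| < b := by
      rw [abs_lt]; constructor <;> [linarith [hd0 0, he1 0]; linarith [hd1 0, he0 0]]
    have h0 : d 0 = e 0 := by
      have := Int.eq_zero_of_abs_lt_dvd hdvd habs
      omega
    have hDE : D = E := by
      have : D * b = E * b := by linarith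
      exact mul_right_cancel₀ (ne_of_gt hb) this
    match i, hi with
    | 0, _ => exact h0
    | (j+1), hj =>
      exact ih (fun i => d (i+1)) (fun i => e (i+1)) (fun i => hd0 _) (fun i => hd1 _)
        (fun i => he0 _) (fun i => he1 _) hDE j (by omega)

/-- Let `m ≥ 3` be an integer. Then there is `κ > 0` such that for every positive
integer `N` there is `A ⊆ [N]` with `|A| ≥ κ·N^r`, `r = log(m−1)/log((6m−5)(m−2)+1)`, such that
every tuple in `A⁶` satisfying `m·x₁+(2m−2)·x₂+(3m−3)·x₃ = m·y₁+(2m−2)·y₂+(3m−3)·y₃` has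
`x₁ = y₁`; in particular `A` has no solutions with all six entries pairwise distinct. -/
theorem statement11 (m : ℕ) (hm : 3 ≤ m) :
    ∃ κ : ℝ, 0 < κ ∧ ∀ N : ℕ, 0 < N → ∃ A : Finset ℤ,
      A ⊆ Finset.Icc 1 (N : ℤ) ∧
      κ * (N : ℝ) ^ (Real.log ((m : ℝ) - 1) /
        Real.log ((6 * (m : ℝ) - 5) * ((m : ℝ) - 2) + 1)) ≤ A.card ∧
      (∀ x₁ x₂ x₃ y₁ y₂ y₃ : ℤ, x₁ ∈ A → x₂ ∈ A → x₃ ∈ A → y₁ ∈ A → y₂ ∈ A → y₃ ∈ A →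
        (m : ℤ) * x₁ + (2 * (m : ℤ) - 2) * x₂ + (3 * (m : ℤ) - 3) * x₃
          = (m : ℤ) * y₁ + (2 * (m : ℤ) - 2) * y₂ + (3 * (m : ℤ) - 3) * y₃ → x₁ = y₁) ∧
      ¬ ∃ x₁ x₂ x₃ y₁ y₂ y₃ : ℤ,
          x₁ ∈ A ∧ x₂ ∈ A ∧ x₃ ∈ A ∧ y₁ ∈ A ∧ y₂ ∈ A ∧ y₃ ∈ A ∧
          [x₁, x₂, x₃, y₁, y₂, y₃].Pairwise (· ≠ ·) ∧
          (m : ℤ) * x₁ + (2 * (m : ℤ) - 2) * x₂ + (3 * (m : ℤ) - 3) * x₃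
            = (m : ℤ) * y₁ + (2 * (m : ℤ) - 2) * y₂ + (3 * (m : ℤ) - 3) * y₃ := by
  classical
  obtain ⟨t, rfl⟩ : ∃ t, m = t + 3 := ⟨m - 3, by omega⟩
  clear hm
  set b : ℕ := (6 * t + 13) * (t + 1) + 1 with hbdef
  have hb2 : 2 ≤ b := by
    have : 13 * 1 ≤ (6 * t + 13) * (t + 1) := Nat.mul_le_mul (by omega) (by omega)
    omega
  have hbZ : (b : ℤ) = (6 * (t:ℤ) + 13) * ((t:ℤ) + 1) + 1 := by
    simp only [hbdef]; push_cast; ring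
  have hbZpos : (0:ℤ) < (b:ℤ) := by exact_mod_cast (by omega : 0 < b)
  refine ⟨((t:ℝ) + 2)⁻¹, by positivity, ?_⟩
  intro N hN
  set k := Nat.log b N with hkdef
  set ext : (Fin k → ℕ) → ℕ → ℤ :=
    fun f i => if h : i < k then (f ⟨i, h⟩ : ℤ) else 0 with hext
  set val : (Fin k → ℕ) → ℤ :=
    fun f => 1 + ∑ i ∈ Finset.range k, ext f i * (b:ℤ) ^ i with hval
  set S : Finset (Fin k → ℕ) := Fintype.piFinset (fun _ => Finset.range (t + 2)) with hSdef
  -- digit bounds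
  have hbnd : ∀ f ∈ S, ∀ i, 0 ≤ ext f i ∧ ext f i ≤ (t:ℤ) + 1 := by
    intro f hf i
    simp only [hext]
    split
    · rename_i h
      have := Fintype.mem_piFinset.1 hf ⟨i, h⟩
      simp only [Finset.mem_range] at this
      constructor
      · positivity
      · exact_mod_cast Nat.lt_succ_iff.1 this
    · refine ⟨le_refl 0, by positivity⟩
  have htb : (t:ℤ) + 1 ≤ (b:ℤ) - 1 := by rw [hbZ]; nlinarith [Int.natCast_nonneg t]
  -- injectivity of val on S
  have hinj : Set.InjOn val S := by
    intro f hf g hg hfg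
    have hsum : ∑ i ∈ Finset.range k, ext f i * (b:ℤ) ^ i
        = ∑ i ∈ Finset.range k, ext g i * (b:ℤ) ^ i := by
      simp only [hval] at hfg; linarith
    have := digits_unique (b:ℤ) hbZpos k (ext f) (ext g)
      (fun i => (hbnd f hf i).1) (fun i => le_trans (hbnd f hf i).2 htb)
      (fun i => (hbnd g hg i).1) (fun i => le_trans (hbnd g hg i).2 htb) hsum
    funext j
    have h := this j.1 j.2
    simp only [hext, dif_pos j.2, Fin.eta] at h
    exact_mod_cast h
  have hmain : ∀ x₁ x₂ x₃ y₁ y₂ y₃ : ℤ, x₁ ∈ S.image val → x₂ ∈ S.image val →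
      x₃ ∈ S.image val → y₁ ∈ S.image val → y₂ ∈ S.image val → y₃ ∈ S.image val →
      ((t+3:ℕ) : ℤ) * x₁ + (2 * ((t+3:ℕ) : ℤ) - 2) * x₂ + (3 * ((t+3:ℕ) : ℤ) - 3) * x₃
        = ((t+3:ℕ) : ℤ) * y₁ + (2 * ((t+3:ℕ) : ℤ) - 2) * y₂ + (3 * ((t+3:ℕ) : ℤ) - 3) * y₃
      → x₁ = y₁ := by
    intro x₁ x₂ x₃ y₁ y₂ y₃ hx₁ hx₂ hx₃ hy₁ hy₂ hy₃ heq
    obtain ⟨f₁, hf₁, rfl⟩ := Finset.mem_image.1 hx₁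
    obtain ⟨f₂, hf₂, rfl⟩ := Finset.mem_image.1 hx₂
    obtain ⟨f₃, hf₃, rfl⟩ := Finset.mem_image.1 hx₃
    obtain ⟨g₁, hg₁, rfl⟩ := Finset.mem_image.1 hy₁
    obtain ⟨g₂, hg₂, rfl⟩ := Finset.mem_image.1 hy₂
    obtain ⟨g₃, hg₃, rfl⟩ := Finset.mem_image.1 hy₃
    have expand : ∀ p q r : Fin k → ℕ,
        ((t+3 : ℕ) : ℤ) * val p + (2 * ((t+3 : ℕ) : ℤ) - 2) * val q
          + (3 * ((t+3 : ℕ) : ℤ) - 3) * val r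
        = (6 * (t:ℤ) + 13) + ∑ i ∈ Finset.range k,
            (((t+3 : ℕ) : ℤ) * ext p i + (2 * ((t+3 : ℕ) : ℤ) - 2) * ext q i
              + (3 * ((t+3 : ℕ) : ℤ) - 3) * ext r i) * (b:ℤ) ^ i := by
      intro p q r
      simp only [hval, add_mul, Finset.sum_add_distrib, mul_assoc, ← Finset.mul_sum]
      push_cast
      ring
    have key := heq
    rw [expand f₁ f₂ f₃, expand g₁ g₂ g₃] at key
    have key2 := add_left_cancel key
    set D : ℕ → ℤ := fun i => ((t+3 : ℕ) : ℤ) * ext f₁ i + (2 * ((t+3 : ℕ) : ℤ) - 2) * ext f₂ i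
      + (3 * ((t+3 : ℕ) : ℤ) - 3) * ext f₃ i with hDdef
    set E : ℕ → ℤ := fun i => ((t+3 : ℕ) : ℤ) * ext g₁ i + (2 * ((t+3 : ℕ) : ℤ) - 2) * ext g₂ i
      + (3 * ((t+3 : ℕ) : ℤ) - 3) * ext g₃ i with hEdef
    have hbound : ∀ (p q r : Fin k → ℕ), p ∈ S → q ∈ S → r ∈ S → ∀ i,
        0 ≤ ((t+3 : ℕ) : ℤ) * ext p i + (2 * ((t+3 : ℕ) : ℤ) - 2) * ext q i
          + (3 * ((t+3 : ℕ) : ℤ) - 3) * ext r i ∧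
        ((t+3 : ℕ) : ℤ) * ext p i + (2 * ((t+3 : ℕ) : ℤ) - 2) * ext q i
          + (3 * ((t+3 : ℕ) : ℤ) - 3) * ext r i ≤ (b:ℤ) - 1 := by
      intro p q r hp hq hr i
      obtain ⟨hp0, hp1⟩ := hbnd p hp i
      obtain ⟨hq0, hq1⟩ := hbnd q hq i
      obtain ⟨hr0, hr1⟩ := hbnd r hr i
      have ht0 : (0:ℤ) ≤ (t:ℤ) := Int.natCast_nonneg t
      push_cast
      constructor
      · nlinarith
      · nlinarith [mul_nonneg (show (0:ℤ) ≤ (t:ℤ)+3 by linarith)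
          (show (0:ℤ) ≤ (t:ℤ)+1 - ext q i by linarith),
          mul_nonneg (show (0:ℤ) ≤ (t:ℤ)+3 by linarith)
          (show (0:ℤ) ≤ (t:ℤ)+1 - ext p i by linarith),
          mul_nonneg (show (0:ℤ) ≤ (t:ℤ)+3 by linarith)
          (show (0:ℤ) ≤ (t:ℤ)+1 - ext r i by linarith)]
    have hDE := digits_unique (b:ℤ) hbZpos k D E
      (fun i => (hbound f₁ f₂ f₃ hf₁ hf₂ hf₃ i).1)
      (fun i => (hbound f₁ f₂ f₃ hf₁ hf₂ hf₃ i).2)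
      (fun i => (hbound g₁ g₂ g₃ hg₁ hg₂ hg₃ i).1)
      (fun i => (hbound g₁ g₂ g₃ hg₁ hg₂ hg₃ i).2) key2
    have hfg : ∀ i < k, ext f₁ i = ext g₁ i := by
      intro i hi
      have hDEi := hDE i hi
      simp only [hDdef, hEdef] at hDEi
      push_cast at hDEi
      have hdvd : ((t:ℤ) + 2) ∣ (ext f₁ i - ext g₁ i) :=
        ⟨2 * (ext g₂ i - ext f₂ i) + 3 * (ext g₃ i - ext f₃ i) - (ext f₁ i - ext g₁ i), by
          linear_combination hDEi⟩
      have habs : |ext f₁ i - ext g₁ i| < (t:ℤ) + 2 := by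
        obtain ⟨h10, h11⟩ := hbnd f₁ hf₁ i
        obtain ⟨h20, h21⟩ := hbnd g₁ hg₁ i
        rw [abs_lt]; constructor <;> linarith
      have := Int.eq_zero_of_abs_lt_dvd hdvd habs
      omega
    simp only [hval]
    congr 1
    exact Finset.sum_congr rfl fun i hi => by
      rw [hfg i (Finset.mem_range.1 hi)]
  refine ⟨S.image val, ?_, ?_, hmain, ?_⟩
  · -- subset of Icc 1 N
    intro x hx
    obtain ⟨f, hf, rfl⟩ := Finset.mem_image.1 hx
    rw [Finset.mem_Icc]
    constructor
    · have := sum_digits_nonneg (b:ℤ) hbZpos.le k (ext f) (fun i => (hbnd f hf i).1)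
      simp only [hval]; linarith
    · have h1 := sum_digits_le (b:ℤ) hbZpos k (ext f)
        (fun i => le_trans (hbnd f hf i).2 htb)
      have h2 : (b:ℤ) ^ k ≤ (N:ℤ) := by
        have := Nat.pow_log_le_self b hN.ne'
        exact_mod_cast this
      simp only [hval]; linarith
  · -- cardinality
    have hcard : (S.image val).card = (t + 2) ^ k := by
      rw [Finset.card_image_of_injOn hinj, hSdef, Fintype.card_piFinset]
      simp
    rw [hcard]
    have hbR : ((6 * ((t:ℝ)+3) - 5) * (((t:ℝ)+3) - 2) + 1) = (b:ℝ) := by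
      rw [hbdef]; push_cast; ring
    have hr : Real.log ((((t+3:ℕ)):ℝ) - 1) /
        Real.log ((6 * (((t+3:ℕ)):ℝ) - 5) * ((((t+3:ℕ)):ℝ) - 2) + 1)
        = Real.logb (b:ℝ) ((t:ℝ) + 2) := by
      rw [Real.logb]
      push_cast
      rw [hbR]
      rw [show ((t:ℝ)+3-1 : ℝ) = (t:ℝ)+2 by ring]
    rw [hr]
    set r := Real.logb (b:ℝ) ((t:ℝ) + 2) with hrdef
    have hbR1 : (1:ℝ) < (b:ℝ) := by exact_mod_cast hb2
    have hrpos : 0 ≤ r := Real.logb_nonneg hbR1 (by linarith [Nat.cast_nonneg (α := ℝ) t])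
    have hNb : (N:ℝ) ≤ (b:ℝ) ^ (k + 1) := by
      have := Nat.lt_pow_succ_log_self hb2 N
      have h2 : (N:ℝ) < ((b ^ (k+1) : ℕ) : ℝ) := by exact_mod_cast this
      rw [Nat.cast_pow] at h2
      linarith
    have step1 : (N:ℝ) ^ r ≤ ((b:ℝ) ^ (k+1)) ^ r :=
      Real.rpow_le_rpow (Nat.cast_nonneg N) hNb hrpos
    have step2 : ((b:ℝ) ^ (k+1)) ^ r = ((t:ℝ) + 2) ^ (k+1) := by
      rw [← Real.rpow_natCast (b:ℝ) (k+1), ← Real.rpow_mul (by positivity),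
        mul_comm, Real.rpow_mul (by positivity), Real.rpow_natCast]
      congr 1
      rw [hrdef, Real.rpow_logb (by positivity) (ne_of_gt hbR1) (by positivity)]
    have hnum : (((t:ℝ))+2)⁻¹ * ((t:ℝ) + 2) ^ (k+1) = ((t:ℝ)+2) ^ k := by
      rw [pow_succ]
      field_simp
    calc ((t:ℝ)+2)⁻¹ * (N:ℝ) ^ r ≤ ((t:ℝ)+2)⁻¹ * (((t:ℝ)+2) ^ (k+1)) := by
          apply mul_le_mul_of_nonneg_left _ (by positivity)
          rw [← step2]; exact step1
      _ = ((t:ℝ)+2) ^ k := hnum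
      _ = (((t+2)^k : ℕ) : ℝ) := by push_cast; ring
  · rintro ⟨x₁, x₂, x₃, y₁, y₂, y₃, h1, h2, h3, h4, h5, h6, hpw, heq⟩
    have hx1y1 := hmain x₁ x₂ x₃ y₁ y₂ y₃ h1 h2 h3 h4 h5 h6 heq
    have hne : x₁ ≠ y₁ :=
      List.rel_of_pairwise_cons hpw (by simp)
    exact hne hx1y1
end
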